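/- arXiv:2504.16657 — 5 statements merged into one kernel-verified Lean document; each statement's English description precedes it below -/
import Mathlib

section
/- Let p ≥ 1 and let (X, d, m) be a metric measure space whose measure m is β-doubling for some β > 1, and set N = log β / log 2. Assume that the upper density function satisfies θ_N^+(x) ≤ b for all x ∈ X, for some constant b > 0. Then for every Lipschitz function u : X → ℝ with bounded support, limsup_{λ→+∞} λ^p · (m × m)(E_{λ,u}) ≤ 2 b ∫_X (Lip u(x))^p dm(x), where E_{λ,u} = {(x,y) ∈ X × X : x ≠ y, |u(x) − u(y)| ≥ λ · d(x,y)^{N/p + 1}}. -/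
open MeasureTheory Filter Metric Set Topology

/-- The lower pointwise Lipschitz constant
`lip u (x) = liminf_{r → 0+} sup_{y ∈ B_r(x)} |u y - u x| / r`. -/
noncomputable def lipLower {X : Type*} [MetricSpace X] (u : X → ℝ) (x : X) : ℝ :=
  Filter.liminf (fun r : ℝ => ⨆ y ∈ Metric.ball x r, |u y - u x| / r) (𝓝[>] (0 : ℝ))

/-- The upper pointwise Lipschitz constant
`Lip u (x) = limsup_{r → 0+} sup_{y ∈ B_r(x)} |u y - u x| / r`. -/
noncomputable def lipUpper {X : Type*} [MetricSpace X] (u : X → ℝ) (x : X) : ℝ :=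
  Filter.limsup (fun r : ℝ => ⨆ y ∈ Metric.ball x r, |u y - u x| / r) (𝓝[>] (0 : ℝ))

/-- The set `E_{λ,u} = {(x,y) : x ≠ y, |u x - u y| ≥ λ d(x,y)^{N/p+1}}`. -/
def BVYset {X : Type*} [MetricSpace X] (u : X → ℝ) (N p lam : ℝ) : Set (X × X) :=
  {q : X × X | q.1 ≠ q.2 ∧ lam * dist q.1 q.2 ^ (N / p + 1) ≤ |u q.1 - u q.2|}

private lemma BVY_two_rpow {β N : ℝ} (hβ : 1 < β) (hN : N = Real.log β / Real.log 2) :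
    (2 : ℝ) ^ N = β := by
  have hβ0 : (0:ℝ) < β := by linarith
  rw [Real.rpow_def_of_pos (by norm_num : (0:ℝ) < 2), hN, mul_comm,
    div_mul_cancel₀ _ (ne_of_gt (Real.log_pos (by norm_num)))]
  exact Real.exp_log hβ0

private lemma BVY_density {X : Type*} [MetricSpace X] [MeasurableSpace X] (μ : Measure X)
    {β N b : ℝ} (hβ : 1 < β) (h2N : (2 : ℝ) ^ N = β) (hb0 : 0 ≤ b)
    (hdbl : ∀ (x : X) (r : ℝ), 0 < r →
      μ (Metric.ball x (2 * r)) ≤ ENNReal.ofReal β * μ (Metric.ball x r))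
    (hθ : ∀ x : X,
      Filter.limsup (fun r : ℝ => μ (Metric.ball x r) / ENNReal.ofReal (r ^ N)) (𝓝[>] (0 : ℝ))
        ≤ ENNReal.ofReal b)
    (x : X) {r : ℝ} (hr : 0 < r) : μ (ball x r) ≤ ENNReal.ofReal (b * r ^ N) := by
  have hβ0 : (0:ℝ) < β := by linarith
  have key : ∀ k : ℕ, μ (ball x r) ≤ ENNReal.ofReal (β ^ k) * μ (ball x (r / 2 ^ k)) := by
    intro k
    induction k with
    | zero => simp
    | succ k ih =>
      have h1 : (0:ℝ) < r / 2 ^ (k+1) := by positivity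
      have h2 : (2:ℝ) * (r / 2 ^ (k+1)) = r / 2 ^ k := by ring
      have h3 := hdbl x (r / 2 ^ (k+1)) h1
      rw [h2] at h3
      calc μ (ball x r) ≤ ENNReal.ofReal (β ^ k) * μ (ball x (r / 2 ^ k)) := ih
        _ ≤ ENNReal.ofReal (β ^ k) * (ENNReal.ofReal β * μ (ball x (r / 2 ^ (k+1)))) :=
            mul_le_mul_right h3 _
        _ = ENNReal.ofReal (β ^ (k+1)) * μ (ball x (r / 2 ^ (k+1))) := by
            rw [← mul_assoc, ← ENNReal.ofReal_mul (p := β ^ k) (pow_nonneg hβ0.le k)]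
            congr 1
  have hpow2 : ∀ k : ℕ, ((2:ℝ) ^ k) ^ N = β ^ k := by
    intro k
    have h : ((2:ℝ) ^ k) ^ N = ((2:ℝ) ^ N) ^ k := by
      rw [← Real.rpow_natCast ((2:ℝ) ^ N) k, ← Real.rpow_natCast (2:ℝ) k,
        ← Real.rpow_mul (by norm_num : (0:ℝ) ≤ 2), ← Real.rpow_mul (by norm_num : (0:ℝ) ≤ 2),
        mul_comm N (k:ℝ)]
    rw [h, h2N]
  have hqk : ∀ k : ℕ, μ (ball x r) / ENNReal.ofReal (r ^ N)
      ≤ μ (ball x (r / 2 ^ k)) / ENNReal.ofReal ((r / 2 ^ k) ^ N) := by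
    intro k
    have hsk : (0:ℝ) < r / 2 ^ k := by positivity
    have hrN : (0:ℝ) < r ^ N := Real.rpow_pos_of_pos hr N
    have hskN : (0:ℝ) < (r / 2 ^ k) ^ N := Real.rpow_pos_of_pos hsk N
    have ha0 : ENNReal.ofReal (r ^ N) ≠ 0 := by
      simp only [ne_eq, ENNReal.ofReal_eq_zero, not_le]; exact hrN
    have hak0 : ENNReal.ofReal ((r / 2 ^ k) ^ N) ≠ 0 := by
      simp only [ne_eq, ENNReal.ofReal_eq_zero, not_le]; exact hskN
    have hrel : r ^ N = β ^ k * (r / 2 ^ k) ^ N := by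
      rw [Real.div_rpow hr.le (by positivity), hpow2 k, mul_comm,
        div_mul_cancel₀ _ (pow_pos hβ0 k).ne']
    rw [ENNReal.div_le_iff ha0 ENNReal.ofReal_ne_top]
    calc μ (ball x r) ≤ ENNReal.ofReal (β ^ k) * μ (ball x (r / 2 ^ k)) := key k
      _ = ENNReal.ofReal (β ^ k) *
          (μ (ball x (r / 2 ^ k)) / ENNReal.ofReal ((r / 2 ^ k) ^ N)
            * ENNReal.ofReal ((r / 2 ^ k) ^ N)) := by
          rw [ENNReal.div_mul_cancel hak0 ENNReal.ofReal_ne_top]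
      _ = μ (ball x (r / 2 ^ k)) / ENNReal.ofReal ((r / 2 ^ k) ^ N) * ENNReal.ofReal (r ^ N) := by
          rw [hrel, ENNReal.ofReal_mul (p := β ^ k) (pow_nonneg hβ0.le k)]
          ring
  have hmap : Tendsto (fun k : ℕ => r / 2 ^ k) atTop (𝓝[>] (0:ℝ)) := by
    refine tendsto_nhdsWithin_of_tendsto_nhds_of_eventually_within _ ?_
      (Eventually.of_forall fun k => by simp only [Set.mem_Ioi]; positivity)
    have h : Tendsto (fun k : ℕ => r * ((1:ℝ)/2) ^ k) atTop (𝓝 (r * 0)) :=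
      (tendsto_pow_atTop_nhds_zero_of_lt_one (by norm_num) (by norm_num)).const_mul r
    simpa [div_pow, one_pow, mul_zero, div_eq_mul_inv, mul_comm] using h
  have hone : μ (ball x r) / ENNReal.ofReal (r ^ N) ≤ ENNReal.ofReal b := by
    have h1 : μ (ball x r) / ENNReal.ofReal (r ^ N)
        ≤ limsup (fun k : ℕ => μ (ball x (r / 2 ^ k)) / ENNReal.ofReal ((r / 2 ^ k) ^ N)) atTop :=
      le_limsup_of_frequently_le (Frequently.of_forall hqk)
    have h2 : limsup (fun k : ℕ =>
          μ (ball x (r / 2 ^ k)) / ENNReal.ofReal ((r / 2 ^ k) ^ N)) atTop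
        ≤ limsup (fun s : ℝ => μ (ball x s) / ENNReal.ofReal (s ^ N)) (𝓝[>] (0:ℝ)) := by
      have e : limsup (fun k : ℕ =>
            μ (ball x (r / 2 ^ k)) / ENNReal.ofReal ((r / 2 ^ k) ^ N)) atTop
          = limsup (fun s : ℝ => μ (ball x s) / ENNReal.ofReal (s ^ N))
              (map (fun k : ℕ => r / 2 ^ k) atTop) :=
        limsup_comp (fun s : ℝ => μ (ball x s) / ENNReal.ofReal (s ^ N))
          (fun k : ℕ => r / 2 ^ k) atTop
      rw [e]
      exact limsup_le_limsup_of_le hmap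
    exact h1.trans (h2.trans (hθ x))
  have hrN : (0:ℝ) < r ^ N := Real.rpow_pos_of_pos hr N
  have ha0 : ENNReal.ofReal (r ^ N) ≠ 0 := by
    simp only [ne_eq, ENNReal.ofReal_eq_zero, not_le]; exact hrN
  have := (ENNReal.div_le_iff ha0 ENNReal.ofReal_ne_top).mp hone
  rwa [← ENNReal.ofReal_mul hb0] at this

private lemma BVY_ball_fin {X : Type*} [MetricSpace X] [MeasurableSpace X]
    (μ : Measure X) [IsLocallyFiniteMeasure μ] {β : ℝ}
    (hdbl : ∀ (x : X) (r : ℝ), 0 < r →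
      μ (Metric.ball x (2 * r)) ≤ ENNReal.ofReal β * μ (Metric.ball x r))
    (x : X) (r : ℝ) : μ (ball x r) < ⊤ := by
  obtain ⟨s, hs, hμs⟩ := μ.finiteAt_nhds x
  obtain ⟨ε, hε, hball⟩ := Metric.mem_nhds_iff.mp hs
  have h1 : ∀ k : ℕ, μ (ball x (2 ^ k * ε)) < ⊤ := by
    intro k
    induction k with
    | zero => simpa using lt_of_le_of_lt (measure_mono hball) hμs
    | succ k ih =>
      have h2 : (2:ℝ) ^ (k+1) * ε = 2 * (2 ^ k * ε) := by ring
      rw [h2]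
      calc μ (ball x (2 * (2 ^ k * ε))) ≤ ENNReal.ofReal β * μ (ball x (2 ^ k * ε)) :=
            hdbl x _ (by positivity)
        _ < ⊤ := ENNReal.mul_lt_top ENNReal.ofReal_lt_top ih
  obtain ⟨k, hk⟩ : ∃ k : ℕ, r / ε < 2 ^ k := pow_unbounded_of_one_lt (r / ε) (by norm_num)
  have hk' : r ≤ 2 ^ k * ε := by
    rw [div_lt_iff₀ hε] at hk
    linarith
  exact lt_of_le_of_lt (measure_mono (ball_subset_ball hk')) (h1 k)

set_option maxHeartbeats 2000000 in
theorem upper_bound_estimate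
    {X : Type*} [MetricSpace X] [CompleteSpace X] [TopologicalSpace.SeparableSpace X]
    [MeasurableSpace X] [BorelSpace X]
    (μ : Measure X) [SigmaFinite μ] [IsLocallyFiniteMeasure μ] [μ.InnerRegular]
    [μ.IsOpenPosMeasure]
    (p β : ℝ) (hp : 1 ≤ p) (hβ : 1 < β)
    (hdbl : ∀ (x : X) (r : ℝ), 0 < r →
      μ (Metric.ball x (2 * r)) ≤ ENNReal.ofReal β * μ (Metric.ball x r))
    (N : ℝ) (hN : N = Real.log β / Real.log 2)
    (b : ℝ) (hb : 0 < b)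
    (hθ : ∀ x : X,
      Filter.limsup (fun r : ℝ => μ (Metric.ball x r) / ENNReal.ofReal (r ^ N)) (𝓝[>] (0 : ℝ))
        ≤ ENNReal.ofReal b)
    (u : X → ℝ) (hu : ∃ L : NNReal, LipschitzWith L u)
    (hsupp : Bornology.IsBounded (Function.support u)) :
    Filter.limsup
        (fun lam : ℝ => ENNReal.ofReal (lam ^ p) * (μ.prod μ) (BVYset u N p lam))
        Filter.atTop
      ≤ ENNReal.ofReal (2 * b) * ∫⁻ x, ENNReal.ofReal (lipUpper u x ^ p) ∂μ := by
  classical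
  obtain ⟨L0, hL0⟩ := hu
  set K : ℝ := (L0 : ℝ) + 1 with hKdef
  have hK0 : (0:ℝ) < K := by positivity
  have hLip : ∀ x y : X, |u x - u y| ≤ K * dist x y := by
    intro x y
    have h := hL0.dist_le_mul x y
    rw [Real.dist_eq] at h
    have hd := dist_nonneg (x := x) (y := y)
    have : (L0:ℝ) * dist x y ≤ K * dist x y := by
      apply mul_le_mul_of_nonneg_right _ hd
      simp [hKdef]
    linarith
  have hu_cont : Continuous u := hL0.continuous
  have hb0 : (0:ℝ) ≤ b := hb.le
  have hp0 : (0:ℝ) < p := lt_of_lt_of_le one_pos hp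
  have h2N : (2:ℝ) ^ N = β := BVY_two_rpow hβ hN
  have hN0 : (0:ℝ) < N := by
    rw [hN]
    exact div_pos (Real.log_pos hβ) (Real.log_pos (by norm_num))
  have hpN : (0:ℝ) < p / N := div_pos hp0 hN0
  have hdens : ∀ (x : X) {r : ℝ}, 0 < r → μ (ball x r) ≤ ENNReal.ofReal (b * r ^ N) :=
    fun x {r} hr => BVY_density μ hβ h2N hb0 hdbl hθ x hr
  -- the local maximal function G
  set G : X → ℝ → ℝ := fun x r => ⨆ y ∈ Metric.ball x r, |u y - u x| / r with hGdef
  have hlipG : ∀ x : X, lipUpper u x = limsup (fun r => G x r) (𝓝[>] (0:ℝ)) := by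
    intro x; rw [hGdef]; rfl
  have hG_le : ∀ (x : X) (r : ℝ), 0 < r → G x r ≤ K := by
    intro x r hr
    refine Real.iSup_le (fun y => Real.iSup_le (fun hy => ?_) hK0.le) hK0.le
    rw [div_le_iff₀ hr]
    have h1 := hLip y x
    have h2 : dist y x < r := mem_ball.mp hy
    nlinarith [dist_nonneg (x := y) (y := x)]
  have hG_ge : ∀ (x : X) (r : ℝ) (y : X), 0 < r → y ∈ ball x r → |u y - u x| / r ≤ G x r := by
    intro x r y hr hy
    have hbdd : BddAbove (range fun z => ⨆ _ : z ∈ ball x r, |u z - u x| / r) := by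
      refine ⟨K, ?_⟩
      rintro v ⟨z, rfl⟩
      refine Real.iSup_le (fun hz => ?_) hK0.le
      rw [div_le_iff₀ hr]
      have h1 := hLip z x
      have h2 : dist z x < r := mem_ball.mp hz
      nlinarith [dist_nonneg (x := z) (y := x)]
    calc |u y - u x| / r = ⨆ _ : y ∈ ball x r, |u y - u x| / r := (ciSup_pos (f := fun _ : y ∈ ball x r => |u y - u x| / r) hy).symm
      _ ≤ G x r := le_ciSup hbdd y
  have hG_nonneg : ∀ (x : X) (r : ℝ), 0 < r → 0 ≤ G x r := by
    intro x r hr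
    have := hG_ge x r x hr (mem_ball_self hr)
    simpa using this
  have hbddG : ∀ x : X, IsBoundedUnder (· ≤ ·) (𝓝[>] (0:ℝ)) (fun r => G x r) := by
    intro x
    refine isBoundedUnder_of_eventually_le (a := K) ?_
    filter_upwards [self_mem_nhdsWithin] with r hr
    exact hG_le x r hr
  have hW0 : ∀ x : X, 0 ≤ lipUpper u x := by
    intro x
    rw [hlipG x]
    refine le_limsup_of_frequently_le ?_ (hbddG x)
    refine Eventually.frequently ?_
    filter_upwards [self_mem_nhdsWithin] with r hr
    exact hG_nonneg x r hr
  -- sections of the BVY set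
  have hsec_sub : ∀ (lam : ℝ), 0 < lam → ∀ (x y : X),
      y ∈ Prod.mk x ⁻¹' BVYset u N p lam → dist x y ≤ (K / lam) ^ (p / N) := by
    intro lam hlam x y hy
    obtain ⟨hne, hge⟩ := hy
    have hd0 : 0 < dist x y := dist_pos.mpr hne
    have h2 : dist x y ^ (N/p + 1) = dist x y ^ (N/p) * dist x y := by
      rw [Real.rpow_add hd0, Real.rpow_one]
    have h1 : lam * dist x y ^ (N/p) * dist x y ≤ K * dist x y := by
      rw [mul_assoc, ← h2]
      exact le_trans hge (hLip x y)
    have h3 : lam * dist x y ^ (N/p) ≤ K := (mul_le_mul_iff_left₀ hd0).mp h1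
    have h4 : dist x y ^ (N/p) ≤ K / lam := by
      rw [le_div_iff₀ hlam]
      linarith [mul_comm lam (dist x y ^ (N/p))]
    have h5 : (dist x y ^ (N/p)) ^ (p/N) ≤ (K / lam) ^ (p/N) :=
      Real.rpow_le_rpow (Real.rpow_nonneg dist_nonneg _) h4 hpN.le
    rw [← Real.rpow_mul dist_nonneg] at h5
    have h6 : N / p * (p / N) = 1 := by
      field_simp
    rwa [h6, Real.rpow_one] at h5
  have hr_pos : ∀ lam : ℝ, 0 < lam → (0:ℝ) < (K / lam) ^ (p / N) :=
    fun lam hlam => Real.rpow_pos_of_pos (div_pos hK0 hlam) _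
  have hsec_supp : ∀ (lam : ℝ), 0 < lam → ∀ x : X,
      (Prod.mk x ⁻¹' BVYset u N p lam).Nonempty →
      x ∈ cthickening ((K / lam) ^ (p / N)) (Function.support u) := by
    intro lam hlam x hne
    obtain ⟨y, hy⟩ := hne
    by_cases hx : u x = 0
    · have hd0 : 0 < dist x y := dist_pos.mpr hy.1
      have hpos : 0 < lam * dist x y ^ (N/p + 1) :=
        mul_pos hlam (Real.rpow_pos_of_pos hd0 _)
      have huy : u y ≠ 0 := by
        intro h0
        have := hy.2
        rw [hx, h0] at this
        simp only [sub_zero, abs_zero] at this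
        linarith
      exact mem_cthickening_of_dist_le x y _ _ (by simpa [Function.mem_support] using huy)
        (hsec_sub lam hlam x y hy)
    · exact self_subset_cthickening _ (by simpa [Function.mem_support] using hx)
  -- measurability
  have hEmeas : ∀ lam : ℝ, MeasurableSet (BVYset u N p lam) := by
    intro lam
    have h1 : MeasurableSet {q : X × X | q.1 ≠ q.2} := by
      have : IsClosed {q : X × X | q.1 = q.2} := isClosed_eq continuous_fst continuous_snd
      exact this.measurableSet.compl
    have h2 : MeasurableSet {q : X × X | lam * dist q.1 q.2 ^ (N / p + 1) ≤ |u q.1 - u q.2|} := by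
      have hc1 : Continuous fun q : X × X => lam * dist q.1 q.2 ^ (N / p + 1) :=
        continuous_const.mul ((Real.continuous_rpow_const (by positivity)).comp continuous_dist)
      have hc2 : Continuous fun q : X × X => |u q.1 - u q.2| :=
        ((hu_cont.comp continuous_fst).sub (hu_cont.comp continuous_snd)).abs
      exact (isClosed_le hc1 hc2).measurableSet
    exact h1.inter h2
  have hfmeas : ∀ lam : ℝ,
      Measurable fun x => ENNReal.ofReal (lam ^ p) * μ (Prod.mk x ⁻¹' BVYset u N p lam) :=
    fun lam => (measurable_measure_prodMk_left (hEmeas lam)).const_mul _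
  have hΦ : ∀ lam : ℝ, ENNReal.ofReal (lam ^ p) * (μ.prod μ) (BVYset u N p lam)
      = ∫⁻ x, ENNReal.ofReal (lam ^ p) * μ (Prod.mk x ⁻¹' BVYset u N p lam) ∂μ := by
    intro lam
    rw [Measure.prod_apply (hEmeas lam), lintegral_const_mul' _ _ ENNReal.ofReal_ne_top]
  -- the dominating function
  set T : Set X := cthickening (K ^ (p / N)) (Function.support u) with hTdef
  have hrmono : ∀ lam : ℝ, 1 ≤ lam → (K / lam) ^ (p / N) ≤ K ^ (p / N) := by
    intro lam hlam1
    refine Real.rpow_le_rpow (div_nonneg hK0.le (by linarith)) ?_ hpN.le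
    exact div_le_self hK0.le hlam1
  have hTmeas : MeasurableSet T := isClosed_cthickening.measurableSet
  have hTfin : μ T < ⊤ := by
    rcases Set.eq_empty_or_nonempty T with h | h
    · rw [h]; simp
    · obtain ⟨x0, _⟩ := h
      have hTb : Bornology.IsBounded T := hsupp.cthickening
      obtain ⟨R, hR⟩ := hTb.subset_closedBall x0
      refine lt_of_le_of_lt (measure_mono (hR.trans (closedBall_subset_ball ?_)))
        (BVY_ball_fin μ hdbl x0 (R+1))
      linarith
  set g : X → ENNReal := T.indicator (fun _ => ENNReal.ofReal (b * β * K ^ p)) with hgdef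
  have hgint : ∫⁻ x, g x ∂μ ≠ ⊤ := by
    rw [hgdef, lintegral_indicator_const hTmeas]
    exact (ENNReal.mul_lt_top ENNReal.ofReal_lt_top hTfin).ne
  have hdom : ∀ lam : ℝ, 1 ≤ lam → ∀ x : X,
      ENNReal.ofReal (lam ^ p) * μ (Prod.mk x ⁻¹' BVYset u N p lam) ≤ g x := by
    intro lam hlam1 x
    have hlam : (0:ℝ) < lam := lt_of_lt_of_le one_pos hlam1
    rcases Set.eq_empty_or_nonempty (Prod.mk x ⁻¹' BVYset u N p lam) with he | hne
    · rw [he]; simp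
    · have hxT : x ∈ T := by
        rw [hTdef]
        exact cthickening_mono (hrmono lam hlam1) _ (hsec_supp lam hlam x hne)
      have hrl : (0:ℝ) < (K/lam) ^ (p/N) := hr_pos lam hlam
      have hmeas_le : μ (Prod.mk x ⁻¹' BVYset u N p lam)
          ≤ μ (ball x (2 * (K/lam) ^ (p/N))) := by
        refine measure_mono fun y hy => ?_
        exact mem_ball'.mpr (lt_of_le_of_lt (hsec_sub lam hlam x y hy) (by linarith))
      have e1 : ((K/lam) ^ (p/N)) ^ N = (K/lam) ^ p := by
        rw [← Real.rpow_mul (div_nonneg hK0.le hlam.le), div_mul_cancel₀ _ hN0.ne']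
      have e2 : lam ^ p * (K/lam) ^ p = K ^ p := by
        rw [← Real.mul_rpow hlam.le (div_nonneg hK0.le hlam.le), mul_div_cancel₀ _ hlam.ne']
      have hkey : lam ^ p * (b * (2 * (K/lam) ^ (p/N)) ^ N) = b * β * K ^ p := by
        rw [Real.mul_rpow (by norm_num : (0:ℝ) ≤ 2) (Real.rpow_nonneg
          (div_nonneg hK0.le hlam.le) _), e1, h2N]
        linear_combination b * β * e2
      calc ENNReal.ofReal (lam ^ p) * μ (Prod.mk x ⁻¹' BVYset u N p lam)
          ≤ ENNReal.ofReal (lam ^ p) * μ (ball x (2 * (K/lam) ^ (p/N))) :=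
            mul_le_mul_right hmeas_le _
        _ ≤ ENNReal.ofReal (lam ^ p) * ENNReal.ofReal (b * (2 * (K/lam) ^ (p/N)) ^ N) :=
            mul_le_mul_right (hdens x (by linarith)) _
        _ = ENNReal.ofReal (lam ^ p * (b * (2 * (K/lam) ^ (p/N)) ^ N)) :=
            (ENNReal.ofReal_mul (Real.rpow_nonneg hlam.le _)).symm
        _ = ENNReal.ofReal (b * β * K ^ p) := by rw [hkey]
        _ = g x := by rw [hgdef, Set.indicator_of_mem hxT]
  -- pointwise limsup bound
  have hpoint : ∀ x : X,
      limsup (fun lam : ℝ => ENNReal.ofReal (lam ^ p)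
        * μ (Prod.mk x ⁻¹' BVYset u N p lam)) atTop
      ≤ ENNReal.ofReal b * ENNReal.ofReal (lipUpper u x ^ p) := by
    intro x
    have hWnn : 0 ≤ lipUpper u x := hW0 x
    set W : ℝ := lipUpper u x with hWdef
    have key : ∀ ε : ℝ, ε ∈ Ioo (0:ℝ) 1 →
        limsup (fun lam : ℝ => ENNReal.ofReal (lam ^ p)
          * μ (Prod.mk x ⁻¹' BVYset u N p lam)) atTop
        ≤ ENNReal.ofReal (b * (1+ε) ^ (2*N+2*p) * (W+ε) ^ p) := by
      rintro ε ⟨hε0, hε1⟩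
      have hε1' : (1:ℝ) < 1 + ε := by linarith
      have hWε : (0:ℝ) < W + ε := by linarith
      have hev : ∀ᶠ r in 𝓝[>] (0:ℝ), G x r < W + ε := by
        refine eventually_lt_of_limsup_lt ?_ (hbddG x)
        rw [← hlipG x, ← hWdef]
        linarith
      obtain ⟨s0, hs0mem, hs0sub⟩ := mem_nhdsGT_iff_exists_Ioo_subset.mp hev
      have hs00 : (0:ℝ) < s0 := hs0mem
      have hA : (0:ℝ) < (s0/2) ^ (N/p) := Real.rpow_pos_of_pos (by linarith) _
      refine limsup_le_of_le (by isBoundedDefault) ?_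
      filter_upwards [eventually_gt_atTop (max 1 (K / ((s0/2) ^ (N/p))))] with lam hlam_gt
      have hlam1 : (1:ℝ) < lam := lt_of_le_of_lt (le_max_left _ _) hlam_gt
      have hlam : (0:ℝ) < lam := by linarith
      have hKlam : K / lam < (s0/2) ^ (N/p) := by
        rw [div_lt_iff₀ hlam]
        have h2 : K / ((s0/2) ^ (N/p)) < lam := lt_of_le_of_lt (le_max_right _ _) hlam_gt
        rw [div_lt_iff₀ hA] at h2
        nlinarith
      have hrs : (K/lam) ^ (p/N) < s0 / 2 := by
        have h3 : (K/lam) ^ (p/N) < ((s0/2) ^ (N/p)) ^ (p/N) :=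
          Real.rpow_lt_rpow (div_nonneg hK0.le hlam.le) hKlam hpN
        rw [← Real.rpow_mul (by linarith : (0:ℝ) ≤ s0/2)] at h3
        have h6 : N / p * (p / N) = 1 := by field_simp
        rwa [h6, Real.rpow_one] at h3
      rcases Set.eq_empty_or_nonempty (Prod.mk x ⁻¹' BVYset u N p lam) with he | hne
      · rw [he]; simp
      · -- the radius ρ
        have hDne : ((fun y => dist x y) '' (Prod.mk x ⁻¹' BVYset u N p lam)).Nonempty :=
          hne.image _
        have hDbdd : BddAbove ((fun y => dist x y) '' (Prod.mk x ⁻¹' BVYset u N p lam)) := by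
          refine ⟨(K/lam) ^ (p/N), ?_⟩
          rintro v ⟨y, hy, rfl⟩
          exact hsec_sub lam hlam x y hy
        set ρ : ℝ := sSup ((fun y => dist x y) '' (Prod.mk x ⁻¹' BVYset u N p lam)) with hρdef
        have hρ_ub : ∀ y ∈ Prod.mk x ⁻¹' BVYset u N p lam, dist x y ≤ ρ :=
          fun y hy => le_csSup hDbdd ⟨y, hy, rfl⟩
        have hρr : ρ ≤ (K/lam) ^ (p/N) := by
          refine csSup_le hDne ?_
          rintro v ⟨y, hy, rfl⟩
          exact hsec_sub lam hlam x y hy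
        obtain ⟨y0, hy0⟩ := hne
        have hρ0 : 0 < ρ := lt_of_lt_of_le (dist_pos.mpr hy0.1) (hρ_ub y0 hy0)
        obtain ⟨v, hvD, hv⟩ := exists_lt_of_lt_csSup hDne
          (show ρ/(1+ε) < ρ from div_lt_self hρ0 hε1')
        obtain ⟨y1, hy1sec, rfl⟩ := hvD
        have hd1 : 0 < dist x y1 := dist_pos.mpr hy1sec.1
        have hρd : ρ < (1+ε) * dist x y1 := by
          rw [div_lt_iff₀ (by linarith : (0:ℝ) < 1+ε)] at hv
          nlinarith
        have hs_pos : (0:ℝ) < (1+ε)*ρ := by positivity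
        have hs_lt : (1+ε)*ρ < s0 := by nlinarith
        have hGs : G x ((1+ε)*ρ) < W + ε := hs0sub ⟨hs_pos, hs_lt⟩
        have hy1ball : y1 ∈ ball x ((1+ε)*ρ) := by
          refine mem_ball'.mpr (lt_of_le_of_lt (hρ_ub y1 hy1sec) ?_)
          nlinarith
        have hchain : |u x - u y1| ≤ (1+ε)*ρ*(W+ε) := by
          have h1 : |u y1 - u x| / ((1+ε)*ρ) ≤ G x ((1+ε)*ρ) := hG_ge x _ y1 hs_pos hy1ball
          have h2 : |u y1 - u x| ≤ (1+ε)*ρ*(W+ε) := by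
            have h3 : |u y1 - u x| / ((1+ε)*ρ) ≤ W + ε := h1.trans hGs.le
            rw [div_le_iff₀ hs_pos] at h3
            calc |u y1 - u x| ≤ (W+ε) * ((1+ε)*ρ) := h3
              _ = (1+ε)*ρ*(W+ε) := by ring
          rwa [abs_sub_comm]
        have hstep : lam * dist x y1 ^ (N/p) ≤ (1+ε)^2 * (W+ε) := by
          have h6 : dist x y1 ^ (N/p+1) = dist x y1 ^ (N/p) * dist x y1 := by
            rw [Real.rpow_add hd1, Real.rpow_one]
          have h7 : lam * (dist x y1 ^ (N/p) * dist x y1) ≤ (1+ε)*ρ*(W+ε) := by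
            rw [← h6]
            exact le_trans hy1sec.2 hchain
          have h8 : lam * (dist x y1 ^ (N/p) * dist x y1)
              ≤ (1+ε)^2 * (W+ε) * dist x y1 := by
            have hh : (1+ε)*(W+ε)*ρ ≤ (1+ε)*(W+ε)*((1+ε) * dist x y1) :=
              mul_le_mul_of_nonneg_left hρd.le (by positivity)
            nlinarith [hh]
          rw [← mul_assoc] at h8
          exact (mul_le_mul_iff_left₀ hd1).mp h8
        have hfinal_real : lam ^ p * ρ ^ N ≤ (1+ε) ^ (N + 2*p) * (W+ε) ^ p := by
          have h8 : (lam * dist x y1 ^ (N/p)) ^ p ≤ ((1+ε)^2 * (W+ε)) ^ p :=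
            Real.rpow_le_rpow (by positivity) hstep hp0.le
          have h9 : (lam * dist x y1 ^ (N/p)) ^ p = lam ^ p * dist x y1 ^ N := by
            rw [Real.mul_rpow hlam.le (Real.rpow_nonneg dist_nonneg _),
              ← Real.rpow_mul dist_nonneg, div_mul_cancel₀ _ hp0.ne']
          have h10 : ((1+ε)^2 * (W+ε)) ^ p = (1+ε) ^ (2*p) * (W+ε) ^ p := by
            rw [Real.mul_rpow (by positivity) hWε.le, ← Real.rpow_natCast (1+ε) 2,
              ← Real.rpow_mul (by linarith)]
            norm_num
          have h11 : ρ ^ N ≤ (1+ε) ^ N * dist x y1 ^ N := by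
            calc ρ ^ N ≤ ((1+ε) * dist x y1) ^ N :=
                Real.rpow_le_rpow hρ0.le hρd.le hN0.le
              _ = (1+ε) ^ N * dist x y1 ^ N := Real.mul_rpow (by linarith) dist_nonneg
          have h12 : (1+ε) ^ N * (1+ε) ^ (2*p) = (1+ε) ^ (N+2*p) :=
            (Real.rpow_add (by linarith) _ _).symm
          have h13 : lam ^ p * dist x y1 ^ N ≤ (1+ε) ^ (2*p) * (W+ε) ^ p := by
            rw [← h9, ← h10]; exact h8
          calc lam ^ p * ρ ^ N ≤ lam ^ p * ((1+ε) ^ N * dist x y1 ^ N) :=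
              mul_le_mul_of_nonneg_left h11 (Real.rpow_nonneg hlam.le _)
            _ = (1+ε) ^ N * (lam ^ p * dist x y1 ^ N) := by ring
            _ ≤ (1+ε) ^ N * ((1+ε) ^ (2*p) * (W+ε) ^ p) :=
              mul_le_mul_of_nonneg_left h13 (Real.rpow_nonneg (by linarith) _)
            _ = (1+ε) ^ (N+2*p) * (W+ε) ^ p := by rw [← h12]; ring
        have hμsec : μ (Prod.mk x ⁻¹' BVYset u N p lam)
            ≤ ENNReal.ofReal (b * ((1+ε)*ρ) ^ N) := by
          refine le_trans (measure_mono fun y hy => ?_) (hdens x hs_pos)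
          refine mem_ball'.mpr (lt_of_le_of_lt (hρ_ub y hy) ?_)
          nlinarith
        have hrealineq : lam ^ p * (b * ((1+ε)*ρ) ^ N)
            ≤ b * (1+ε) ^ (2*N+2*p) * (W+ε) ^ p := by
          have h13 : ((1+ε)*ρ) ^ N = (1+ε) ^ N * ρ ^ N := Real.mul_rpow (by linarith) hρ0.le
          have h14 : (1+ε) ^ N * (1+ε) ^ (N+2*p) = (1+ε) ^ (2*N+2*p) := by
            rw [← Real.rpow_add (by linarith : (0:ℝ) < 1+ε)]
            ring_nf
          have h15 : (0:ℝ) ≤ b * (1+ε) ^ N :=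
            mul_nonneg hb0 (Real.rpow_nonneg (by linarith) _)
          calc lam ^ p * (b * ((1+ε)*ρ) ^ N)
              = b * (1+ε) ^ N * (lam ^ p * ρ ^ N) := by rw [h13]; ring
            _ ≤ b * (1+ε) ^ N * ((1+ε) ^ (N+2*p) * (W+ε) ^ p) :=
              mul_le_mul_of_nonneg_left hfinal_real h15
            _ = b * ((1+ε) ^ N * (1+ε) ^ (N+2*p)) * (W+ε) ^ p := by ring
            _ = b * (1+ε) ^ (2*N+2*p) * (W+ε) ^ p := by rw [h14]
        calc ENNReal.ofReal (lam ^ p) * μ (Prod.mk x ⁻¹' BVYset u N p lam)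
            ≤ ENNReal.ofReal (lam ^ p) * ENNReal.ofReal (b * ((1+ε)*ρ) ^ N) :=
              mul_le_mul_right hμsec _
          _ = ENNReal.ofReal (lam ^ p * (b * ((1+ε)*ρ) ^ N)) :=
              (ENNReal.ofReal_mul (Real.rpow_nonneg hlam.le _)).symm
          _ ≤ ENNReal.ofReal (b * (1+ε) ^ (2*N+2*p) * (W+ε) ^ p) :=
              ENNReal.ofReal_le_ofReal hrealineq
    -- take ε → 0⁺
    have hcont : Tendsto (fun ε : ℝ => ENNReal.ofReal (b * (1+ε) ^ (2*N+2*p) * (W+ε) ^ p))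
        (𝓝[>] (0:ℝ)) (𝓝 (ENNReal.ofReal (b * W ^ p))) := by
      have hcR : ContinuousAt (fun ε : ℝ => b * (1+ε) ^ (2*N+2*p) * (W+ε) ^ p) 0 := by
        have h1 : ContinuousAt (fun ε : ℝ => (1+ε) ^ (2*N+2*p)) 0 := by
          refine ContinuousAt.rpow_const (by fun_prop) (Or.inl ?_)
          norm_num
        have h2 : ContinuousAt (fun ε : ℝ => (W+ε) ^ p) 0 :=
          ContinuousAt.rpow_const (by fun_prop) (Or.inr hp0.le)
        exact (continuousAt_const.mul h1).mul h2
      have h3 : Tendsto (fun ε : ℝ => ENNReal.ofReal (b * (1+ε) ^ (2*N+2*p) * (W+ε) ^ p))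
          (𝓝 (0:ℝ)) (𝓝 (ENNReal.ofReal (b * (1+0) ^ (2*N+2*p) * (W+0) ^ p))) :=
        (ENNReal.continuous_ofReal.continuousAt.comp hcR).tendsto
      have h4 : ENNReal.ofReal (b * (1+0:ℝ) ^ (2*N+2*p) * (W+0) ^ p)
          = ENNReal.ofReal (b * W ^ p) := by
        norm_num [Real.one_rpow]
      rw [h4] at h3
      exact h3.mono_left nhdsWithin_le_nhds
    have hle : limsup (fun lam : ℝ => ENNReal.ofReal (lam ^ p)
        * μ (Prod.mk x ⁻¹' BVYset u N p lam)) atTop ≤ ENNReal.ofReal (b * W ^ p) := by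
      refine ge_of_tendsto hcont ?_
      filter_upwards [Ioo_mem_nhdsGT_of_mem (show (0:ℝ) ∈ Ico (0:ℝ) 1 by constructor <;> norm_num)]
        with ε hε
      exact key ε hε
    rwa [ENNReal.ofReal_mul hb0] at hle
  -- reverse Fatou via sequences
  have hmain : limsup (fun lam : ℝ => ENNReal.ofReal (lam ^ p) * (μ.prod μ) (BVYset u N p lam))
      atTop ≤ ∫⁻ x, ENNReal.ofReal b * ENNReal.ofReal (lipUpper u x ^ p) ∂μ := by
    by_contra hcon
    push_neg at hcon
    obtain ⟨c, hc1, hc2⟩ := exists_between hcon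
    have hfreq : ∃ᶠ lam in (atTop : Filter ℝ),
        c < ENNReal.ofReal (lam ^ p) * (μ.prod μ) (BVYset u N p lam) :=
      frequently_lt_of_lt_limsup (by isBoundedDefault) hc2
    have hseq : ∀ n : ℕ, ∃ lam : ℝ, lam ≥ (n:ℝ)+1 ∧
        c < ENNReal.ofReal (lam ^ p) * (μ.prod μ) (BVYset u N p lam) := by
      intro n
      obtain ⟨lam, hlam1, hlam2⟩ := frequently_atTop.mp hfreq ((n:ℝ)+1)
      exact ⟨lam, hlam1, hlam2⟩
    choose sfun hsge hsc using hseq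
    have hsge1 : ∀ n : ℕ, (1:ℝ) ≤ sfun n := by
      intro n
      have := hsge n
      have h0 : (0:ℝ) ≤ (n:ℝ) := Nat.cast_nonneg n
      linarith
    have hstends : Tendsto sfun atTop atTop := by
      refine tendsto_atTop_mono hsge ?_
      exact tendsto_atTop_add_const_right _ 1 tendsto_natCast_atTop_atTop
    have hRF := limsup_lintegral_le (μ := μ)
      (f := fun n x => ENNReal.ofReal (sfun n ^ p) * μ (Prod.mk x ⁻¹' BVYset u N p (sfun n)))
      g (fun n => hfmeas (sfun n))
      (fun n => ae_of_all μ (hdom (sfun n) (hsge1 n))) hgint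
    have hlhs : c ≤ limsup (fun n : ℕ => ∫⁻ x, ENNReal.ofReal (sfun n ^ p)
        * μ (Prod.mk x ⁻¹' BVYset u N p (sfun n)) ∂μ) atTop := by
      refine le_limsup_of_frequently_le (Frequently.of_forall fun n => ?_)
      rw [← hΦ (sfun n)]
      exact (hsc n).le
    have hrhs : ∫⁻ x, limsup (fun n : ℕ => ENNReal.ofReal (sfun n ^ p)
        * μ (Prod.mk x ⁻¹' BVYset u N p (sfun n))) atTop ∂μ
        ≤ ∫⁻ x, ENNReal.ofReal b * ENNReal.ofReal (lipUpper u x ^ p) ∂μ := by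
      refine lintegral_mono fun x => ?_
      refine le_trans ?_ (hpoint x)
      have e : limsup (fun n : ℕ => ENNReal.ofReal (sfun n ^ p)
          * μ (Prod.mk x ⁻¹' BVYset u N p (sfun n))) atTop
          = limsup (fun lam : ℝ => ENNReal.ofReal (lam ^ p)
              * μ (Prod.mk x ⁻¹' BVYset u N p lam)) (map sfun atTop) :=
        limsup_comp (fun lam : ℝ => ENNReal.ofReal (lam ^ p)
          * μ (Prod.mk x ⁻¹' BVYset u N p lam)) sfun atTop
      rw [e]
      exact limsup_le_limsup_of_le hstends
    exact absurd (hlhs.trans (hRF.trans hrhs)) (not_le.mpr hc1)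
  calc limsup (fun lam : ℝ => ENNReal.ofReal (lam ^ p) * (μ.prod μ) (BVYset u N p lam)) atTop
      ≤ ∫⁻ x, ENNReal.ofReal b * ENNReal.ofReal (lipUpper u x ^ p) ∂μ := hmain
    _ = ENNReal.ofReal b * ∫⁻ x, ENNReal.ofReal (lipUpper u x ^ p) ∂μ :=
        lintegral_const_mul' _ _ ENNReal.ofReal_ne_top
    _ ≤ ENNReal.ofReal (2 * b) * ∫⁻ x, ENNReal.ofReal (lipUpper u x ^ p) ∂μ :=
        mul_le_mul_left (ENNReal.ofReal_le_ofReal (by linarith)) _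
end

section
/- Let p ≥ 1 and let (X, d, m) be a metric measure space whose measure m is β-doubling for some β > 1, and set N = log β / log 2. Assume a ≤ θ_N^−(x) ≤ θ_N^+(x) ≤ b for all x ∈ X, for some constants b > a > 0. Let u : X → ℝ be a Lipschitz function with bounded support such that Lip u(x) = lip u(x) for m-almost every x ∈ X. Then C₁ ∫_X (Lip u(x))^p dm(x) ≤ liminf_{λ→+∞} λ^p · (m × m)(E_{λ,u}) and limsup_{λ→+∞} λ^p · (m × m)(E_{λ,u}) ≤ C₂ ∫_X (Lip u(x))^p dm(x), where C₁ = a / (2^{5N} · 8^p), C₂ = 2b, and E_{λ,u} = {(x,y) ∈ X × X : x ≠ y, |u(x) − u(y)| ≥ λ · d(x,y)^{N/p + 1}}. -/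
open MeasureTheory Filter Metric Set Topology
open scoped ENNReal NNReal

set_option maxHeartbeats 1000000

namespace BVYaux

noncomputable def osc {X : Type*} [MetricSpace X] (u : X → ℝ) (x : X) (r : ℝ) : ℝ :=
  ⨆ y ∈ Metric.ball x r, |u y - u x| / r

variable {X : Type*} [MetricSpace X] {u : X → ℝ} {L : ℝ} {x : X} {r : ℝ}

lemma lip_chord (hL0 : 0 ≤ L) (hL : ∀ y z : X, |u y - u z| ≤ L * dist y z) :
    True := trivial

lemma inner_eq (hy : x ∈ Metric.ball x r → False) :
    (⨆ _ : x ∈ Metric.ball x r, |u x - u x| / r) = 0 := by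
  haveI : IsEmpty (x ∈ Metric.ball x r) := ⟨hy⟩
  exact Real.iSup_of_isEmpty _

lemma inner_le_of_lip (hL0 : 0 ≤ L) (hL : ∀ y z : X, |u y - u z| ≤ L * dist y z)
    (hr : 0 < r) (y : X) : (⨆ _ : y ∈ Metric.ball x r, |u y - u x| / r) ≤ L := by
  by_cases h : y ∈ Metric.ball x r
  · rw [ciSup_pos h]
    rw [div_le_iff₀ hr]
    exact le_trans (hL y x) (mul_le_mul_of_nonneg_left (le_of_lt (mem_ball.mp h)) hL0)
  · haveI : IsEmpty (y ∈ Metric.ball x r) := ⟨h⟩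
    rw [Real.iSup_of_isEmpty]
    exact hL0

lemma bddAbove_inner (hL0 : 0 ≤ L) (hL : ∀ y z : X, |u y - u z| ≤ L * dist y z)
    (hr : 0 < r) : BddAbove (Set.range fun y : X => ⨆ _ : y ∈ Metric.ball x r, |u y - u x| / r) := by
  refine ⟨L, ?_⟩
  rintro v ⟨y, rfl⟩
  exact inner_le_of_lip hL0 hL hr y

lemma osc_le (hL0 : 0 ≤ L) (hL : ∀ y z : X, |u y - u z| ≤ L * dist y z)
    (hr : 0 < r) : osc u x r ≤ L := by
  rcases isEmpty_or_nonempty X with hX | hX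
  · exact absurd (Nonempty.intro x) (not_nonempty_iff.mpr hX)
  · exact ciSup_le (inner_le_of_lip hL0 hL hr)

lemma osc_nonneg (hL0 : 0 ≤ L) (hL : ∀ y z : X, |u y - u z| ≤ L * dist y z)
    (hr : 0 < r) : 0 ≤ osc u x r := by
  have hx : x ∈ Metric.ball x r := mem_ball_self hr
  have h0 : (⨆ _ : x ∈ Metric.ball x r, |u x - u x| / r) = 0 := by
    rw [ciSup_pos hx]; simp
  calc (0:ℝ) = ⨆ _ : x ∈ Metric.ball x r, |u x - u x| / r := h0.symm
    _ ≤ osc u x r := le_ciSup (bddAbove_inner hL0 hL hr) x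

lemma div_le_osc_of_mem (hL0 : 0 ≤ L) (hL : ∀ y z : X, |u y - u z| ≤ L * dist y z)
    (hr : 0 < r) {y : X} (hy : y ∈ Metric.ball x r) : |u y - u x| / r ≤ osc u x r := by
  have := le_ciSup (bddAbove_inner (x := x) hL0 hL hr) y
  rwa [ciSup_pos hy] at this

lemma exists_osc_witness {c : ℝ} (hc : 0 ≤ c) (h : c < osc u x r) :
    ∃ y, y ∈ Metric.ball x r ∧ c * r < |u y - u x| := by
  rcases isEmpty_or_nonempty X with hX | hX
  · exact absurd (Nonempty.intro x) (not_nonempty_iff.mpr hX)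
  obtain ⟨y, hy⟩ := exists_lt_of_lt_ciSup h
  by_cases hmem : y ∈ Metric.ball x r
  · rw [ciSup_pos hmem] at hy
    refine ⟨y, hmem, ?_⟩
    have hr : 0 < r := by
      rcases le_or_gt r 0 with h0 | h0
      · rw [Metric.ball_eq_empty.mpr h0] at hmem
        exact absurd hmem (Set.notMem_empty y)
      · exact h0
    exact (lt_div_iff₀ hr).mp hy
  · haveI : IsEmpty (y ∈ Metric.ball x r) := ⟨hmem⟩
    rw [Real.iSup_of_isEmpty] at hy
    exact absurd hy (not_lt.mpr hc)


lemma eventually_pos : ∀ᶠ r in 𝓝[>] (0:ℝ), 0 < r := eventually_mem_nhdsWithin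

lemma osc_bddAbove (hL0 : 0 ≤ L) (hL : ∀ y z : X, |u y - u z| ≤ L * dist y z) :
    IsBoundedUnder (· ≤ ·) (𝓝[>] (0:ℝ)) (osc u x) :=
  isBoundedUnder_of_eventually_le (a := L)
    (eventually_pos.mono fun _ hr => osc_le hL0 hL hr)

lemma osc_bddBelow (hL0 : 0 ≤ L) (hL : ∀ y z : X, |u y - u z| ≤ L * dist y z) :
    IsBoundedUnder (· ≥ ·) (𝓝[>] (0:ℝ)) (osc u x) :=
  isBoundedUnder_of_eventually_ge (a := (0:ℝ))
    (eventually_pos.mono fun _ hr => osc_nonneg hL0 hL hr)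

lemma lipUpper_nonneg (hL0 : 0 ≤ L) (hL : ∀ y z : X, |u y - u z| ≤ L * dist y z) :
    0 ≤ lipUpper u x :=
  le_limsup_of_frequently_le
    ((eventually_pos.mono fun _ hr => osc_nonneg (u := u) (x := x) hL0 hL hr).frequently)
    (osc_bddAbove hL0 hL)

lemma lipUpper_le (hL0 : 0 ≤ L) (hL : ∀ y z : X, |u y - u z| ≤ L * dist y z) :
    lipUpper u x ≤ L :=
  limsup_le_of_le ((osc_bddBelow (u := u) (x := x) hL0 hL).isCoboundedUnder_flip)
    (eventually_pos.mono fun _ hr => osc_le hL0 hL hr)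

/-- chord upper bound from `lipUpper < c`. -/
lemma chord_of_limsup_lt (hL0 : 0 ≤ L) (hL : ∀ y z : X, |u y - u z| ≤ L * dist y z)
    {c : ℝ} (h : lipUpper u x < c) :
    ∃ r₀ > 0, ∀ y : X, dist y x < r₀ → |u y - u x| ≤ c * dist y x := by
  have hc : 0 < c := lt_of_le_of_lt (lipUpper_nonneg hL0 hL) h
  have hev : ∀ᶠ r in 𝓝[>] (0:ℝ), osc u x r < c :=
    eventually_lt_of_limsup_lt h (osc_bddAbove hL0 hL)
  obtain ⟨r₀, hr₀pos, hr₀⟩ := (nhdsGT_basis (0:ℝ)).eventually_iff.mp hev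
  refine ⟨r₀, hr₀pos, fun y hy => ?_⟩
  by_cases hd : dist y x = 0
  · have : y = x := by rwa [dist_eq_zero] at hd
    simp [this, hd]
  have hdpos : 0 < dist y x := lt_of_le_of_ne dist_nonneg (Ne.symm hd)
  by_contra hcon
  push_neg at hcon
  set d := dist y x with hdd
  have hdm : d < |u y - u x| / c := (lt_div_iff₀ hc).mpr (by rw [mul_comm]; exact hcon)
  set m := min r₀ (|u y - u x| / c) with hm
  have hdm' : d < m := lt_min hy hdm
  set r := (d + m) / 2 with hr
  have hrd : d < r := by simp only [hr]; linarith
  have hrm : r < m := by simp only [hr]; linarith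
  have hrpos : 0 < r := lt_of_le_of_lt dist_nonneg hrd
  have hmem : y ∈ Metric.ball x r := by rw [mem_ball]; exact hrd
  have h1 : |u y - u x| / r ≤ osc u x r := div_le_osc_of_mem hL0 hL hrpos hmem
  have h2 : osc u x r < c := hr₀ ⟨hrpos, lt_of_lt_of_le hrm (min_le_left _ _)⟩
  have h3 : |u y - u x| < c * r := (div_lt_iff₀ hrpos).mp (lt_of_le_of_lt h1 h2)
  have h4 : r < |u y - u x| / c := lt_of_lt_of_le hrm (min_le_right _ _)
  have : c * r < |u y - u x| := by
    have := (lt_div_iff₀ hc).mp h4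
    linarith [this]
  linarith

/-- witnesses eventually, from `c < lipLower`. -/
lemma eventually_witness (hL0 : 0 ≤ L) (hL : ∀ y z : X, |u y - u z| ≤ L * dist y z)
    {c : ℝ} (hc0 : 0 ≤ c) (h : c < lipLower u x) :
    ∀ᶠ r in 𝓝[>] (0:ℝ), ∃ y, y ∈ Metric.ball x r ∧ c * r < |u y - u x| := by
  have hev : ∀ᶠ r in 𝓝[>] (0:ℝ), c < osc u x r :=
    eventually_lt_of_lt_liminf h (osc_bddBelow hL0 hL)
  exact hev.mono fun r hr => exists_osc_witness hc0 hr

/-- amplification sets. -/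
def Fset (u : X → ℝ) (c : ℝ) (m : ℕ) : Set X :=
  {z | ∃ y, dist z y < 1 / (m + 1) ∧ c * dist z y < |u z - u y|}

lemma isOpen_Fset (hu : Continuous u) (c : ℝ) (m : ℕ) : IsOpen (Fset u c m) := by
  have : Fset u c m = ⋃ y, {z | dist z y < 1 / (m + 1)} ∩ {z | c * dist z y < |u z - u y|} := by
    ext z; simp [Fset, Set.mem_iUnion, Set.mem_inter_iff]
  rw [this]
  refine isOpen_iUnion fun y => IsOpen.inter ?_ ?_
  · exact isOpen_lt (by fun_prop) continuous_const
  · exact isOpen_lt (by fun_prop) (by fun_prop)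

lemma le_lipUpper_of_mem_Fset (hL0 : 0 ≤ L) (hL : ∀ y z : X, |u y - u z| ≤ L * dist y z)
    {c : ℝ} (hc : 0 ≤ c) (h : ∀ m : ℕ, x ∈ Fset u c m) : c ≤ lipUpper u x := by
  rcases eq_or_lt_of_le hc with hc0 | hcpos
  · exact hc0 ▸ lipUpper_nonneg hL0 hL
  refine le_of_forall_pos_le_add fun ε hε => ?_
  rcases le_or_gt c ε with hce | hce
  · exact le_trans hce (by linarith [lipUpper_nonneg (u := u) (x := x) hL0 hL])
  set θ := ε / c with hθ
  have hθpos : 0 < θ := div_pos hε hcpos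
  have hkey : ∃ᶠ r in 𝓝[>] (0:ℝ), c - ε ≤ osc u x r := by
    rw [Filter.frequently_iff]
    intro V hV
    obtain ⟨δ, hδpos, hδ⟩ := (nhdsGT_basis (0:ℝ)).mem_iff.mp hV
    -- choose m large
    obtain ⟨m, hm⟩ := exists_nat_gt ((1 + θ) / δ)
    obtain ⟨y, hym, hyc⟩ := h m
    have hd0 : 0 < dist x y := by
      rcases le_or_gt (dist x y) 0 with h0 | h0
      · have h00 : dist x y = 0 := le_antisymm h0 dist_nonneg
        have hyx : y = x := by rwa [dist_comm, dist_eq_zero] at h00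
        rw [h00, mul_zero, hyx] at hyc
        simp at hyc
      · exact h0
    set r := dist x y * (1 + θ) with hrdef
    have hrpos : 0 < r := mul_pos hd0 (by linarith)
    have hrδ : r < δ := by
      have h1 : dist x y < 1 / (m + 1) := hym
      have hm1 : (0:ℝ) < m + 1 := by positivity
      have : (1 + θ) / δ < m + 1 := lt_of_lt_of_le hm (by exact_mod_cast le_of_lt (lt_add_one (m:ℝ)))
      have h2 : (1 + θ) / (m + 1) < δ := by
        rw [div_lt_iff₀ hm1]
        rw [div_lt_iff₀ hδpos] at this
        linarith
      calc r < (1 / (m + 1)) * (1 + θ) := by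
              exact mul_lt_mul_of_pos_right h1 (by linarith)
        _ = (1 + θ) / (m + 1) := by ring
        _ < δ := h2
    refine ⟨r, hδ ⟨hrpos, hrδ⟩, ?_⟩
    have hmem : y ∈ Metric.ball x r := by
      rw [mem_ball, dist_comm]
      nlinarith [hd0]
    have h1 : |u y - u x| / r ≤ osc u x r := div_le_osc_of_mem hL0 hL hrpos hmem
    have h2 : c * dist x y < |u y - u x| := by rwa [abs_sub_comm (u x)] at hyc
    have h3 : c / (1 + θ) ≤ |u y - u x| / r := by
      rw [div_le_div_iff₀ (by linarith) hrpos, hrdef]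
      nlinarith [hd0]
    have h4 : c - ε ≤ c / (1 + θ) := by
      rw [le_div_iff₀ (by linarith : (0:ℝ) < 1 + θ), hθ]
      have : c * (ε / c) = ε := by field_simp
      nlinarith [hε.le]
    linarith
  have := le_limsup_of_frequently_le hkey (osc_bddAbove hL0 hL)
  have h5 : c - ε ≤ lipUpper u x := this
  linarith


section Doubling

variable {X : Type*} [MetricSpace X] [MeasurableSpace X] {μ : Measure X} {β N b : ℝ}

lemma measure_ball_two_pow
    (hdbl : ∀ (x : X) (r : ℝ), 0 < r →
      μ (Metric.ball x (2 * r)) ≤ ENNReal.ofReal β * μ (Metric.ball x r))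
    (x : X) {r : ℝ} (hr : 0 < r) (k : ℕ) :
    μ (Metric.ball x (2 ^ k * r)) ≤ (ENNReal.ofReal β) ^ k * μ (Metric.ball x r) := by
  induction k with
  | zero => simp
  | succ k ih =>
    have h2 : (2:ℝ) ^ (k+1) * r = 2 * (2 ^ k * r) := by ring
    rw [h2]
    calc μ (Metric.ball x (2 * (2 ^ k * r)))
        ≤ ENNReal.ofReal β * μ (Metric.ball x (2 ^ k * r)) :=
          hdbl x _ (by positivity)
      _ ≤ ENNReal.ofReal β * ((ENNReal.ofReal β) ^ k * μ (Metric.ball x r)) :=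
          mul_le_mul_right ih _
      _ = (ENNReal.ofReal β) ^ (k+1) * μ (Metric.ball x r) := by ring

lemma measure_ball_finite [IsLocallyFiniteMeasure μ]
    (hdbl : ∀ (x : X) (r : ℝ), 0 < r →
      μ (Metric.ball x (2 * r)) ≤ ENNReal.ofReal β * μ (Metric.ball x r))
    (x : X) (R : ℝ) : μ (Metric.ball x R) < ⊤ := by
  rcases le_or_gt R 0 with hR | hR
  · rw [Metric.ball_eq_empty.mpr hR]; simp
  obtain ⟨s, hs, hfin⟩ := (μ.finiteAt_nhds x)
  obtain ⟨ε, hε, hball⟩ := Metric.mem_nhds_iff.mp hs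
  obtain ⟨k, hk⟩ := pow_unbounded_of_one_lt (R / ε) (one_lt_two (α := ℝ))
  have hRk : R ≤ 2 ^ k * ε := by
    rw [div_lt_iff₀ hε] at hk
    linarith
  calc μ (Metric.ball x R) ≤ μ (Metric.ball x (2 ^ k * ε)) :=
        measure_mono (Metric.ball_subset_ball hRk)
    _ ≤ (ENNReal.ofReal β) ^ k * μ (Metric.ball x ε) := measure_ball_two_pow hdbl x hε k
    _ ≤ (ENNReal.ofReal β) ^ k * μ s := mul_le_mul_right (measure_mono hball) _
    _ < ⊤ := ENNReal.mul_lt_top (ENNReal.pow_lt_top ENNReal.ofReal_lt_top) hfin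

lemma two_rpow_eq (hβ : 1 < β) (hN : N = Real.log β / Real.log 2) : (2:ℝ) ^ N = β := by
  have hβpos : (0:ℝ) < β := lt_trans one_pos hβ
  rw [Real.rpow_def_of_pos two_pos, hN]
  rw [mul_comm, div_mul_cancel₀]
  · exact Real.exp_log hβpos
  · exact ne_of_gt (Real.log_pos one_lt_two)

lemma Npos (hβ : 1 < β) (hN : N = Real.log β / Real.log 2) : 0 < N := by
  rw [hN]
  exact div_pos (Real.log_pos hβ) (Real.log_pos one_lt_two)

lemma pow_k_rpow (k : ℕ) (hβ : 1 < β) (hN : N = Real.log β / Real.log 2) :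
    ((2:ℝ) ^ k) ^ N = β ^ k := by
  rw [← Real.rpow_natCast (2:ℝ) k, ← Real.rpow_mul (by norm_num : (0:ℝ) ≤ 2),
    mul_comm, Real.rpow_mul (by norm_num : (0:ℝ) ≤ 2), two_rpow_eq hβ hN,
    Real.rpow_natCast]

/-- global upper density bound from dyadic monotonicity. -/
lemma measure_ball_le_global (hβ : 1 < β) (hN : N = Real.log β / Real.log 2)
    (hdbl : ∀ (x : X) (r : ℝ), 0 < r →
      μ (Metric.ball x (2 * r)) ≤ ENNReal.ofReal β * μ (Metric.ball x r))
    (hθup : ∀ x : X,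
      Filter.limsup (fun r : ℝ => μ (Metric.ball x r) / ENNReal.ofReal (r ^ N)) (𝓝[>] (0 : ℝ))
        ≤ ENNReal.ofReal b)
    (x : X) {r : ℝ} (hr : 0 < r) :
    μ (Metric.ball x r) ≤ ENNReal.ofReal b * ENNReal.ofReal (r ^ N) := by
  have hβpos : (0:ℝ) < β := lt_trans one_pos hβ
  set G : ℝ → ℝ≥0∞ := fun s => μ (Metric.ball x s) / ENNReal.ofReal (s ^ N) with hG
  have hcne : ∀ k : ℕ, ((ENNReal.ofReal β) ^ k) ≠ 0 := fun k =>
    pow_ne_zero _ (by simp [ENNReal.ofReal_eq_zero, not_le, hβpos])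
  have hcnt : ∀ k : ℕ, ((ENNReal.ofReal β) ^ k) ≠ ⊤ := fun k =>
    ENNReal.pow_ne_top ENNReal.ofReal_ne_top
  have h1 : ∀ k : ℕ, G r ≤ G (r / 2 ^ k) := by
    intro k
    have hrk : 0 < r / 2 ^ k := by positivity
    have hball : μ (Metric.ball x r) ≤ (ENNReal.ofReal β) ^ k * μ (Metric.ball x (r / 2 ^ k)) := by
      have := measure_ball_two_pow hdbl x hrk k
      rwa [mul_div_cancel₀ _ (by positivity : ((2:ℝ) ^ k) ≠ 0)] at this
    have hsplit : ENNReal.ofReal (r ^ N)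
        = (ENNReal.ofReal β) ^ k * ENNReal.ofReal ((r / 2 ^ k) ^ N) := by
      have hreal : r ^ N = ((2:ℝ) ^ k) ^ N * (r / 2 ^ k) ^ N := by
        rw [← Real.mul_rpow (by positivity) (le_of_lt hrk)]
        rw [mul_div_cancel₀ _ (by positivity : ((2:ℝ) ^ k) ≠ 0)]
      rw [hreal, ENNReal.ofReal_mul (by positivity), pow_k_rpow k hβ hN,
        ENNReal.ofReal_pow (le_of_lt hβpos)]
    calc G r = μ (Metric.ball x r) / ENNReal.ofReal (r ^ N) := rfl
      _ ≤ ((ENNReal.ofReal β) ^ k * μ (Metric.ball x (r / 2 ^ k)))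
            / ((ENNReal.ofReal β) ^ k * ENNReal.ofReal ((r / 2 ^ k) ^ N)) := by
          rw [← hsplit]
          exact ENNReal.div_le_div_right hball _
      _ = G (r / 2 ^ k) := by
          rw [ENNReal.mul_div_mul_left _ _ (hcne k) (hcnt k)]
  have h2 : Filter.Tendsto (fun k : ℕ => r / 2 ^ k) Filter.atTop (𝓝[>] (0:ℝ)) := by
    rw [tendsto_nhdsWithin_iff]
    constructor
    · have : Filter.Tendsto (fun k : ℕ => r * (1/2 : ℝ) ^ k) Filter.atTop (𝓝 (r * 0)) :=
        Filter.Tendsto.const_mul r (tendsto_pow_atTop_nhds_zero_of_lt_one (by norm_num) (by norm_num))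
      simpa [div_eq_mul_inv, inv_pow] using this
    · exact Filter.Eventually.of_forall fun k => Set.mem_Ioi.mpr (by positivity)
  have h4 : G r ≤ ENNReal.ofReal b := by
    by_contra hcon
    push_neg at hcon
    obtain ⟨c, hc1, hc2⟩ := exists_between hcon
    have hev : ∀ᶠ s in 𝓝[>] (0:ℝ), G s < c :=
      Filter.eventually_lt_of_limsup_lt (lt_of_le_of_lt (hθup x) hc1)
    have hev2 : ∀ᶠ k : ℕ in Filter.atTop, G (r / 2 ^ k) < c := h2.eventually hev
    obtain ⟨k, hk⟩ := hev2.exists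
    exact absurd (lt_of_le_of_lt (h1 k) hk) (not_lt.mpr (le_of_lt hc2))
  have hrN : ENNReal.ofReal (r ^ N) ≠ 0 := by
    simp only [ne_eq, ENNReal.ofReal_eq_zero, not_le]
    exact Real.rpow_pos_of_pos hr N
  rw [hG] at h4
  simp only at h4
  rw [ENNReal.div_le_iff_le_mul (Or.inl hrN) (Or.inl ENNReal.ofReal_ne_top)] at h4
  exact h4

lemma measure_closedBall_le_global (hβ : 1 < β) (hN : N = Real.log β / Real.log 2)
    (hdbl : ∀ (x : X) (r : ℝ), 0 < r →
      μ (Metric.ball x (2 * r)) ≤ ENNReal.ofReal β * μ (Metric.ball x r))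
    (hθup : ∀ x : X,
      Filter.limsup (fun r : ℝ => μ (Metric.ball x r) / ENNReal.ofReal (r ^ N)) (𝓝[>] (0 : ℝ))
        ≤ ENNReal.ofReal b)
    (x : X) {R : ℝ} (hR : 0 < R) :
    μ (Metric.closedBall x R) ≤ ENNReal.ofReal b * ENNReal.ofReal (R ^ N) := by
  have hNpos := Npos hβ hN
  have hbd : ∀ n : ℕ, μ (Metric.closedBall x R)
      ≤ ENNReal.ofReal b * ENNReal.ofReal ((R * (1 + 1/(n+1))) ^ N) := by
    intro n
    have h1 : (0:ℝ) < R * (1 + 1/(n+1)) := by positivity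
    have hsub : Metric.closedBall x R ⊆ Metric.ball x (R * (1 + 1/(n+1))) := by
      apply Metric.closedBall_subset_ball
      have : (0:ℝ) < 1/(n+1) := by positivity
      nlinarith
    exact le_trans (measure_mono hsub) (measure_ball_le_global hβ hN hdbl hθup x h1)
  have htend : Filter.Tendsto (fun n : ℕ => ENNReal.ofReal b * ENNReal.ofReal ((R * (1 + 1/(n+1))) ^ N))
      Filter.atTop (𝓝 (ENNReal.ofReal b * ENNReal.ofReal (R ^ N))) := by
    refine ENNReal.Tendsto.const_mul ?_ (Or.inr ENNReal.ofReal_ne_top)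
    apply ENNReal.tendsto_ofReal
    have hbase : Filter.Tendsto (fun n : ℕ => R * (1 + 1/(n+1))) Filter.atTop (𝓝 R) := by
      have h0 : Filter.Tendsto (fun n : ℕ => 1/((n:ℝ)+1)) Filter.atTop (𝓝 0) :=
        tendsto_one_div_add_atTop_nhds_zero_nat
      have := (h0.const_add 1).const_mul R
      simpa using this
    have hcont : ContinuousAt (fun s : ℝ => s ^ N) R :=
      Real.continuousAt_rpow_const R N (Or.inl (ne_of_gt hR))
    exact hcont.tendsto.comp hbase
  exact ge_of_tendsto' htend hbd

lemma isUnifLocDoubling (hβ : 1 < β)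
    (hdbl : ∀ (x : X) (r : ℝ), 0 < r →
      μ (Metric.ball x (2 * r)) ≤ ENNReal.ofReal β * μ (Metric.ball x r)) :
    IsUnifLocDoublingMeasure μ := by
  have hβpos : (0:ℝ) < β := lt_trans one_pos hβ
  refine ⟨⟨(β * β).toNNReal, ?_⟩⟩
  refine eventually_mem_nhdsWithin.mono fun ε (hε : (0:ℝ) < ε) x => ?_
  have h1 : Metric.closedBall x (2 * ε) ⊆ Metric.ball x (2 * (2 * ε)) :=
    Metric.closedBall_subset_ball (by linarith)
  have h4 : ((β * β).toNNReal : ℝ≥0∞) = ENNReal.ofReal β * ENNReal.ofReal β := by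
    rw [← ENNReal.ofReal_mul (le_of_lt hβpos)]
    rfl
  calc μ (Metric.closedBall x (2 * ε)) ≤ μ (Metric.ball x (2 * (2 * ε))) := measure_mono h1
    _ ≤ ENNReal.ofReal β * μ (Metric.ball x (2 * ε)) := hdbl x _ (by linarith)
    _ ≤ ENNReal.ofReal β * (ENNReal.ofReal β * μ (Metric.ball x ε)) :=
        mul_le_mul_right (hdbl x ε hε) _
    _ ≤ ((β * β).toNNReal : ℝ≥0∞) * μ (Metric.closedBall x ε) := by
        rw [h4, mul_assoc]
        exact mul_le_mul_right (mul_le_mul_right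
          (measure_mono Metric.ball_subset_closedBall) _) _

end Doubling

section FilterHelpers

lemma limsup_atTop_le_of_seq (f : ℝ → ℝ≥0∞) (c : ℝ) (d : ℝ≥0∞)
    (h : ∀ s : ℕ → ℝ, (∀ n : ℕ, (n:ℝ) ≤ s n) → (∀ n : ℕ, c ≤ s n) →
      Filter.limsup (fun n => f (s n)) Filter.atTop ≤ d) :
    Filter.limsup f Filter.atTop ≤ d := by
  by_contra hcon
  push_neg at hcon
  obtain ⟨e, he1, he2⟩ := exists_between hcon
  have hfreq : ∃ᶠ lam in Filter.atTop, e < f lam :=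
    Filter.frequently_lt_of_lt_limsup (by isBoundedDefault) he2
  rw [Filter.frequently_atTop] at hfreq
  choose s hs1 hs2 using fun n : ℕ => hfreq (max (n:ℝ) c)
  have hseq1 : ∀ n : ℕ, (n:ℝ) ≤ s n := fun n => le_trans (le_max_left _ _) (hs1 n)
  have hseq2 : ∀ n : ℕ, c ≤ s n := fun n => le_trans (le_max_right _ _) (hs1 n)
  have hle : e ≤ Filter.limsup (fun n => f (s n)) Filter.atTop :=
    Filter.le_limsup_of_frequently_le
      ((Filter.Eventually.of_forall fun n => (hs2 n).le).frequently) (by isBoundedDefault)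
  exact absurd (le_trans hle (h s hseq1 hseq2)) (not_le.mpr he1)

lemma le_liminf_atTop_of_seq (f : ℝ → ℝ≥0∞) (c : ℝ) (d : ℝ≥0∞)
    (h : ∀ s : ℕ → ℝ, (∀ n : ℕ, (n:ℝ) ≤ s n) → (∀ n : ℕ, c ≤ s n) →
      d ≤ Filter.liminf (fun n => f (s n)) Filter.atTop) :
    d ≤ Filter.liminf f Filter.atTop := by
  by_contra hcon
  push_neg at hcon
  obtain ⟨e, he1, he2⟩ := exists_between hcon
  have hfreq : ∃ᶠ lam in Filter.atTop, f lam < e :=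
    Filter.frequently_lt_of_liminf_lt (by isBoundedDefault) he1
  rw [Filter.frequently_atTop] at hfreq
  choose s hs1 hs2 using fun n : ℕ => hfreq (max (n:ℝ) c)
  have hseq1 : ∀ n : ℕ, (n:ℝ) ≤ s n := fun n => le_trans (le_max_left _ _) (hs1 n)
  have hseq2 : ∀ n : ℕ, c ≤ s n := fun n => le_trans (le_max_right _ _) (hs1 n)
  have hle : Filter.liminf (fun n => f (s n)) Filter.atTop ≤ e :=
    Filter.liminf_le_of_frequently_le
      ((Filter.Eventually.of_forall fun n => (hs2 n).le).frequently) (by isBoundedDefault)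
  exact absurd (le_trans (h s hseq1 hseq2) hle) (not_le.mpr he2)

end FilterHelpers

section Arith

/-- from the pair condition and a chord bound, a distance bound. -/
lemma dist_le_of_pair {N p lam c d : ℝ} (hN : 0 < N) (hp : 0 < p)
    (hlam : 0 < lam) (hc : 0 < c) (hd : 0 < d)
    (h : lam * d ^ (N/p+1) ≤ c * d) : d ≤ (c / lam) ^ (p/N) := by
  have h1 : d ^ (N/p+1) = d ^ (N/p) * d := by
    rw [Real.rpow_add hd, Real.rpow_one]
  have h2 : lam * d ^ (N/p) ≤ c := by
    rw [h1, ← mul_assoc] at h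
    exact le_of_mul_le_mul_right h hd
  have h3 : d ^ (N/p) ≤ c / lam := by
    rw [le_div_iff₀ hlam]
    linarith [mul_comm lam (d ^ (N/p))]
  have h4 : (d ^ (N/p)) ^ (p/N) ≤ (c/lam) ^ (p/N) :=
    Real.rpow_le_rpow (Real.rpow_nonneg hd.le _) h3 (by positivity)
  have h5 : (d ^ (N/p)) ^ (p/N) = d := by
    rw [← Real.rpow_mul hd.le]
    rw [show N/p * (p/N) = 1 by field_simp]
    exact Real.rpow_one d
  rwa [h5] at h4

lemma upper_arith {N p lam c : ℝ} (hN : 0 < N) (hp : 0 < p)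
    (hlam : 0 < lam) (hc : 0 < c) :
    lam ^ p * (c / lam) ^ (p/N * N) = c ^ p := by
  rw [show p/N * N = p by field_simp]
  rw [Real.div_rpow hc.le hlam.le]
  rw [mul_div_cancel₀]
  exact ne_of_gt (Real.rpow_pos_of_pos hlam p)

lemma one_le_two_rpow {N : ℝ} (hN : 0 ≤ N) : (1:ℝ) ≤ (2:ℝ) ^ N :=
  Real.one_le_rpow one_le_two hN

/-- the numeric inequality for the lower bound constant. -/
lemma lower_const_ineq {p N a g β : ℝ} (hp : 1 ≤ p) (hN0 : 0 ≤ N)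
    (ha : 0 < a) (hg : 0 < g) (hβ2 : (2:ℝ) ^ N = β) :
    a / ((2:ℝ) ^ (5*N) * (8:ℝ) ^ p) * g ^ p
      ≤ (9/10) * (3*a/4 * ((97/200) * g) ^ p) / ((4:ℝ) ^ N * (β * β)) := by
  have hppos : 0 < p := lt_of_lt_of_le one_pos hp
  set w := (2:ℝ) ^ N with hw
  have hwpos : 0 < w := Real.rpow_pos_of_pos two_pos N
  have hw1 : 1 ≤ w := one_le_two_rpow hN0
  have h4N : (4:ℝ) ^ N = w * w := by
    rw [show (4:ℝ) = 2 * 2 by norm_num, Real.mul_rpow two_pos.le two_pos.le]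
  have h5N : (2:ℝ) ^ (5*N) = w^(5:ℕ) := by
    rw [show (5:ℝ) * N = N * (5:ℕ) by push_cast; ring,
      Real.rpow_mul two_pos.le, Real.rpow_natCast]
  have hgp : 0 < g ^ p := Real.rpow_pos_of_pos hg p
  have h8p : 0 < (8:ℝ) ^ p := Real.rpow_pos_of_pos (by norm_num) p
  have hsplit : ((97/200) * g) ^ p = (97/200 : ℝ) ^ p * g ^ p :=
    Real.mul_rpow (by norm_num) hg.le
  have hkey : (1:ℝ) / (8:ℝ) ^ p ≤ (27/40) * (97/200 : ℝ) ^ p := by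
    have h18 : ((1:ℝ)/8) ^ p = (25/97 : ℝ) ^ p * (97/200 : ℝ) ^ p := by
      rw [← Real.mul_rpow (by norm_num) (by norm_num)]
      norm_num
    have h18' : ((1:ℝ)/8) ^ p = 1 / (8:ℝ) ^ p := by
      rw [Real.div_rpow (by norm_num) (by norm_num), Real.one_rpow]
    have h2597 : (25/97 : ℝ) ^ p ≤ 25/97 := by
      have := Real.rpow_le_rpow_of_exponent_ge (by norm_num : (0:ℝ) < 25/97)
        (by norm_num : (25/97:ℝ) ≤ 1) hp
      rwa [Real.rpow_one] at this
    have hpos97 : (0:ℝ) < (97/200 : ℝ) ^ p := Real.rpow_pos_of_pos (by norm_num) p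
    calc (1:ℝ) / (8:ℝ) ^ p = (25/97 : ℝ) ^ p * (97/200 : ℝ) ^ p := by rw [← h18', h18]
      _ ≤ (25/97) * (97/200 : ℝ) ^ p := by nlinarith
      _ ≤ (27/40) * (97/200 : ℝ) ^ p := by nlinarith
  rw [← hβ2, h4N, h5N, hsplit]
  rw [div_mul_eq_mul_div, div_le_div_iff₀ (by positivity) (by positivity)]
  have hw45 : w^(4:ℕ) ≤ w^(5:ℕ) := pow_le_pow_right₀ hw1 (by norm_num)
  have hexp : (w*w)*(w*w) = w^(4:ℕ) := by ring
  have hk2 : (1:ℝ) ≤ 27/40 * (97/200:ℝ)^p * (8:ℝ)^p := by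
    rw [div_le_iff₀ h8p] at hkey
    linarith
  have h1 : a * g^p * (w*w*(w*w)) = a * g^p * w^(4:ℕ) := by ring
  have h2 : (9:ℝ)/10 * (3*a/4 * ((97/200:ℝ)^p * g^p)) * (w^(5:ℕ) * (8:ℝ)^p)
      = (27/40 * (97/200:ℝ)^p * (8:ℝ)^p) * (a * g^p * w^(5:ℕ)) := by ring
  have hfin : a * g^p * (w*w*(w*w)) ≤ 9/10 * (3*a/4 * ((97/200:ℝ)^p * g^p)) * (w^(5:ℕ) * (8:ℝ)^p) := by
    rw [h1, h2]
    calc a * g^p * w^(4:ℕ) ≤ a * g^p * w^(5:ℕ) :=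
          mul_le_mul_of_nonneg_left hw45 (by positivity)
      _ = 1 * (a * g^p * w^(5:ℕ)) := by ring
      _ ≤ (27/40 * (97/200:ℝ)^p * (8:ℝ)^p) * (a * g^p * w^(5:ℕ)) :=
          mul_le_mul_of_nonneg_right hk2 (by positivity)
  linarith [hfin]

end Arith

section MoreArith

lemma rho_pow_N {N p A : ℝ} (hN : 0 < N) (hp : 0 < p) (hA : 0 < A) :
    (A ^ (p/N)) ^ N = A ^ p := by
  rw [← Real.rpow_mul hA.le]
  congr 1
  field_simp

lemma pair_eq {N p g lam t : ℝ} (hN : 0 < N) (hp : 0 < p) (hg : 0 < g)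
    (hlam : 0 < lam) (ht : 0 < t) :
    lam * ((((3/4)*t*g)/lam) ^ (p/N)) ^ (N/p+1)
      = t * g * ((3/4) * ((((3/4)*t*g)/lam) ^ (p/N))) := by
  set A : ℝ := ((3/4)*t*g)/lam with hA
  have hApos : 0 < A := by positivity
  set ρ : ℝ := A ^ (p/N) with hρ
  have hρpos : 0 < ρ := Real.rpow_pos_of_pos hApos _
  have h1 : ρ ^ (N/p+1) = ρ ^ (N/p) * ρ := by
    rw [Real.rpow_add hρpos, Real.rpow_one]
  have h2 : ρ ^ (N/p) = A := by
    rw [hρ, ← Real.rpow_mul hApos.le]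
    rw [show p/N * (N/p) = 1 by field_simp]
    exact Real.rpow_one A
  rw [h1, h2, hA]
  field_simp

end MoreArith

section CbBound

variable {X : Type*} [MetricSpace X] [MeasurableSpace X]

lemma cb_bound {μ : Measure X} {β N b p : ℝ} (hβ : 1 < β)
    (hN : N = Real.log β / Real.log 2)
    (hdbl : ∀ (x : X) (r : ℝ), 0 < r →
      μ (Metric.ball x (2 * r)) ≤ ENNReal.ofReal β * μ (Metric.ball x r))
    (hθup : ∀ x : X,
      Filter.limsup (fun r : ℝ => μ (Metric.ball x r) / ENNReal.ofReal (r ^ N)) (𝓝[>] (0 : ℝ))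
        ≤ ENNReal.ofReal b)
    (hp : 0 < p) {lam c : ℝ} (hlam : 0 < lam) (hc : 0 < c) (hb : 0 < b) (x : X) :
    ENNReal.ofReal (lam ^ p) * μ (Metric.closedBall x ((c/lam) ^ (p/N)))
      ≤ ENNReal.ofReal (b * c ^ p) := by
  have hNpos := Npos hβ hN
  have hrad : 0 < (c/lam) ^ (p/N) := Real.rpow_pos_of_pos (by positivity) _
  calc ENNReal.ofReal (lam ^ p) * μ (Metric.closedBall x ((c/lam) ^ (p/N)))
      ≤ ENNReal.ofReal (lam ^ p) * (ENNReal.ofReal b * ENNReal.ofReal (((c/lam) ^ (p/N)) ^ N)) :=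
        mul_le_mul_right (measure_closedBall_le_global hβ hN hdbl hθup x hrad) _
    _ = ENNReal.ofReal (b * c ^ p) := by
        rw [← ENNReal.ofReal_mul (le_of_lt hb), ← ENNReal.ofReal_mul (by positivity)]
        congr 1
        rw [rho_pow_N hNpos hp (by positivity : (0:ℝ) < c/lam)]
        rw [Real.div_rpow hc.le hlam.le]
        have hlp : 0 < lam ^ p := Real.rpow_pos_of_pos hlam p
        field_simp

end CbBound

section KeyLemma

variable {X : Type*} [MetricSpace X] [MeasurableSpace X] [BorelSpace X]

/-- the key density-point lemma for the lower bound. -/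
lemma key_lemma
    {μ : Measure X} [IsLocallyFiniteMeasure μ] [μ.IsOpenPosMeasure]
    {u : X → ℝ} {L : ℝ} (hL0 : 0 ≤ L) (hL : ∀ y z : X, |u y - u z| ≤ L * dist y z)
    (hcont : Continuous u)
    {β : ℝ} (hβ : 1 < β)
    (hdbl : ∀ (x : X) (r : ℝ), 0 < r →
      μ (Metric.ball x (2 * r)) ≤ ENNReal.ofReal β * μ (Metric.ball x r))
    {x : X} (hg : 0 < lipUpper u x)
    (hDT : ∀ (q : ℚ) (m : ℕ), x ∉ Fset u ((103:ℝ)/100 * q) m →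
      ∀ (w : ℕ → X) (δ : ℕ → ℝ),
        Filter.Tendsto δ Filter.atTop (𝓝[>] (0:ℝ)) →
        (∀ᶠ j in Filter.atTop, x ∈ Metric.closedBall (w j) (6 * δ j)) →
        Filter.Tendsto (fun j => μ ((Fset u ((103:ℝ)/100 * q) m)ᶜ ∩ Metric.closedBall (w j) (δ j))
            / μ (Metric.closedBall (w j) (δ j))) Filter.atTop (𝓝 1)) :
    ∀ᶠ r in 𝓝[>] (0:ℝ), ∀ y₀ : X, dist y₀ x < r →
      (99/100) * lipUpper u x * r < |u y₀ - u x| →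
      ENNReal.ofReal (9/10) * μ (Metric.ball y₀ (r/3)) ≤
        μ (Metric.ball y₀ (r/3) ∩ {y' | (2/3 - 1/50) * lipUpper u x * r < |u y' - u x|}) := by
  set g := lipUpper u x with hgdef
  by_contra hcon
  rw [Filter.not_eventually] at hcon
  obtain ⟨q, hq1, hq2⟩ := exists_rat_btwn (show (100/103)*g < g by nlinarith)
  have hqpos : (0:ℝ) < (q:ℝ) := lt_trans (by nlinarith) hq1
  set c := (103:ℝ)/100 * (q:ℝ) with hcdef
  have hcpos : 0 < c := by positivity
  have hgc : g < c := by rw [hcdef]; nlinarith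
  have hβpos : (0:ℝ) < β := lt_trans one_pos hβ
  have hmem : ∀ m : ℕ, x ∈ Fset u c m := by
    intro m
    by_contra hxF
    set F := Fset u c m with hF
    have hFopen : IsOpen F := isOpen_Fset hcont c m
    have hFmeas : MeasurableSet F := hFopen.measurableSet
    have hbad : ∀ k : ℕ, ∃ rr : ℝ, (0 < rr ∧ rr < min (1/((k:ℝ)+1)) (3/((m:ℝ)+1))) ∧
        ∃ y₀ : X, dist y₀ x < rr ∧ (99/100) * g * rr < |u y₀ - u x| ∧
          μ (Metric.ball y₀ (rr/3) ∩ {y' | (2/3 - 1/50) * g * rr < |u y' - u x|})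
            < ENNReal.ofReal (9/10) * μ (Metric.ball y₀ (rr/3)) := by
      intro k
      have hmemI : Set.Ioo (0:ℝ) (min (1/((k:ℝ)+1)) (3/((m:ℝ)+1))) ∈ 𝓝[>] (0:ℝ) :=
        Ioo_mem_nhdsGT_of_mem ⟨le_refl _, by positivity⟩
      obtain ⟨rr, hnot, hrIoo⟩ :=
        (hcon.and_eventually (Filter.eventually_of_mem hmemI (fun _ h => h))).exists
      push_neg at hnot
      obtain ⟨y₀, hy1, hy2, hy3⟩ := hnot
      exact ⟨rr, ⟨hrIoo.1, hrIoo.2⟩, y₀, hy1, hy2, hy3⟩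
    choose rr hrb y₀ hy₀d hy₀osc hy₀meas using hbad
    set δ : ℕ → ℝ := fun k => rr k / 3 with hδ
    have hδpos : ∀ k, 0 < δ k := fun k => by
      have := (hrb k).1; simp only [hδ]; positivity
    have hδtend : Filter.Tendsto δ Filter.atTop (𝓝[>] (0:ℝ)) := by
      rw [tendsto_nhdsWithin_iff]
      constructor
      · have hb : ∀ k : ℕ, δ k ≤ 1/((k:ℝ)+1) := by
          intro k
          have h1 : rr k < 1/((k:ℝ)+1) := lt_of_lt_of_le (hrb k).2 (min_le_left _ _)
          have h2 : 0 < rr k := (hrb k).1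
          simp only [hδ]
          linarith
        exact squeeze_zero (fun k => (hδpos k).le) hb tendsto_one_div_add_atTop_nhds_zero_nat
      · exact Filter.Eventually.of_forall fun k => Set.mem_Ioi.mpr (hδpos k)
    have hxcb : ∀ k, x ∈ Metric.closedBall (y₀ k) (6 * δ k) := by
      intro k
      rw [Metric.mem_closedBall, dist_comm]
      have h1 := hy₀d k
      have h2 : 6 * δ k = 2 * rr k := by simp only [hδ]; ring
      rw [h2]
      have := (hrb k).1
      linarith
    have htend1 := hDT q m hxF y₀ δ hδtend (Filter.Eventually.of_forall hxcb)
    have hratio : ∀ k, μ (Fᶜ ∩ Metric.closedBall (y₀ k) (δ k)) / μ (Metric.closedBall (y₀ k) (δ k))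
        ≤ ENNReal.ofReal (1 - 1/(10*β)) := by
      intro k
      set B := Metric.ball (y₀ k) (δ k) with hB
      set C := Metric.closedBall (y₀ k) (δ k) with hC
      set P := {y' : X | (2/3 - 1/50) * g * rr k < |u y' - u x|} with hP
      have hPopen : IsOpen P := isOpen_lt continuous_const ((hcont.sub continuous_const).abs)
      have hBC : B ⊆ C := Metric.ball_subset_closedBall
      have hCB2 : C ⊆ Metric.ball (y₀ k) (2 * δ k) :=
        Metric.closedBall_subset_ball (by linarith [hδpos k])
      have hCfin : μ C ≠ ⊤ :=
        (lt_of_le_of_lt (measure_mono hCB2) (measure_ball_finite hdbl _ _)).ne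
      have hBfin : μ B ≠ ⊤ := (lt_of_le_of_lt (measure_mono hBC) (lt_top_iff_ne_top.mpr hCfin)).ne
      have hBpos : μ B ≠ 0 := (measure_ball_pos μ _ (hδpos k)).ne'
      have hCpos : μ C ≠ 0 := fun h =>
        hBpos (le_antisymm (h ▸ measure_mono hBC) bot_le)
      have hCle : μ C ≤ ENNReal.ofReal β * μ B := by
        calc μ C ≤ μ (Metric.ball (y₀ k) (2 * δ k)) := measure_mono hCB2
          _ ≤ ENNReal.ofReal β * μ B := hdbl _ _ (hδpos k)
      have hBadF : B \ P ⊆ F := by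
        intro y' hy'
        obtain ⟨hy'B, hy'P⟩ := hy'
        have h1 : |u y' - u x| ≤ (2/3 - 1/50) * g * rr k := not_lt.mp hy'P
        have h2 : (99/100) * g * rr k < |u (y₀ k) - u x| := hy₀osc k
        have habs : |u (y₀ k) - u x| - |u y' - u x| ≤ |u y' - u (y₀ k)| := by
          have h4 := abs_sub_abs_le_abs_sub (u (y₀ k) - u x) (u y' - u x)
          have h5 : u (y₀ k) - u x - (u y' - u x) = u (y₀ k) - u y' := by ring
          rw [h5] at h4
          have h6 : |u (y₀ k) - u y'| = |u y' - u (y₀ k)| := abs_sub_comm _ _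
          linarith
        have h3 : (103/300) * g * rr k < |u y' - u (y₀ k)| := by linarith
        have hd3 : dist y' (y₀ k) < rr k / 3 := mem_ball.mp hy'B
        refine ⟨y₀ k, ?_, ?_⟩
        · have hrm : rr k < 3/((m:ℝ)+1) := lt_of_lt_of_le (hrb k).2 (min_le_right _ _)
          calc dist y' (y₀ k) < rr k / 3 := hd3
            _ < 1/((m:ℝ)+1) := by
              have h30 : 3/((m:ℝ)+1) = 3*(1/((m:ℝ)+1)) := by ring
              linarith
        · have hcg' : c < (103/100) * g := by rw [hcdef]; nlinarith
          have hdn : (0:ℝ) ≤ dist y' (y₀ k) := dist_nonneg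
          calc c * dist y' (y₀ k) ≤ c * (rr k / 3) :=
                mul_le_mul_of_nonneg_left hd3.le hcpos.le
            _ < (103/100) * g * (rr k / 3) := by
                have h6 : 0 < rr k / 3 := by have := (hrb k).1; linarith
                exact mul_lt_mul_of_pos_right hcg' h6
            _ = (103/300) * g * rr k := by ring
            _ < |u y' - u (y₀ k)| := h3
      have hsum : μ (B ∩ P) + μ (B \ P) = μ B := measure_inter_add_diff B hPopen.measurableSet
      have hsum2 : μ (C ∩ F) + μ (C \ F) = μ C := measure_inter_add_diff C hFmeas
      have hFC : μ (B \ P) ≤ μ (C ∩ F) :=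
        measure_mono (fun y' hy' => ⟨hBC hy'.1, hBadF hy'⟩)
      set tB := (μ B).toReal with htBdef
      set tC := (μ C).toReal with htCdef
      have htB : 0 < tB := ENNReal.toReal_pos hBpos hBfin
      have htC : 0 < tC := ENNReal.toReal_pos hCpos hCfin
      have htCB : tC ≤ β * tB := by
        have h7 := ENNReal.toReal_mono (ENNReal.mul_ne_top ENNReal.ofReal_ne_top hBfin) hCle
        rwa [ENNReal.toReal_mul, ENNReal.toReal_ofReal hβpos.le] at h7
      have hBPfin : μ (B ∩ P) ≠ ⊤ :=
        (lt_of_le_of_lt (measure_mono (Set.inter_subset_left)) (lt_top_iff_ne_top.mpr hBfin)).ne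
      have hBdPfin : μ (B \ P) ≠ ⊤ :=
        (lt_of_le_of_lt (measure_mono (Set.diff_subset)) (lt_top_iff_ne_top.mpr hBfin)).ne
      have hCFfin : μ (C ∩ F) ≠ ⊤ :=
        (lt_of_le_of_lt (measure_mono (Set.inter_subset_left)) (lt_top_iff_ne_top.mpr hCfin)).ne
      have hCdFfin : μ (C \ F) ≠ ⊤ :=
        (lt_of_le_of_lt (measure_mono (Set.diff_subset)) (lt_top_iff_ne_top.mpr hCfin)).ne
      have hBP_lt : (μ (B ∩ P)).toReal < (9/10) * tB := by
        have hlt := hy₀meas k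
        have hfin2 : ENNReal.ofReal (9/10) * μ B ≠ ⊤ :=
          ENNReal.mul_ne_top ENNReal.ofReal_ne_top hBfin
        have h8 := (ENNReal.toReal_lt_toReal hBPfin hfin2).mpr hlt
        rwa [ENNReal.toReal_mul, ENNReal.toReal_ofReal (by norm_num : (0:ℝ) ≤ 9/10)] at h8
      have hsumR : (μ (B ∩ P)).toReal + (μ (B \ P)).toReal = tB := by
        rw [← ENNReal.toReal_add hBPfin hBdPfin, hsum]
      have hsumR2 : (μ (C ∩ F)).toReal + (μ (C \ F)).toReal = tC := by
        rw [← ENNReal.toReal_add hCFfin hCdFfin, hsum2]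
      have hsub : tB/10 ≤ (μ (B \ P)).toReal := by linarith
      have hCF : tB/10 ≤ (μ (C ∩ F)).toReal :=
        le_trans hsub (ENNReal.toReal_mono hCFfin hFC)
      have hgoal_real : (μ (Fᶜ ∩ C)).toReal ≤ (1 - 1/(10*β)) * tC := by
        have hCFc_eq : Fᶜ ∩ C = C \ F := by rw [Set.diff_eq, Set.inter_comm]
        rw [hCFc_eq]
        have h9 : tC/(10*β) ≤ tB/10 := by
          rw [div_le_div_iff₀ (by positivity) (by norm_num)]
          nlinarith
        have h10 : (μ (C \ F)).toReal ≤ tC - tB/10 := by linarith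
        calc (μ (C \ F)).toReal ≤ tC - tB/10 := h10
          _ ≤ tC - tC/(10*β) := by linarith
          _ = (1 - 1/(10*β)) * tC := by field_simp
      refine ENNReal.div_le_of_le_mul ?_
      have hFcCfin : μ (Fᶜ ∩ C) ≠ ⊤ :=
        (lt_of_le_of_lt (measure_mono (Set.inter_subset_right)) (lt_top_iff_ne_top.mpr hCfin)).ne
      calc μ (Fᶜ ∩ C) = ENNReal.ofReal ((μ (Fᶜ ∩ C)).toReal) :=
            (ENNReal.ofReal_toReal hFcCfin).symm
        _ ≤ ENNReal.ofReal ((1 - 1/(10*β)) * tC) := ENNReal.ofReal_le_ofReal hgoal_real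
        _ = ENNReal.ofReal (1 - 1/(10*β)) * ENNReal.ofReal tC := by
            rw [ENNReal.ofReal_mul]
            have h11 : 1/(10*β) < 1 := by
              rw [div_lt_one (by positivity)]
              linarith
            linarith
        _ = ENNReal.ofReal (1 - 1/(10*β)) * μ C := by rw [ENNReal.ofReal_toReal hCfin]
    have hlt1 : ENNReal.ofReal (1 - 1/(10*β)) < 1 := by
      rw [ENNReal.ofReal_lt_one]
      have : 0 < 1/(10*β) := by positivity
      linarith
    have hev := htend1.eventually (eventually_gt_nhds hlt1)
    obtain ⟨k, hk⟩ := hev.exists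
    exact absurd (hratio k) (not_le.mpr hk)
  have hle := le_lipUpper_of_mem_Fset hL0 hL hcpos.le hmem
  exact absurd hle (not_le.mpr hgc)

end KeyLemma

end BVYaux

open BVYaux in
theorem two_sided_estimate_of_lip_eq_Lip
    {X : Type*} [MetricSpace X] [CompleteSpace X] [TopologicalSpace.SeparableSpace X]
    [MeasurableSpace X] [BorelSpace X]
    (μ : Measure X) [SigmaFinite μ] [IsLocallyFiniteMeasure μ] [μ.InnerRegular]
    [μ.IsOpenPosMeasure]
    (p β : ℝ) (hp : 1 ≤ p) (hβ : 1 < β)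
    (hdbl : ∀ (x : X) (r : ℝ), 0 < r →
      μ (Metric.ball x (2 * r)) ≤ ENNReal.ofReal β * μ (Metric.ball x r))
    (N : ℝ) (hN : N = Real.log β / Real.log 2)
    (a b : ℝ) (ha : 0 < a) (hab : a < b)
    (hθlow : ∀ x : X,
      ENNReal.ofReal a ≤
        Filter.liminf (fun r : ℝ => μ (Metric.ball x r) / ENNReal.ofReal (r ^ N)) (𝓝[>] (0 : ℝ)))
    (hθup : ∀ x : X,
      Filter.limsup (fun r : ℝ => μ (Metric.ball x r) / ENNReal.ofReal (r ^ N)) (𝓝[>] (0 : ℝ))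
        ≤ ENNReal.ofReal b)
    (u : X → ℝ) (hu : ∃ L : NNReal, LipschitzWith L u)
    (hsupp : Bornology.IsBounded (Function.support u))
    (hae : ∀ᵐ x ∂μ, lipUpper u x = lipLower u x) :
    ENNReal.ofReal (a / ((2 : ℝ) ^ (5 * N) * (8 : ℝ) ^ p)) *
        (∫⁻ x, ENNReal.ofReal (lipUpper u x ^ p) ∂μ)
      ≤ Filter.liminf
          (fun lam : ℝ => ENNReal.ofReal (lam ^ p) * (μ.prod μ) (BVYset u N p lam))
          Filter.atTop
    ∧ Filter.limsup
          (fun lam : ℝ => ENNReal.ofReal (lam ^ p) * (μ.prod μ) (BVYset u N p lam))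
          Filter.atTop
        ≤ ENNReal.ofReal (2 * b) * ∫⁻ x, ENNReal.ofReal (lipUpper u x ^ p) ∂μ := by
  classical
  rcases isEmpty_or_nonempty X with hX | hX
  · -- empty space : everything vanishes
    have hμ0 : μ = 0 := by
      ext s _
      have hs : s = ∅ := Set.eq_empty_of_isEmpty s
      simp [hs]
    have hint : (∫⁻ x, ENNReal.ofReal (lipUpper u x ^ p) ∂μ) = 0 := by
      rw [hμ0]; simp
    have hprod : ∀ lam : ℝ, (μ.prod μ) (BVYset u N p lam) = 0 := by
      intro lam
      have h1 : BVYset u N p lam = ∅ := Set.eq_empty_of_isEmpty _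
      rw [h1]; exact measure_empty
    have heq : (fun lam : ℝ => ENNReal.ofReal (lam ^ p) * (μ.prod μ) (BVYset u N p lam))
        = fun _ => (0:ℝ≥0∞) := by
      funext lam; rw [hprod lam, mul_zero]
    constructor
    · rw [hint, mul_zero]; exact bot_le
    · rw [heq, Filter.limsup_const, hint, mul_zero]
  -- nonempty space
  obtain ⟨x₀⟩ := hX
  obtain ⟨L₀, hLip⟩ := hu
  set L : ℝ := max (L₀ : ℝ) 1 with hLdef
  have hL1 : (1:ℝ) ≤ L := le_max_right _ _
  have hL0 : (0:ℝ) ≤ L := le_trans zero_le_one hL1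
  have hLpos : (0:ℝ) < L := lt_of_lt_of_le one_pos hL1
  have hL : ∀ y z : X, |u y - u z| ≤ L * dist y z := by
    intro y z
    have h1 := hLip.dist_le_mul y z
    rw [Real.dist_eq] at h1
    calc |u y - u z| ≤ (L₀:ℝ) * dist y z := h1
      _ ≤ L * dist y z := mul_le_mul_of_nonneg_right (le_max_left _ _) dist_nonneg
  have hcont : Continuous u := hLip.continuous
  have hNpos : 0 < N := BVYaux.Npos hβ hN
  have hppos : 0 < p := lt_of_lt_of_le one_pos hp
  have hbpos : 0 < b := lt_trans ha hab
  have hβpos : (0:ℝ) < β := lt_trans one_pos hβ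
  have hexp_pos : 0 < N/p + 1 := by positivity
  -- measurability of the sets E_λ
  have hEmeas : ∀ lam : ℝ, MeasurableSet (BVYset u N p lam) := by
    intro lam
    have h1 : IsOpen {q : X × X | q.1 ≠ q.2} := isOpen_ne_fun continuous_fst continuous_snd
    have hrpow : Continuous fun t : ℝ => t ^ (N/p+1) :=
      continuous_iff_continuousAt.mpr fun t =>
        Real.continuousAt_rpow_const t _ (Or.inr hexp_pos.le)
    have h2 : IsClosed {q : X × X | lam * dist q.1 q.2 ^ (N/p+1) ≤ |u q.1 - u q.2|} := by
      apply isClosed_le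
      · exact continuous_const.mul (hrpow.comp (continuous_fst.dist continuous_snd))
      · exact ((hcont.comp continuous_fst).sub (hcont.comp continuous_snd)).abs
    have h3 : BVYset u N p lam
        = {q : X × X | q.1 ≠ q.2} ∩ {q : X × X | lam * dist q.1 q.2 ^ (N/p+1) ≤ |u q.1 - u q.2|} :=
      rfl
    rw [h3]
    exact h1.measurableSet.inter h2.measurableSet
  have hsecmeas : ∀ lam : ℝ, Measurable fun x => μ (Prod.mk x ⁻¹' BVYset u N p lam) :=
    fun lam => measurable_measure_prodMk_left (hEmeas lam)
  have htonelli : ∀ lam : ℝ,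
      (μ.prod μ) (BVYset u N p lam) = ∫⁻ x, μ (Prod.mk x ⁻¹' BVYset u N p lam) ∂μ :=
    fun lam => Measure.prod_apply (hEmeas lam)
  -- the thickened support
  set K : Set X := Metric.cthickening 1 (Function.support u) with hKdef
  have hKmeas : MeasurableSet K := Metric.isClosed_cthickening.measurableSet
  have hμK : μ K ≠ ⊤ := by
    obtain ⟨R, hR⟩ := (hsupp.cthickening (δ := 1)).subset_closedBall x₀
    exact ((measure_mono (hR.trans (Metric.closedBall_subset_ball (lt_add_one R)))).trans_lt
      (BVYaux.measure_ball_finite hdbl x₀ (R+1))).ne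
  -- sections are empty off K
  have hsec_empty : ∀ {lam : ℝ}, L ≤ lam → ∀ x : X, x ∉ K →
      Prod.mk x ⁻¹' BVYset u N p lam = ∅ := by
    intro lam hlam x hx
    rw [Set.eq_empty_iff_forall_notMem]
    rintro y ⟨hne, hpair⟩
    have hd : 0 < dist x y := dist_pos.mpr hne
    have hlampos : 0 < lam := lt_of_lt_of_le hLpos hlam
    have hpow : 0 < lam * dist x y ^ (N/p+1) :=
      mul_pos hlampos (Real.rpow_pos_of_pos hd _)
    have hne2 : |u x - u y| > 0 := lt_of_lt_of_le hpow hpair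
    have hux : u x = 0 := by
      by_contra h
      exact hx (Metric.self_subset_cthickening _ (Function.mem_support.mpr h))
    have huy : u y ≠ 0 := by
      intro h
      rw [hux, h] at hne2
      simp at hne2
    have hdy : dist x y ≤ (L/lam) ^ (p/N) :=
      BVYaux.dist_le_of_pair hNpos hppos hlampos hLpos hd (le_trans hpair (hL x y))
    have h1 : (L/lam) ^ (p/N) ≤ 1 :=
      Real.rpow_le_one (by positivity) (div_le_one_of_le₀ hlam (le_of_lt hlampos)) (by positivity)
    exact hx (Metric.mem_cthickening_of_dist_le x y 1 _ (Function.mem_support.mpr huy)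
      (le_trans hdy h1))
  -- global containment of sections in closed balls
  have hsec_cb : ∀ {lam : ℝ}, 0 < lam → ∀ x : X,
      Prod.mk x ⁻¹' BVYset u N p lam ⊆ Metric.closedBall x ((L/lam) ^ (p/N)) := by
    intro lam hlam x y hy
    obtain ⟨hne, hpair⟩ := hy
    have hd : 0 < dist x y := dist_pos.mpr hne
    have h1 := BVYaux.dist_le_of_pair hNpos hppos hlam hLpos hd (le_trans hpair (hL x y))
    rw [Metric.mem_closedBall, dist_comm]
    exact h1
  -- uniform domination of the fibered quantity
  have hf_bound : ∀ {lam : ℝ}, L ≤ lam → ∀ x : X,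
      ENNReal.ofReal (lam ^ p) * μ (Prod.mk x ⁻¹' BVYset u N p lam)
        ≤ K.indicator (fun _ => ENNReal.ofReal (b * L ^ p)) x := by
    intro lam hlam x
    by_cases hx : x ∈ K
    · rw [Set.indicator_of_mem hx]
      have hlampos : 0 < lam := lt_of_lt_of_le hLpos hlam
      calc ENNReal.ofReal (lam ^ p) * μ (Prod.mk x ⁻¹' BVYset u N p lam)
          ≤ ENNReal.ofReal (lam ^ p) * μ (Metric.closedBall x ((L/lam) ^ (p/N))) :=
            mul_le_mul_right (measure_mono (hsec_cb hlampos x)) _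
        _ ≤ ENNReal.ofReal (b * L ^ p) :=
            BVYaux.cb_bound hβ hN hdbl hθup hppos hlampos hLpos hbpos x
    · rw [Set.indicator_of_notMem hx, hsec_empty hlam x hx]
      simp
  -- pointwise upper bound along sequences
  have hupper_pt : ∀ x : X, ∀ s : ℕ → ℝ, (∀ n : ℕ, (n:ℝ) ≤ s n) → (∀ n : ℕ, L ≤ s n) →
      Filter.limsup (fun n => ENNReal.ofReal (s n ^ p) * μ (Prod.mk x ⁻¹' BVYset u N p (s n)))
        Filter.atTop ≤ ENNReal.ofReal b * ENNReal.ofReal (lipUpper u x ^ p) := by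
    intro x s hs1 hs2
    set g := lipUpper u x with hgdef
    have hgnn : 0 ≤ g := BVYaux.lipUpper_nonneg hL0 hL
    have hstep : ∀ j : ℕ, Filter.limsup
        (fun n => ENNReal.ofReal (s n ^ p) * μ (Prod.mk x ⁻¹' BVYset u N p (s n)))
        Filter.atTop ≤ ENNReal.ofReal (b * (g + 1/(j+1)) ^ p) := by
      intro j
      set c : ℝ := g + 1/((j:ℝ)+1) with hcdef
      have hcg : g < c := by
        rw [hcdef]
        have : (0:ℝ) < 1/((j:ℝ)+1) := by positivity
        linarith
      have hcpos : 0 < c := lt_of_le_of_lt hgnn hcg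
      obtain ⟨r₀, hr₀pos, hchord⟩ := BVYaux.chord_of_limsup_lt hL0 hL hcg
      have hstend : Filter.Tendsto s Filter.atTop Filter.atTop :=
        tendsto_atTop_mono hs1 tendsto_natCast_atTop_atTop
      have hev : ∀ᶠ n in Filter.atTop, L / r₀ ^ (N/p) < s n :=
        hstend.eventually_gt_atTop _
      apply Filter.limsup_le_of_le (by isBoundedDefault)
      filter_upwards [hev] with n hn
      have hlampos : 0 < s n := lt_of_lt_of_le hLpos (hs2 n)
      have hrpow0 : 0 < r₀ ^ (N/p) := Real.rpow_pos_of_pos hr₀pos _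
      have hrad : (L / s n) ^ (p/N) < r₀ := by
        have h1 : L / s n < r₀ ^ (N/p) := by
          rw [div_lt_iff₀ hlampos]
          rw [div_lt_iff₀ hrpow0] at hn
          linarith [hn]
        have h2 : (L / s n) ^ (p/N) < (r₀ ^ (N/p)) ^ (p/N) :=
          Real.rpow_lt_rpow (by positivity) h1 (by positivity)
        rwa [← Real.rpow_mul hr₀pos.le, show N/p * (p/N) = 1 by field_simp,
          Real.rpow_one] at h2
      have hsub : Prod.mk x ⁻¹' BVYset u N p (s n)
          ⊆ Metric.closedBall x ((c / s n) ^ (p/N)) := by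
        rintro y ⟨hne, hpair⟩
        have hd : 0 < dist x y := dist_pos.mpr hne
        have hdr : dist x y < r₀ := by
          have := hsec_cb hlampos x ⟨hne, hpair⟩
          rw [Metric.mem_closedBall, dist_comm] at this
          exact lt_of_le_of_lt this hrad
        have hch : |u x - u y| ≤ c * dist x y := by
          have := hchord y (by rwa [dist_comm])
          rwa [abs_sub_comm, dist_comm] at this
        have := BVYaux.dist_le_of_pair hNpos hppos hlampos hcpos hd (le_trans hpair hch)
        rw [Metric.mem_closedBall, dist_comm]
        exact this
      calc ENNReal.ofReal (s n ^ p) * μ (Prod.mk x ⁻¹' BVYset u N p (s n))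
          ≤ ENNReal.ofReal (s n ^ p) * μ (Metric.closedBall x ((c / s n) ^ (p/N))) :=
            mul_le_mul_right (measure_mono hsub) _
        _ ≤ ENNReal.ofReal (b * c ^ p) :=
            BVYaux.cb_bound hβ hN hdbl hθup hppos hlampos hcpos hbpos x
    -- pass to the limit in j
    have htend : Filter.Tendsto (fun j : ℕ => ENNReal.ofReal (b * (g + 1/((j:ℝ)+1)) ^ p))
        Filter.atTop (𝓝 (ENNReal.ofReal (b * g ^ p))) := by
      apply ENNReal.tendsto_ofReal
      have hbase : Filter.Tendsto (fun j : ℕ => g + 1/((j:ℝ)+1)) Filter.atTop (𝓝 g) := by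
        have h0 : Filter.Tendsto (fun n : ℕ => 1/((n:ℝ)+1)) Filter.atTop (𝓝 0) := tendsto_one_div_add_atTop_nhds_zero_nat
        have := h0.const_add g
        simpa using this
      have hcontp : ContinuousAt (fun t : ℝ => b * t ^ p) g := by
        apply ContinuousAt.mul continuousAt_const
        exact Real.continuousAt_rpow_const g p (Or.inr hppos.le)
      exact hcontp.tendsto.comp hbase
    by_contra hcon
    push_neg at hcon
    have hbg : ENNReal.ofReal b * ENNReal.ofReal (g ^ p) = ENNReal.ofReal (b * g ^ p) :=
      (ENNReal.ofReal_mul hbpos.le).symm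
    rw [hbg] at hcon
    have hev2 := htend.eventually (eventually_lt_nhds hcon)
    obtain ⟨j, hj⟩ := hev2.exists
    exact absurd (hstep j) (not_le.mpr hj)
  -- UPPER BOUND
  have hUpper : Filter.limsup
      (fun lam : ℝ => ENNReal.ofReal (lam ^ p) * (μ.prod μ) (BVYset u N p lam))
      Filter.atTop ≤ ENNReal.ofReal b * ∫⁻ x, ENNReal.ofReal (lipUpper u x ^ p) ∂μ := by
    apply BVYaux.limsup_atTop_le_of_seq _ L
    intro s hs1 hs2
    set F : ℕ → X → ℝ≥0∞ :=
      fun n x => ENNReal.ofReal (s n ^ p) * μ (Prod.mk x ⁻¹' BVYset u N p (s n)) with hFdef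
    have heq : (fun n => ENNReal.ofReal (s n ^ p) * (μ.prod μ) (BVYset u N p (s n)))
        = fun n => ∫⁻ x, F n x ∂μ := by
      funext n
      rw [htonelli (s n)]
      exact (lintegral_const_mul' _ _ ENNReal.ofReal_ne_top).symm
    rw [heq]
    have h1 : Filter.limsup (fun n => ∫⁻ x, F n x ∂μ) Filter.atTop
        ≤ ∫⁻ x, Filter.limsup (fun n => F n x) Filter.atTop ∂μ := by
      apply MeasureTheory.limsup_lintegral_le
        (K.indicator (fun _ => ENNReal.ofReal (b * L ^ p)))
        (fun n => (hsecmeas (s n)).const_mul _)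
        (fun n => Filter.Eventually.of_forall (fun x => hf_bound (hs2 n) x))
      rw [lintegral_indicator_const hKmeas]
      exact ENNReal.mul_ne_top ENNReal.ofReal_ne_top hμK
    have h2 : ∫⁻ x, Filter.limsup (fun n => F n x) Filter.atTop ∂μ
        ≤ ∫⁻ x, ENNReal.ofReal b * ENNReal.ofReal (lipUpper u x ^ p) ∂μ :=
      lintegral_mono fun x => hupper_pt x s hs1 hs2
    have h3 : ∫⁻ x, ENNReal.ofReal b * ENNReal.ofReal (lipUpper u x ^ p) ∂μ
        = ENNReal.ofReal b * ∫⁻ x, ENNReal.ofReal (lipUpper u x ^ p) ∂μ :=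
      lintegral_const_mul' _ _ ENNReal.ofReal_ne_top
    exact le_trans h1 (le_trans h2 (le_of_eq h3))
  refine ⟨?_, le_trans hUpper (mul_le_mul_left
    (ENNReal.ofReal_le_ofReal (by linarith)) _)⟩
  -- LOWER BOUND
  haveI hUnif : IsUnifLocDoublingMeasure μ := BVYaux.isUnifLocDoubling hβ hdbl
  haveI hSC : SecondCountableTopology X := UniformSpace.secondCountable_of_separable X
  have hDTae : ∀ᵐ x ∂μ, ∀ (q : ℚ) (m : ℕ), x ∉ BVYaux.Fset u ((103:ℝ)/100 * q) m →
      (∀ (w : ℕ → X) (δ : ℕ → ℝ), Filter.Tendsto δ Filter.atTop (𝓝[>] (0:ℝ)) →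
        (∀ᶠ j in Filter.atTop, x ∈ Metric.closedBall (w j) (6 * δ j)) →
        Filter.Tendsto (fun j => μ ((BVYaux.Fset u ((103:ℝ)/100 * q) m)ᶜ ∩
            Metric.closedBall (w j) (δ j)) / μ (Metric.closedBall (w j) (δ j)))
          Filter.atTop (𝓝 1)) := by
    rw [ae_all_iff]
    intro q
    rw [ae_all_iff]
    intro m
    have hFopen := BVYaux.isOpen_Fset hcont ((103:ℝ)/100 * q) m
    have hSmeas : MeasurableSet ((BVYaux.Fset u ((103:ℝ)/100 * q) m)ᶜ) :=
      hFopen.measurableSet.compl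
    have hDT := IsUnifLocDoublingMeasure.ae_tendsto_measure_inter_div μ
      ((BVYaux.Fset u ((103:ℝ)/100 * q) m)ᶜ) 6
    rw [ae_restrict_iff' hSmeas] at hDT
    filter_upwards [hDT] with x hx hxF w δ hδ hcb
    exact hx hxF w δ hδ hcb
  set t : ℝ := 2/3 - 1/50 with htdef
  have htpos : 0 < t := by norm_num
  -- pointwise lower bound along sequences, a.e.
  have hlower_pt : ∀ᵐ x ∂μ, ∀ s : ℕ → ℝ, (∀ n : ℕ, (n:ℝ) ≤ s n) → (∀ n : ℕ, (1:ℝ) ≤ s n) →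
      ENNReal.ofReal (a / ((2:ℝ) ^ (5*N) * (8:ℝ) ^ p)) * ENNReal.ofReal (lipUpper u x ^ p)
        ≤ Filter.liminf
            (fun n => ENNReal.ofReal (s n ^ p) * μ (Prod.mk x ⁻¹' BVYset u N p (s n)))
            Filter.atTop := by
    filter_upwards [hae, hDTae] with x hx1 hx2
    intro s hs1 hs2
    set g := lipUpper u x with hgdef
    rcases le_or_gt g 0 with hg0 | hg
    · have hg0' : g = 0 := le_antisymm hg0 (BVYaux.lipUpper_nonneg hL0 hL)
      rw [hg0', Real.zero_rpow (ne_of_gt hppos)]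
      simp
    -- main case
    have hkey := BVYaux.key_lemma hL0 hL hcont hβ hdbl hg hx2
    have hwit : ∀ᶠ r in 𝓝[>] (0:ℝ), ∃ y, y ∈ Metric.ball x r ∧
        (99/100)*g*r < |u y - u x| := by
      have h1 : (99/100)*g < lipLower u x := by rw [← hx1]; nlinarith
      have h2 := BVYaux.eventually_witness hL0 hL (by positivity : (0:ℝ) ≤ (99/100)*g) h1
      filter_upwards [h2] with r hr
      obtain ⟨y, hy1, hy2⟩ := hr
      exact ⟨y, hy1, by linarith [hy2]⟩
    have hdens3 : ∀ᶠ r in 𝓝[>] (0:ℝ),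
        ENNReal.ofReal (3*a/4 * ((r/3) ^ N)) ≤ μ (Metric.ball x (r/3)) := by
      have h1 : ∀ᶠ tt in 𝓝[>] (0:ℝ),
          ENNReal.ofReal (3*a/4) < μ (Metric.ball x tt) / ENNReal.ofReal (tt ^ N) :=
        Filter.eventually_lt_of_lt_liminf
          (lt_of_lt_of_le ((ENNReal.ofReal_lt_ofReal_iff ha).mpr (by linarith)) (hθlow x))
      have h2 : Filter.Tendsto (fun r : ℝ => r/3) (𝓝[>] (0:ℝ)) (𝓝[>] (0:ℝ)) := by
        rw [tendsto_nhdsWithin_iff]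
        constructor
        · have := ((continuous_id.div_const (3:ℝ)).tendsto 0).mono_left
            (nhdsWithin_le_nhds (s := Set.Ioi (0:ℝ)))
          simpa using this
        · exact eventually_mem_nhdsWithin.mono fun r hr =>
            Set.mem_Ioi.mpr (by
              have : (0:ℝ) < r := hr
              linarith)
      have h3 := h2.eventually h1
      filter_upwards [h3, eventually_mem_nhdsWithin] with r hr hrpos
      have hrpos' : (0:ℝ) < r := hrpos
      have hne0 : ENNReal.ofReal ((r/3) ^ N) ≠ 0 := by
        simp only [ne_eq, ENNReal.ofReal_eq_zero, not_le]
        exact Real.rpow_pos_of_pos (by linarith) N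
      rw [ENNReal.ofReal_mul (by positivity : (0:ℝ) ≤ 3*a/4)]
      exact (ENNReal.le_div_iff_mul_le (Or.inl hne0) (Or.inl ENNReal.ofReal_ne_top)).mp hr.le
    have hall := hwit.and (hkey.and hdens3)
    obtain ⟨R, hRpos, hR⟩ := (nhdsGT_basis (0:ℝ)).eventually_iff.mp hall
    set Λ : ℝ := max 1 ((3/4)*t*g / R ^ (N/p)) with hΛdef
    have hev2 : ∀ᶠ n in Filter.atTop, Λ < s n :=
      (tendsto_atTop_mono hs1 tendsto_natCast_atTop_atTop).eventually_gt_atTop Λ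
    apply Filter.le_liminf_of_le (by isBoundedDefault)
    filter_upwards [hev2] with n hn
    set lam := s n with hlamdef
    have hlampos : (0:ℝ) < lam := lt_of_lt_of_le one_pos (hs2 n)
    set A : ℝ := (3/4)*t*g/lam with hAdef
    have hApos : 0 < A := by positivity
    set ρ : ℝ := A ^ (p/N) with hρdef
    have hρpos : 0 < ρ := Real.rpow_pos_of_pos hApos _
    set r : ℝ := (3/4)*ρ with hrdef
    have hrpos : 0 < r := by positivity
    have hRn : 0 < R ^ (N/p) := Real.rpow_pos_of_pos hRpos _
    have hρR : ρ < R := by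
      have h1 : A < R ^ (N/p) := by
        rw [hAdef, div_lt_iff₀ hlampos]
        have h2 : (3/4)*t*g / R ^ (N/p) < lam := lt_of_le_of_lt (le_max_right _ _) hn
        rw [div_lt_iff₀ hRn] at h2
        linarith
      have h2 : ρ < (R ^ (N/p)) ^ (p/N) :=
        Real.rpow_lt_rpow hApos.le h1 (by positivity)
      rwa [← Real.rpow_mul hRpos.le, show N/p * (p/N) = 1 by field_simp,
        Real.rpow_one] at h2
    have hrR : r ∈ Set.Ioo (0:ℝ) R := ⟨hrpos, by
      rw [hrdef]; nlinarith⟩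
    obtain ⟨hwit_r, hkey_r, hdens_r⟩ := hR hrR
    obtain ⟨y₀, hy₀mem, hy₀osc⟩ := hwit_r
    have hy₀d : dist y₀ x < r := mem_ball.mp hy₀mem
    have hkey_app := hkey_r y₀ hy₀d hy₀osc
    set B := Metric.ball y₀ (r/3) with hBdef
    set P := {y' : X | t*g*r < |u y' - u x|} with hPdef
    have hkey_app' : ENNReal.ofReal (9/10) * μ B ≤ μ (B ∩ P) := hkey_app
    -- sections contain B ∩ P
    have hsubsec : B ∩ P ⊆ Prod.mk x ⁻¹' BVYset u N p lam := by
      rintro y' ⟨hy'B, hy'P⟩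
      have hy'P' : t*g*r < |u y' - u x| := hy'P
      have habs : t*g*r < |u x - u y'| := by rwa [abs_sub_comm]
      have htgr : 0 < t*g*r := by positivity
      constructor
      · intro he
        have he' : x = y' := he
        have hzero : |u x - u y'| = 0 := by rw [he', sub_self, abs_zero]
        rw [hzero] at habs
        exact absurd habs (not_lt.mpr htgr.le)
      · show lam * dist x y' ^ (N/p+1) ≤ |u x - u y'|
        have hdist : dist x y' < ρ := by
          have h1 : dist y' y₀ < r/3 := mem_ball.mp hy'B
          have h2 : dist x y₀ < r := by rwa [dist_comm]
          calc dist x y' ≤ dist x y₀ + dist y₀ y' := dist_triangle _ _ _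
            _ < r + r/3 := by
                rw [dist_comm y₀ y']
                linarith
            _ = ρ := by rw [hrdef]; ring
        have h1 : dist x y' ^ (N/p+1) ≤ ρ ^ (N/p+1) :=
          Real.rpow_le_rpow dist_nonneg hdist.le hexp_pos.le
        have h2 : lam * ρ ^ (N/p+1) = t*g*r := by
          have := BVYaux.pair_eq (N := N) (p := p) hNpos hppos hg hlampos htpos
          rw [hρdef, hAdef, hrdef]
          exact this
        calc lam * dist x y' ^ (N/p+1) ≤ lam * ρ ^ (N/p+1) :=
              mul_le_mul_of_nonneg_left h1 hlampos.le
          _ = t*g*r := h2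
          _ ≤ |u x - u y'| := habs.le
    -- measure transfer
    have htrans : μ (Metric.ball x (r/3)) ≤ ENNReal.ofReal β * (ENNReal.ofReal β * μ B) := by
      have hsub2 : Metric.ball x (r/3) ⊆ Metric.ball y₀ (2*(2*(r/3))) := by
        intro z hz
        have h1 : dist z x < r/3 := mem_ball.mp hz
        have h2 : dist y₀ x < r := hy₀d
        rw [mem_ball]
        calc dist z y₀ ≤ dist z x + dist x y₀ := dist_triangle _ _ _
          _ < r/3 + r := by rw [dist_comm x y₀]; linarith
          _ ≤ 2*(2*(r/3)) := by linarith
      calc μ (Metric.ball x (r/3)) ≤ μ (Metric.ball y₀ (2*(2*(r/3)))) := measure_mono hsub2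
        _ ≤ ENNReal.ofReal β * μ (Metric.ball y₀ (2*(r/3))) := hdbl _ _ (by positivity)
        _ ≤ ENNReal.ofReal β * (ENNReal.ofReal β * μ B) :=
            mul_le_mul_right (hdbl _ _ (by positivity)) _
    have hBlow : ENNReal.ofReal (3*a/4 * ((r/3) ^ N) / (β*β)) ≤ μ B := by
      have h1 : ENNReal.ofReal (3*a/4 * ((r/3) ^ N)) ≤ ENNReal.ofReal (β*β) * μ B := by
        rw [ENNReal.ofReal_mul hβpos.le]
        calc ENNReal.ofReal (3*a/4 * ((r/3) ^ N)) ≤ μ (Metric.ball x (r/3)) := hdens_r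
          _ ≤ ENNReal.ofReal β * (ENNReal.ofReal β * μ B) := htrans
          _ = ENNReal.ofReal β * ENNReal.ofReal β * μ B := by ring
      have hββ : (0:ℝ) < β*β := by positivity
      have hne0 : ENNReal.ofReal (β*β) ≠ 0 := by
        simp only [ne_eq, ENNReal.ofReal_eq_zero, not_le]
        exact hββ
      rw [ENNReal.ofReal_div_of_pos hββ]
      rw [ENNReal.div_le_iff_le_mul (Or.inl hne0) (Or.inl ENNReal.ofReal_ne_top)]
      rw [mul_comm (μ B)]
      exact h1
    -- final chain
    have hfinal : ENNReal.ofReal (a / ((2:ℝ) ^ (5*N) * (8:ℝ) ^ p)) * ENNReal.ofReal (g ^ p)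
        ≤ ENNReal.ofReal (lam ^ p) * μ (Prod.mk x ⁻¹' BVYset u N p lam) := by
      have hreal : a / ((2:ℝ) ^ (5*N) * (8:ℝ) ^ p) * g ^ p
          ≤ lam ^ p * ((9/10) * (3*a/4 * ((r/3) ^ N) / (β*β))) := by
        have h2N : (2:ℝ) ^ N = β := BVYaux.two_rpow_eq hβ hN
        have hconst := BVYaux.lower_const_ineq hp hNpos.le ha hg h2N
        have harith : lam ^ p * ((r/3) ^ N) = ((97/200) * g) ^ p / (4:ℝ) ^ N := by
          have hr3 : r/3 = ρ/4 := by rw [hrdef]; ring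
          rw [hr3, Real.div_rpow hρpos.le (by norm_num : (0:ℝ) ≤ 4)]
          rw [hρdef, BVYaux.rho_pow_N hNpos hppos hApos, hAdef]
          rw [Real.div_rpow (by positivity : (0:ℝ) ≤ 3/4*t*g) hlampos.le]
          have hlp : 0 < lam ^ p := Real.rpow_pos_of_pos hlampos p
          have h97 : (3/4)*t*g = (97/200)*g := by rw [htdef]; ring
          rw [h97]
          field_simp
        have h4N : (0:ℝ) < (4:ℝ) ^ N := Real.rpow_pos_of_pos (by norm_num) N
        calc a / ((2:ℝ) ^ (5*N) * (8:ℝ) ^ p) * g ^ p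
            ≤ 9/10 * (3*a/4 * ((97/200) * g) ^ p) / ((4:ℝ) ^ N * (β*β)) := hconst
          _ = lam ^ p * ((9/10) * (3*a/4 * ((r/3) ^ N) / (β*β))) := by
              have hβ2 : (0:ℝ) < β*β := by positivity
              rw [show lam ^ p * ((9/10) * (3*a/4 * ((r/3) ^ N) / (β*β)))
                  = (9/10) * (3*a/4 * (lam ^ p * ((r/3) ^ N))) / (β*β) by ring]
              rw [harith]
              field_simp
      calc ENNReal.ofReal (a / ((2:ℝ) ^ (5*N) * (8:ℝ) ^ p)) * ENNReal.ofReal (g ^ p)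
          = ENNReal.ofReal (a / ((2:ℝ) ^ (5*N) * (8:ℝ) ^ p) * g ^ p) :=
            (ENNReal.ofReal_mul (by positivity)).symm
        _ ≤ ENNReal.ofReal (lam ^ p * ((9/10) * (3*a/4 * ((r/3) ^ N) / (β*β)))) :=
            ENNReal.ofReal_le_ofReal hreal
        _ = ENNReal.ofReal (lam ^ p) * (ENNReal.ofReal (9/10)
              * ENNReal.ofReal (3*a/4 * ((r/3) ^ N) / (β*β))) := by
            rw [← ENNReal.ofReal_mul (by norm_num : (0:ℝ) ≤ 9/10),
              ← ENNReal.ofReal_mul (by positivity)]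
        _ ≤ ENNReal.ofReal (lam ^ p) * (ENNReal.ofReal (9/10) * μ B) := by
            apply mul_le_mul_right
            exact mul_le_mul_right hBlow _
        _ ≤ ENNReal.ofReal (lam ^ p) * μ (B ∩ P) :=
            mul_le_mul_right hkey_app' _
        _ ≤ ENNReal.ofReal (lam ^ p) * μ (Prod.mk x ⁻¹' BVYset u N p lam) :=
            mul_le_mul_right (measure_mono hsubsec) _
    exact hfinal
  -- integrate the pointwise lower bound
  apply BVYaux.le_liminf_atTop_of_seq _ 1
  intro s hs1 hs2
  set F : ℕ → X → ℝ≥0∞ :=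
    fun n x => ENNReal.ofReal (s n ^ p) * μ (Prod.mk x ⁻¹' BVYset u N p (s n)) with hFdef
  have heq : (fun n => ENNReal.ofReal (s n ^ p) * (μ.prod μ) (BVYset u N p (s n)))
      = fun n => ∫⁻ x, F n x ∂μ := by
    funext n
    rw [htonelli (s n)]
    exact (lintegral_const_mul' _ _ ENNReal.ofReal_ne_top).symm
  rw [heq]
  have h1 : ENNReal.ofReal (a / ((2:ℝ) ^ (5*N) * (8:ℝ) ^ p))
        * ∫⁻ x, ENNReal.ofReal (lipUpper u x ^ p) ∂μ
      = ∫⁻ x, ENNReal.ofReal (a / ((2:ℝ) ^ (5*N) * (8:ℝ) ^ p))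
          * ENNReal.ofReal (lipUpper u x ^ p) ∂μ :=
    (lintegral_const_mul' _ _ ENNReal.ofReal_ne_top).symm
  have h2 : ∫⁻ x, ENNReal.ofReal (a / ((2:ℝ) ^ (5*N) * (8:ℝ) ^ p))
        * ENNReal.ofReal (lipUpper u x ^ p) ∂μ
      ≤ ∫⁻ x, Filter.liminf (fun n => F n x) Filter.atTop ∂μ := by
    apply lintegral_mono_ae
    filter_upwards [hlower_pt] with x hx
    exact hx s hs1 hs2
  have h3 : ∫⁻ x, Filter.liminf (fun n => F n x) Filter.atTop ∂μ
      ≤ Filter.liminf (fun n => ∫⁻ x, F n x ∂μ) Filter.atTop :=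
    MeasureTheory.lintegral_liminf_le (fun n => (hsecmeas (s n)).const_mul _)
  exact le_trans (le_of_eq h1) (le_trans h2 h3)
end

section
/- Let p ≥ 1 and let (X, d, m) be a metric measure space whose measure m is β-doubling for some β > 1, with N = log β / log 2, and assume θ_N^+(x) ≤ b for all x ∈ X for some b > 0. Let 0 < N̄ < N. Then for every Lipschitz function u : X → ℝ with bounded support, lim_{λ→+∞} λ^p · (m × m)(Ē_{λ,u}) = 0, where Ē_{λ,u} = {(x,y) ∈ X × X : x ≠ y, |u(x) − u(y)| ≥ λ · d(x,y)^{N̄/p + 1}}. -/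
open MeasureTheory Filter Metric Set Topology

/-- From the pointwise upper-density bound and the doubling property, every ball satisfies
`μ (ball x r) ≤ 2b · r^N` (with `β = 2^N`). -/
lemma ball_bound_of_density {X : Type*} [MetricSpace X] [MeasurableSpace X]
    (μ : Measure X) (β : ℝ) (hβ : 1 < β)
    (hdbl : ∀ (x : X) (r : ℝ), 0 < r →
      μ (Metric.ball x (2 * r)) ≤ ENNReal.ofReal β * μ (Metric.ball x r))
    (N : ℝ) (h2N : (2 : ℝ) ^ N = β)
    (b : ℝ) (hb : 0 < b)
    (hθ : ∀ x : X,
      Filter.limsup (fun r : ℝ => μ (Metric.ball x r) / ENNReal.ofReal (r ^ N)) (𝓝[>] (0 : ℝ))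
        ≤ ENNReal.ofReal b)
    (x : X) (r : ℝ) (hr : 0 < r) :
    μ (Metric.ball x r) ≤ ENNReal.ofReal (2 * b) * ENNReal.ofReal (r ^ N) := by
  have hβ0 : (0:ℝ) ≤ β := by linarith
  -- eventual bound near 0
  have hlt : Filter.limsup (fun s : ℝ => μ (Metric.ball x s) / ENNReal.ofReal (s ^ N))
      (𝓝[>] (0:ℝ)) < ENNReal.ofReal (2 * b) := by
    refine lt_of_le_of_lt (hθ x) ?_
    rw [ENNReal.ofReal_lt_ofReal_iff (by linarith)]
    linarith
  have hev := Filter.eventually_lt_of_limsup_lt hlt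
  rw [Filter.eventually_iff, mem_nhdsGT_iff_exists_Ioo_subset] at hev
  obtain ⟨δ, hδ, hIoo⟩ := hev
  have hδ0 : (0:ℝ) < δ := hδ
  -- iterate doubling
  have hiter : ∀ k : ℕ, μ (Metric.ball x r) ≤
      ENNReal.ofReal β ^ k * μ (Metric.ball x (r / 2 ^ k)) := by
    intro k
    induction k with
    | zero => simp
    | succ k ih =>
      have hpos : 0 < r / 2 ^ (k + 1) := by positivity
      have h2 : 2 * (r / 2 ^ (k + 1)) = r / 2 ^ k := by
        rw [pow_succ]; field_simp
      have := hdbl x (r / 2 ^ (k + 1)) hpos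
      rw [h2] at this
      calc μ (Metric.ball x r) ≤ ENNReal.ofReal β ^ k * μ (Metric.ball x (r / 2 ^ k)) := ih
        _ ≤ ENNReal.ofReal β ^ k * (ENNReal.ofReal β * μ (Metric.ball x (r / 2 ^ (k + 1)))) :=
            mul_le_mul_right this _
        _ = ENNReal.ofReal β ^ (k + 1) * μ (Metric.ball x (r / 2 ^ (k + 1))) := by ring
  -- choose k with r / 2^k < δ
  obtain ⟨k, hk⟩ := pow_unbounded_of_one_lt (r / δ) (by norm_num : (1:ℝ) < 2)
  have hs0 : 0 < r / 2 ^ k := by positivity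
  have hsδ : r / 2 ^ k < δ := by
    rw [div_lt_iff₀ (by positivity)]
    rw [div_lt_iff₀ hδ0] at hk
    nlinarith [hk, hδ0, pow_pos (by norm_num : (0:ℝ) < 2) k]
  set s := r / 2 ^ k with hs
  have hmem : s ∈ Set.Ioo (0:ℝ) δ := ⟨hs0, hsδ⟩
  have hsmall : μ (Metric.ball x s) ≤ ENNReal.ofReal (2 * b) * ENNReal.ofReal (s ^ N) := by
    have := hIoo hmem
    simp only [Set.mem_setOf_eq] at this
    have hne : ENNReal.ofReal (s ^ N) ≠ 0 := by
      simpa [ENNReal.ofReal_eq_zero, not_le] using Real.rpow_pos_of_pos hs0 N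
    have hnt : ENNReal.ofReal (s ^ N) ≠ ⊤ := ENNReal.ofReal_ne_top
    have := le_of_lt this
    rw [ENNReal.div_le_iff hne hnt] at this
    exact this
  -- key real identity: β^k * s^N = r^N
  have hkey : β ^ k * s ^ N = r ^ N := by
    have h2k : ((2:ℝ) ^ k) ^ N * s ^ N = r ^ N := by
      rw [← Real.mul_rpow (by positivity) hs0.le]
      congr 1
      rw [hs]; field_simp
    have hβk : β ^ k = ((2:ℝ) ^ k) ^ N := by
      rw [← h2N, ← Real.rpow_natCast ((2:ℝ) ^ N) k, ← Real.rpow_natCast (2:ℝ) k,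
        ← Real.rpow_mul (by norm_num), ← Real.rpow_mul (by norm_num), mul_comm]
    rw [hβk, h2k]
  calc μ (Metric.ball x r) ≤ ENNReal.ofReal β ^ k * μ (Metric.ball x s) := hiter k
    _ ≤ ENNReal.ofReal β ^ k * (ENNReal.ofReal (2 * b) * ENNReal.ofReal (s ^ N)) :=
        mul_le_mul_right hsmall _
    _ = ENNReal.ofReal (2 * b) * ENNReal.ofReal (β ^ k * s ^ N) := by
        rw [← ENNReal.ofReal_pow hβ0, ← ENNReal.ofReal_mul (by positivity),
          ← ENNReal.ofReal_mul (by positivity), ← ENNReal.ofReal_mul (by positivity)]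
        ring_nf
    _ = ENNReal.ofReal (2 * b) * ENNReal.ofReal (r ^ N) := by rw [hkey]

theorem tendsto_zero_of_exponent_lt
    {X : Type*} [MetricSpace X] [CompleteSpace X] [TopologicalSpace.SeparableSpace X]
    [MeasurableSpace X] [BorelSpace X]
    (μ : Measure X) [SigmaFinite μ] [IsLocallyFiniteMeasure μ] [μ.InnerRegular]
    [μ.IsOpenPosMeasure]
    (p β : ℝ) (hp : 1 ≤ p) (hβ : 1 < β)
    (hdbl : ∀ (x : X) (r : ℝ), 0 < r →
      μ (Metric.ball x (2 * r)) ≤ ENNReal.ofReal β * μ (Metric.ball x r))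
    (N : ℝ) (hN : N = Real.log β / Real.log 2)
    (b : ℝ) (hb : 0 < b)
    (hθ : ∀ x : X,
      Filter.limsup (fun r : ℝ => μ (Metric.ball x r) / ENNReal.ofReal (r ^ N)) (𝓝[>] (0 : ℝ))
        ≤ ENNReal.ofReal b)
    (Nbar : ℝ) (hNbar0 : 0 < Nbar) (hNbarN : Nbar < N)
    (u : X → ℝ) (hu : ∃ L : NNReal, LipschitzWith L u)
    (hsupp : Bornology.IsBounded (Function.support u)) :
    Filter.Tendsto
      (fun lam : ℝ => ENNReal.ofReal (lam ^ p) * (μ.prod μ) (BVYset u Nbar p lam))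
      Filter.atTop (nhds 0) := by
  rcases isEmpty_or_nonempty X with hX | hX
  · have hempty : ∀ lam : ℝ, BVYset u Nbar p lam = ∅ := fun lam =>
      Set.eq_empty_of_isEmpty _
    simp only [hempty, measure_empty, mul_zero]
    exact tendsto_const_nhds
  -- setup
  obtain ⟨x₀⟩ := hX
  have h2N : (2:ℝ) ^ N = β := by
    rw [hN, Real.rpow_def_of_pos (by norm_num : (0:ℝ) < 2)]
    rw [mul_div_assoc', mul_comm, mul_div_assoc, div_self (ne_of_gt (Real.log_pos (by norm_num))),
      mul_one, Real.exp_log (by linarith)]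
  have hball := ball_bound_of_density μ β hβ hdbl N h2N b hb hθ
  have hN0 : 0 < N := lt_trans hNbar0 hNbarN
  obtain ⟨L₀, hL₀⟩ := hu
  set L : ℝ := (L₀ : ℝ) + 1 with hLdef
  have hL0 : 0 < L := by positivity
  have hLip : ∀ x y : X, |u x - u y| ≤ L * dist x y := by
    intro x y
    have := hL₀.dist_le_mul x y
    rw [Real.dist_eq] at this
    have : |u x - u y| ≤ (L₀ : ℝ) * dist x y := this
    nlinarith [dist_nonneg (x := x) (y := y), this]
  obtain ⟨C₀, hC₀⟩ := hsupp.subset_closedBall x₀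
  set C : ℝ := max C₀ 0 with hCdef
  have hC0 : 0 ≤ C := le_max_right _ _
  have hCsupp : Function.support u ⊆ closedBall x₀ C :=
    hC₀.trans (closedBall_subset_closedBall (le_max_left _ _))
  set T : Set X := closedBall x₀ (C + 1) with hTdef
  -- finiteness of μ T
  have hTfin : μ T ≠ ⊤ := by
    have h1 : μ T ≤ μ (Metric.ball x₀ (C + 2)) :=
      measure_mono (closedBall_subset_ball (by linarith))
    have h2 := hball x₀ (C + 2) (by linarith)
    exact ne_top_of_le_ne_top (by finiteness) (h1.trans h2)
  set M : ℝ := (μ T).toReal with hMdef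
  have hM0 : 0 ≤ M := ENNReal.toReal_nonneg
  have hμT : μ T = ENNReal.ofReal M := (ENNReal.ofReal_toReal hTfin).symm
  set a : ℝ := p * N / Nbar with hadef
  have hp0 : 0 < p := by linarith
  have ha0 : 0 < a := by positivity
  set e : ℝ := p - a with hedef
  have he0 : e < 0 := by
    have : 1 < N / Nbar := (one_lt_div hNbar0).mpr hNbarN
    have : p < p * (N / Nbar) := by nlinarith
    have : p < a := by rw [hadef]; rw [mul_div_assoc]; exact this
    linarith
  set K : ℝ := 2 * b * 2 ^ N * L ^ a * M with hKdef
  set lam₀ : ℝ := max 1 L with hlam₀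
  -- the main estimate
  have hmain : ∀ lam : ℝ, lam₀ ≤ lam →
      ENNReal.ofReal (lam ^ p) * (μ.prod μ) (BVYset u Nbar p lam)
        ≤ ENNReal.ofReal (K * lam ^ e) := by
    intro lam hlam
    have hlam1 : (1:ℝ) ≤ lam := le_trans (le_max_left _ _) hlam
    have hlamL : L ≤ lam := le_trans (le_max_right _ _) hlam
    have hlampos : 0 < lam := by linarith
    set R : ℝ := (L / lam) ^ (p / Nbar) with hRdef
    have hLl : 0 < L / lam := div_pos hL0 hlampos
    have hR0 : 0 < R := Real.rpow_pos_of_pos hLl _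
    have hR1 : R ≤ 1 :=
      Real.rpow_le_one hLl.le ((div_le_one hlampos).2 hlamL) (by positivity)
    set S : Set (X × X) := (T ×ˢ (univ : Set X)) ∩ {q : X × X | dist q.1 q.2 ≤ R} with hSdef
    have hSmeas : MeasurableSet S := by
      refine (measurableSet_closedBall.prod MeasurableSet.univ).inter ?_
      exact isClosed_le (continuous_fst.dist continuous_snd) continuous_const |>.measurableSet
    -- inclusion
    have hsub : BVYset u Nbar p lam ⊆ S := by
      rintro ⟨x, y⟩ ⟨hne, hineq⟩
      have hd : 0 < dist x y := dist_pos.mpr hne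
      have hrpow : dist x y ^ (Nbar / p + 1) = dist x y ^ (Nbar / p) * dist x y := by
        rw [Real.rpow_add hd, Real.rpow_one]
      have hstep : lam * dist x y ^ (Nbar / p) * dist x y ≤ L * dist x y := by
        calc lam * dist x y ^ (Nbar / p) * dist x y
            = lam * dist x y ^ (Nbar / p + 1) := by rw [hrpow]; ring
          _ ≤ |u x - u y| := hineq
          _ ≤ L * dist x y := hLip x y
      have hstep2 : lam * dist x y ^ (Nbar / p) ≤ L :=
        le_of_mul_le_mul_right hstep hd
      have hdN : dist x y ^ (Nbar / p) ≤ L / lam := by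
        rw [le_div_iff₀ hlampos]; linarith
      have hdR : dist x y ≤ R := by
        have h1 : dist x y = (dist x y ^ (Nbar / p)) ^ (p / Nbar) := by
          rw [← Real.rpow_mul hd.le]
          rw [show Nbar / p * (p / Nbar) = 1 by field_simp, Real.rpow_one]
        rw [h1, hRdef]
        exact Real.rpow_le_rpow (Real.rpow_nonneg hd.le _) hdN (by positivity)
      have hpos : 0 < |u x - u y| := by
        have : 0 < lam * dist x y ^ (Nbar / p + 1) := by positivity
        exact lt_of_lt_of_le this hineq
      have hxT : x ∈ T := by
        by_cases hx : u x = 0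
        · have hy : u y ≠ 0 := by
            intro hy; rw [hx, hy] at hpos; simp at hpos
          have hyB : y ∈ closedBall x₀ C := hCsupp hy
          rw [hTdef, mem_closedBall]
          calc dist x x₀ ≤ dist x y + dist y x₀ := dist_triangle _ _ _
            _ ≤ R + C := add_le_add hdR (mem_closedBall.mp hyB)
            _ ≤ C + 1 := by linarith
        · exact (closedBall_subset_closedBall (by linarith)) (hCsupp hx)
      exact ⟨⟨hxT, mem_univ _⟩, hdR⟩
    -- measure of S
    set κ : ENNReal := ENNReal.ofReal (2 * b) * ENNReal.ofReal ((2 * R) ^ N) with hκdef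
    have hkey : ∀ x : X, μ (Prod.mk x ⁻¹' S) ≤ T.indicator (fun _ => κ) x := by
      intro x
      by_cases hx : x ∈ T
      · rw [Set.indicator_of_mem hx]
        refine le_trans (measure_mono ?_) (hball x (2 * R) (by linarith))
        intro y hy
        simp only [hSdef, Set.mem_preimage, Set.mem_inter_iff, Set.mem_prod,
          Set.mem_setOf_eq] at hy
        rw [mem_ball, dist_comm]
        calc dist x y ≤ R := hy.2
          _ < 2 * R := by linarith
      · rw [Set.indicator_of_notMem hx]
        have : Prod.mk x ⁻¹' S = ∅ := by
          ext y
          simp only [hSdef, Set.mem_preimage, Set.mem_inter_iff, Set.mem_prod,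
            Set.mem_setOf_eq, Set.mem_empty_iff_false, iff_false]
          intro h; exact hx h.1.1
        simp [this]
    have hSm : (μ.prod μ) S ≤ κ * μ T := by
      rw [Measure.prod_apply hSmeas]
      calc ∫⁻ x, μ (Prod.mk x ⁻¹' S) ∂μ ≤ ∫⁻ x, T.indicator (fun _ => κ) x ∂μ :=
            lintegral_mono hkey
        _ = κ * μ T := lintegral_indicator_const measurableSet_closedBall κ
    -- combine
    have hEm : (μ.prod μ) (BVYset u Nbar p lam) ≤ κ * μ T :=
      le_trans (measure_mono hsub) hSm
    -- real arithmetic identity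
    have hreal : lam ^ p * (2 * b * ((2 * R) ^ N) * M) = K * lam ^ e := by
      have h2R : (2 * R) ^ N = 2 ^ N * (L ^ a / lam ^ a) := by
        rw [Real.mul_rpow (by norm_num) hR0.le]
        congr 1
        rw [hRdef, ← Real.rpow_mul hLl.le,
          show p / Nbar * N = a by rw [hadef]; ring,
          Real.div_rpow hL0.le hlampos.le]
      rw [h2R, hedef, Real.rpow_sub hlampos, hKdef]
      have hlama : lam ^ a ≠ 0 := ne_of_gt (Real.rpow_pos_of_pos hlampos _)
      field_simp
    calc ENNReal.ofReal (lam ^ p) * (μ.prod μ) (BVYset u Nbar p lam)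
        ≤ ENNReal.ofReal (lam ^ p) * (κ * μ T) := mul_le_mul_right hEm _
      _ = ENNReal.ofReal (lam ^ p * (2 * b * ((2 * R) ^ N) * M)) := by
          rw [hμT, hκdef, ← ENNReal.ofReal_mul (by positivity),
            ← ENNReal.ofReal_mul (by positivity), ← ENNReal.ofReal_mul (by positivity)]
      _ = ENNReal.ofReal (K * lam ^ e) := by rw [hreal]
  -- squeeze
  have htend : Filter.Tendsto (fun lam : ℝ => ENNReal.ofReal (K * lam ^ e))
      Filter.atTop (nhds 0) := by
    have h1 : Filter.Tendsto (fun lam : ℝ => lam ^ e) Filter.atTop (nhds 0) := by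
      have := tendsto_rpow_neg_atTop (y := -e) (by linarith)
      simpa using this
    have h2 : Filter.Tendsto (fun lam : ℝ => K * lam ^ e) Filter.atTop (nhds 0) := by
      have := h1.const_mul K
      simpa using this
    have := ENNReal.tendsto_ofReal h2
    simpa using this
  refine tendsto_of_tendsto_of_tendsto_of_le_of_le' tendsto_const_nhds htend
    (Filter.Eventually.of_forall fun _ => zero_le) ?_
  filter_upwards [Filter.eventually_ge_atTop lam₀] with lam hlam
  exact hmain lam hlam
end

section
/- Let p ≥ 1 and let (X, d, m) be a metric measure space whose measure m is β-doubling for some β > 1, with N = log β / log 2, and assume θ_N^−(x) ≥ a for all x ∈ X for some a > 0. Let N̄ > N. Then for every Lipschitz function u : X → ℝ with bounded support satisfying m({x : lip u(x) > 0}) > 0, liminf_{λ→+∞} λ^p · (m × m)(Ē_{λ,u}) = +∞, where Ē_{λ,u} = {(x,y) ∈ X × X : x ≠ y, |u(x) − u(y)| ≥ λ · d(x,y)^{N̄/p + 1}}. -/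
open MeasureTheory Filter Metric Set Topology

lemma aux_isOpen_measure_ball {X : Type*} [MetricSpace X] [MeasurableSpace X]
    [OpensMeasurableSpace X] (μ : Measure X) (r : ℝ) (c : ENNReal) :
    IsOpen {x : X | c < μ (ball x r)} := by
  rw [Metric.isOpen_iff]
  intro x hx
  have hU : (⋃ n : ℕ, ball x (r - 1 / (n + 1))) = ball x r := by
    ext y
    simp only [mem_iUnion, mem_ball]
    constructor
    · rintro ⟨n, hn⟩
      have : (0:ℝ) < 1 / (n + 1) := by positivity
      linarith
    · intro hy
      obtain ⟨n, hn⟩ := exists_nat_one_div_lt (show (0:ℝ) < r - dist y x by linarith)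
      exact ⟨n, by linarith⟩
  have hmono : Monotone (fun n : ℕ => ball x (r - 1 / (n + 1))) := by
    intro m n hmn
    apply ball_subset_ball
    have : (1:ℝ) / (n + 1) ≤ 1 / (m + 1) := by
      apply one_div_le_one_div_of_le (by positivity)
      exact_mod_cast by omega
    linarith
  have hT := tendsto_measure_iUnion_atTop (μ := μ) hmono
  rw [hU] at hT
  have hev := hT.eventually (isOpen_Ioi.mem_nhds (show μ (ball x r) ∈ Ioi c from hx))
  obtain ⟨n, hn⟩ := hev.exists
  refine ⟨1 / (n + 1), by positivity, fun y hy => ?_⟩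
  refine lt_of_lt_of_le hn (measure_mono fun z hz => ?_)
  simp only [mem_ball] at *
  calc dist z y ≤ dist z x + dist y x := dist_triangle_right z y x
    _ < (r - 1 / (n + 1)) + 1 / (n + 1) := add_lt_add hz hy
    _ = r := by ring

lemma aux_meas_BVY {X : Type*} [MetricSpace X] [TopologicalSpace.SeparableSpace X]
    [MeasurableSpace X] [BorelSpace X]
    (u : X → ℝ) (hc : Continuous u) (Nb P lam : ℝ) (he : (0:ℝ) ≤ Nb / P + 1) :
    MeasurableSet (BVYset u Nb P lam) := by
  haveI : SecondCountableTopology X := UniformSpace.secondCountable_of_separable X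
  have h1 : IsOpen {q : X × X | q.1 ≠ q.2} := isOpen_ne_fun continuous_fst continuous_snd
  have h2 : IsClosed {q : X × X | lam * dist q.1 q.2 ^ (Nb / P + 1) ≤ |u q.1 - u q.2|} := by
    apply isClosed_le
    · exact continuous_const.mul (continuous_dist.rpow_const fun x => Or.inr he)
    · exact ((hc.comp continuous_fst).sub (hc.comp continuous_snd)).abs
  exact (h1.measurableSet.inter h2.measurableSet : MeasurableSet _)

set_option maxHeartbeats 2000000 in
theorem liminf_top_of_exponent_gt
    {X : Type*} [MetricSpace X] [CompleteSpace X] [TopologicalSpace.SeparableSpace X]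
    [MeasurableSpace X] [BorelSpace X]
    (μ : Measure X) [SigmaFinite μ] [IsLocallyFiniteMeasure μ] [μ.InnerRegular]
    [μ.IsOpenPosMeasure]
    (p β : ℝ) (hp : 1 ≤ p) (hβ : 1 < β)
    (hdbl : ∀ (x : X) (r : ℝ), 0 < r →
      μ (Metric.ball x (2 * r)) ≤ ENNReal.ofReal β * μ (Metric.ball x r))
    (N : ℝ) (hN : N = Real.log β / Real.log 2)
    (a : ℝ) (ha : 0 < a)
    (hθ : ∀ x : X,
      ENNReal.ofReal a ≤
        Filter.liminf (fun r : ℝ => μ (Metric.ball x r) / ENNReal.ofReal (r ^ N)) (𝓝[>] (0 : ℝ)))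
    (Nbar : ℝ) (hNbarN : N < Nbar)
    (u : X → ℝ) (hu : ∃ L : NNReal, LipschitzWith L u)
    (hsupp : Bornology.IsBounded (Function.support u))
    (hpos : 0 < μ {x : X | 0 < lipLower u x}) :
    Filter.liminf
      (fun lam : ℝ => ENNReal.ofReal (lam ^ p) * (μ.prod μ) (BVYset u Nbar p lam))
      Filter.atTop = ⊤ := by
  classical
  have hlog2 : (0:ℝ) < Real.log 2 := Real.log_pos (by norm_num)
  have hN0 : 0 < N := by
    rw [hN]; exact div_pos (Real.log_pos hβ) hlog2
  have hNbar0 : 0 < Nbar := lt_trans hN0 hNbarN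
  have hp0 : (0:ℝ) < p := lt_of_lt_of_le one_pos hp
  obtain ⟨L₀, hL₀⟩ := hu
  set L : ℝ := max 1 (L₀ : ℝ) with hLdef
  have hL1 : (1:ℝ) ≤ L := le_max_left _ _
  have hL0 : (0:ℝ) < L := lt_of_lt_of_le one_pos hL1
  have hLip : ∀ x y : X, |u x - u y| ≤ L * dist x y := by
    intro x y
    have h := hL₀.dist_le_mul x y
    rw [Real.dist_eq] at h
    calc |u x - u y| ≤ (L₀:ℝ) * dist x y := h
      _ ≤ L * dist x y := mul_le_mul_of_nonneg_right (le_max_right _ _) dist_nonneg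
  have ucont : Continuous u := hL₀.continuous
  -- choose ℓ > 0 with positive measure of {lipLower ≥ ℓ}
  have hsub : {x : X | 0 < lipLower u x} ⊆
      ⋃ j : ℕ, {x : X | 1/((j:ℝ)+1) ≤ lipLower u x} := by
    intro x hx
    obtain ⟨j, hj⟩ := exists_nat_one_div_lt (show (0:ℝ) < lipLower u x from hx)
    exact mem_iUnion.2 ⟨j, le_of_lt hj⟩
  have hexj : ∃ j : ℕ, 0 < μ {x : X | 1/((j:ℝ)+1) ≤ lipLower u x} := by
    by_contra h
    push_neg at h
    have h0 : μ (⋃ j : ℕ, {x : X | 1/((j:ℝ)+1) ≤ lipLower u x}) = 0 :=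
      measure_iUnion_null fun j => le_antisymm (h j) zero_le
    exact absurd (le_antisymm ((measure_mono hsub).trans h0.le) zero_le) (ne_of_gt hpos)
  obtain ⟨j, hj⟩ := hexj
  set ℓ : ℝ := min (1/((j:ℝ)+1)) 1 with hldef
  have hl0 : 0 < ℓ := lt_min (by positivity) one_pos
  have hl1 : ℓ ≤ 1 := min_le_right _ _
  have hA0pos : 0 < μ {x : X | ℓ ≤ lipLower u x} :=
    lt_of_lt_of_le hj (measure_mono fun x hx =>
      (show ℓ ≤ lipLower u x from le_trans (min_le_left _ _) hx))
  -- good sets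
  set S : ℝ → Set X := fun r =>
    {x : X | ∃ z, dist x z < r ∧ ℓ/4 * r < |u z - u x|} ∩
    {x : X | ENNReal.ofReal (a/2 * r^N) < μ (ball x r)} with hSdef
  have hSopen : ∀ r : ℝ, IsOpen (S r) := by
    intro r
    apply IsOpen.inter
    · have hh : {x : X | ∃ z, dist x z < r ∧ ℓ/4 * r < |u z - u x|} =
          ⋃ z : X, ({x : X | dist x z < r} ∩ {x : X | ℓ/4 * r < |u z - u x|}) := by
        ext x
        simp [Set.mem_iUnion, Set.mem_inter_iff, Set.mem_setOf_eq]
      rw [hh]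
      apply isOpen_iUnion
      intro z
      exact (isOpen_lt (continuous_id.dist continuous_const) continuous_const).inter
        (isOpen_lt continuous_const (continuous_const.sub ucont).abs)
    · exact aux_isOpen_measure_ball μ r _
  -- pointwise: small radii are good
  have hpt : ∀ x ∈ {x : X | ℓ ≤ lipLower u x}, ∃ ε > 0, ∀ r : ℝ, 0 < r → r < ε → x ∈ S r := by
    intro x hx
    have hxl : ℓ ≤ Filter.liminf
        (fun r : ℝ => ⨆ y ∈ Metric.ball x r, |u y - u x| / r) (𝓝[>] (0:ℝ)) := hx
    have hbdd : ∀ᶠ r in 𝓝[>](0:ℝ),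
        (0:ℝ) ≤ ⨆ y ∈ Metric.ball x r, |u y - u x| / r := by
      filter_upwards [self_mem_nhdsWithin] with r hr
      have hr0 : (0:ℝ) < r := hr
      exact Real.iSup_nonneg fun y => Real.iSup_nonneg fun _ => by positivity
    have h1 : ∀ᶠ r in 𝓝[>](0:ℝ), ℓ/2 < ⨆ y ∈ Metric.ball x r, |u y - u x| / r := by
      refine eventually_lt_of_lt_liminf (lt_of_lt_of_le (by linarith) hxl) ?_
      exact ⟨0, by simpa [eventually_map] using hbdd⟩
    have h2 : ∀ᶠ r in 𝓝[>](0:ℝ),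
        ENNReal.ofReal (a/2) < μ (ball x r) / ENNReal.ofReal (r ^ N) :=
      eventually_lt_of_lt_liminf
        (lt_of_lt_of_le ((ENNReal.ofReal_lt_ofReal_iff ha).2 (by linarith)) (hθ x))
    have h3 := (h1.and h2).and self_mem_nhdsWithin
    obtain ⟨ε, hε, hsubs⟩ := mem_nhdsGT_iff_exists_Ioo_subset.1 h3
    refine ⟨ε, hε, fun r hr0 hrε => ?_⟩
    obtain ⟨⟨hF, hB⟩, -⟩ := hsubs ⟨hr0, hrε⟩
    constructor
    · have h4 : ℓ/4 < ⨆ y ∈ Metric.ball x r, |u y - u x| / r :=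
        lt_of_lt_of_le (by linarith) hF.le
      haveI : Nonempty X := ⟨x⟩
      obtain ⟨y, hy⟩ := exists_lt_of_lt_ciSup h4
      by_cases hyb : y ∈ ball x r
      · haveI : Nonempty (y ∈ ball x r) := ⟨hyb⟩
        rw [ciSup_const] at hy
        refine ⟨y, ?_, ?_⟩
        · rw [dist_comm]; exact mem_ball.1 hyb
        · exact (lt_div_iff₀ hr0).1 hy
      · haveI : IsEmpty (y ∈ ball x r) := ⟨fun h => hyb h⟩
        rw [Real.iSup_of_isEmpty] at hy
        linarith
    · have hb0 : ENNReal.ofReal (r ^ N) ≠ 0 := by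
        have : (0:ℝ) < r ^ N := Real.rpow_pos_of_pos hr0 N
        simp only [ne_eq, ENNReal.ofReal_eq_zero, not_le]
        exact this
      have h5 := (ENNReal.lt_div_iff_mul_lt (Or.inl hb0) (Or.inl ENNReal.ofReal_ne_top)).1 hB
      show ENNReal.ofReal (a/2 * r^N) < μ (ball x r)
      rwa [ENNReal.ofReal_mul (by linarith)]
  -- a good set of positive measure with uniform scale
  set Ak : ℕ → Set X := fun k =>
    ⋂ (q : ℚ) (_ : 0 < (q:ℝ) ∧ (q:ℝ) < 1/((k:ℝ)+1)), S (q:ℝ) with hAkdef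
  have hAkmeas : ∀ k, MeasurableSet (Ak k) :=
    fun k => MeasurableSet.iInter fun q => MeasurableSet.iInter fun _ => (hSopen _).measurableSet
  have hA0sub : {x : X | ℓ ≤ lipLower u x} ⊆ ⋃ k : ℕ, Ak k := by
    intro x hx
    obtain ⟨ε, hε, hS'⟩ := hpt x hx
    obtain ⟨k, hk⟩ := exists_nat_one_div_lt hε
    refine mem_iUnion.2 ⟨k, ?_⟩
    exact mem_iInter.2 fun q => mem_iInter.2 fun hq => hS' _ hq.1 (lt_trans hq.2 hk)
  have hexk : ∃ k, 0 < μ (Ak k) := by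
    by_contra h; push_neg at h
    have h0 : μ (⋃ k : ℕ, Ak k) = 0 :=
      measure_iUnion_null fun k => le_antisymm (h k) zero_le
    exact absurd (le_antisymm ((measure_mono hA0sub).trans h0.le) zero_le)
      (ne_of_gt hA0pos)
  obtain ⟨k, hkpos⟩ := hexk
  set δ : ℝ := 1/((k:ℝ)+1) with hδdef
  have hδ0 : 0 < δ := by positivity
  have hAprop : ∀ x ∈ Ak k, ∀ q : ℚ, 0 < (q:ℝ) → (q:ℝ) < δ → x ∈ S (q:ℝ) := by
    intro x hx q h1 h2
    exact mem_iInter.1 (mem_iInter.1 hx q) ⟨h1, h2⟩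
  -- doubling iterated
  have dbl : ∀ (kk : ℕ) (z : X) (r : ℝ), 0 < r →
      μ (ball z (2^kk * r)) ≤ ENNReal.ofReal β ^ kk * μ (ball z r) := by
    intro kk
    induction kk with
    | zero => intro z r hr; simp
    | succ n ih =>
      intro z r hr
      have h1 : (2:ℝ)^(n+1) * r = 2^n * (2*r) := by ring
      rw [h1]
      calc μ (ball z (2^n * (2*r))) ≤ ENNReal.ofReal β ^ n * μ (ball z (2*r)) :=
            ih z (2*r) (by linarith)
        _ ≤ ENNReal.ofReal β ^ n * (ENNReal.ofReal β * μ (ball z r)) :=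
            mul_le_mul_right (hdbl z r hr) _
        _ = ENNReal.ofReal β ^ (n+1) * μ (ball z r) := by ring
  -- constants
  set e : ℝ := Nbar / p + 1 with hedef
  have hdivpos : 0 < Nbar / p := div_pos hNbar0 hp0
  have he0 : 0 < e := by rw [hedef]; linarith
  set K : ℝ := (2:ℝ) ^ e with hKdef
  have hK0 : 0 < K := Real.rpow_pos_of_pos two_pos e
  set σ : ℝ := ℓ / (32 * L) with hσdef
  have hσ0 : 0 < σ := div_pos hl0 (by linarith)
  have hσ1 : σ ≤ 1 := by
    rw [hσdef, div_le_one (by linarith)]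
    linarith
  obtain ⟨k₀, hk₀⟩ := pow_unbounded_of_one_lt (2/σ) (one_lt_two (α := ℝ))
  set D : ENNReal := ENNReal.ofReal β ^ k₀ with hDdef
  have hD0 : D ≠ 0 := by
    apply pow_ne_zero
    simp only [ne_eq, ENNReal.ofReal_eq_zero, not_le]
    linarith
  have hDt : D ≠ ⊤ := by
    exact ENNReal.pow_ne_top ENNReal.ofReal_ne_top
  set cE : ℝ := p / Nbar * N with hcdef
  have hc0 : 0 < cE := mul_pos (div_pos hp0 hNbar0) hN0
  set E : ℝ := p - cE with hEdef
  have hE0 : 0 < E := by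
    rw [hEdef, hcdef, sub_pos]
    calc p / Nbar * N < p / Nbar * Nbar :=
        mul_lt_mul_of_pos_left hNbarN (div_pos hp0 hNbar0)
      _ = p := by field_simp
  have h8K0 : (0:ℝ) < ℓ/(8*K) := div_pos hl0 (by positivity)
  set c₅ : ℝ := a/2 * ((ℓ/(8*K)) ^ cE / 2 ^ N) with hc5def
  have hc₅ : 0 < c₅ := by
    have h1 := Real.rpow_pos_of_pos h8K0 cE
    have h2 := Real.rpow_pos_of_pos (show (0:ℝ) < 2 by norm_num) N
    rw [hc5def]
    positivity
  set m₁ : ENNReal := min (μ (Ak k)) 1 with hm1def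
  have hm₁0 : m₁ ≠ 0 := (lt_min hkpos zero_lt_one).ne'
  -- main estimate
  have hmain : ∀ lam : ℝ, 1 ≤ lam → (ℓ/(8*K*lam)) ^ (p/Nbar) < δ →
      ENNReal.ofReal (c₅ * lam ^ E) / D * m₁ ≤
        ENNReal.ofReal (lam ^ p) * (μ.prod μ) (BVYset u Nbar p lam) := by
    intro lam hlam1 hqδ
    have hlam0 : (0:ℝ) < lam := lt_of_lt_of_le one_pos hlam1
    set qbar : ℝ := (ℓ/(8*K*lam)) ^ (p/Nbar) with hqbardef
    have hqbar0 : 0 < qbar := Real.rpow_pos_of_pos (div_pos hl0 (by positivity)) _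
    obtain ⟨q, hq1, hq2⟩ := exists_rat_btwn (show qbar/2 < qbar by linarith)
    have hqr0 : 0 < (q:ℝ) := lt_trans (by linarith) hq1
    have hqδ' : (q:ℝ) < δ := lt_trans hq2 hqδ
    set s : ℝ := σ * q with hsdef
    have hs0 : 0 < s := mul_pos hσ0 hqr0
    have hqexp : (q:ℝ) ^ (Nbar/p) ≤ ℓ/(8*K*lam) := by
      calc (q:ℝ) ^ (Nbar/p) ≤ qbar ^ (Nbar/p) :=
            Real.rpow_le_rpow hqr0.le hq2.le hdivpos.le
        _ = ℓ/(8*K*lam) := by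
            rw [hqbardef, ← Real.rpow_mul (by positivity),
              show p/Nbar * (Nbar/p) = 1 by field_simp, Real.rpow_one]
    have hfiber : ∀ x ∈ Ak k, ENNReal.ofReal (a/2 * (q:ℝ)^N) / D ≤
        μ {y : X | (x, y) ∈ BVYset u Nbar p lam} := by
      intro x hx
      obtain ⟨⟨z, hz1, hz2⟩, hball⟩ := hAprop x hx q hqr0 hqδ'
      have hfib : ball z s ⊆ {y : X | (x, y) ∈ BVYset u Nbar p lam} := by
        intro y hy
        have hyz : dist z y < s := by rw [dist_comm]; exact mem_ball.1 hy
        have huzy : |u z - u y| ≤ L * s :=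
          le_trans (hLip z y) (mul_le_mul_of_nonneg_left hyz.le hL0.le)
        have hLs : L * s = ℓ/32 * q := by
          rw [hsdef, hσdef]; field_simp
        have hlow : ℓ/8 * q ≤ |u x - u y| := by
          have t1 : |u z - u x| ≤ |u z - u y| + |u y - u x| := by
            calc |u z - u x| = |(u z - u y) + (u y - u x)| := by ring_nf
              _ ≤ |u z - u y| + |u y - u x| := abs_add_le _ _
          have t2 : |u y - u x| = |u x - u y| := abs_sub_comm _ _
          have hq0' : 0 ≤ ℓ * (q:ℝ) := le_of_lt (mul_pos hl0 hqr0)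
          rw [hLs] at huzy
          linarith
        have hdxy : dist x y ≤ 2 * q := by
          have hs1 : s ≤ (q:ℝ) := by
            rw [hsdef]
            have := mul_le_mul_of_nonneg_right hσ1 hqr0.le
            linarith
          calc dist x y ≤ dist x z + dist z y := dist_triangle x z y
            _ ≤ q + s := add_le_add hz1.le hyz.le
            _ ≤ 2 * q := by linarith
        have hxny : x ≠ y := by
          intro h
          rw [h, sub_self, abs_zero] at hlow
          have := mul_pos hl0 hqr0
          linarith
        have hkey : lam * dist x y ^ e ≤ |u x - u y| := by
          have h1 : dist x y ^ e ≤ (2*(q:ℝ)) ^ e :=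
            Real.rpow_le_rpow dist_nonneg hdxy he0.le
          have h2 : (2*(q:ℝ)) ^ e = K * ((q:ℝ) ^ (Nbar/p) * q) := by
            rw [Real.mul_rpow (by norm_num) hqr0.le, hKdef]
            congr 1
            rw [hedef, Real.rpow_add hqr0, Real.rpow_one]
          have h3 : lam * (K * ((q:ℝ) ^ (Nbar/p) * q)) ≤ ℓ/8 * q := by
            have hm : lam * K * (q:ℝ)^(Nbar/p) ≤ lam * K * (ℓ/(8*K*lam)) :=
              mul_le_mul_of_nonneg_left hqexp (by positivity)
            have heq : lam * K * (ℓ/(8*K*lam)) = ℓ/8 := by field_simp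
            rw [heq] at hm
            have := mul_le_mul_of_nonneg_right hm hqr0.le
            linarith
          calc lam * dist x y ^ e ≤ lam * (2*(q:ℝ))^e :=
              mul_le_mul_of_nonneg_left h1 hlam0.le
            _ = lam * (K * ((q:ℝ)^(Nbar/p) * q)) := by rw [h2]
            _ ≤ ℓ/8 * q := h3
            _ ≤ |u x - u y| := hlow
        exact ⟨hxny, hkey⟩
      have hsub2 : ball x (q:ℝ) ⊆ ball z (2^k₀ * s) := by
        intro y hy
        have h2q : 2 * (q:ℝ) ≤ 2^k₀ * s := by
          rw [hsdef]
          rw [div_lt_iff₀ hσ0] at hk₀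
          have := mul_le_mul_of_nonneg_right hk₀.le hqr0.le
          linarith
        have : dist y z < 2 * (q:ℝ) := by
          calc dist y z ≤ dist y x + dist x z := dist_triangle y x z
            _ < q + q := add_lt_add (mem_ball.1 hy) hz1
            _ = 2 * q := by ring
        exact mem_ball.2 (lt_of_lt_of_le this h2q)
      have hms : ENNReal.ofReal (a/2 * (q:ℝ)^N) ≤ D * μ (ball z s) := by
        calc ENNReal.ofReal (a/2 * (q:ℝ)^N) ≤ μ (ball x (q:ℝ)) := hball.le
          _ ≤ μ (ball z (2^k₀ * s)) := measure_mono hsub2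
          _ ≤ D * μ (ball z s) := dbl k₀ z s hs0
      rw [ENNReal.div_le_iff_le_mul (Or.inl hD0) (Or.inl hDt)]
      calc ENNReal.ofReal (a/2 * (q:ℝ)^N) ≤ D * μ (ball z s) := hms
        _ = μ (ball z s) * D := mul_comm _ _
        _ ≤ μ {y : X | (x, y) ∈ BVYset u Nbar p lam} * D :=
            mul_le_mul_left (measure_mono hfib) _
    have hmeasBVY : MeasurableSet (BVYset u Nbar p lam) :=
      aux_meas_BVY u ucont Nbar p lam (by linarith)
    have hprod : (ENNReal.ofReal (a/2 * (q:ℝ)^N) / D) * μ (Ak k) ≤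
        (μ.prod μ) (BVYset u Nbar p lam) := by
      rw [Measure.prod_apply hmeasBVY]
      have hind : ((Ak k).indicator fun _ => ENNReal.ofReal (a/2 * (q:ℝ)^N) / D) ≤
          fun x => μ (Prod.mk x ⁻¹' BVYset u Nbar p lam) := by
        intro x
        by_cases hx : x ∈ Ak k
        · rw [Set.indicator_of_mem hx]; exact hfiber x hx
        · simp [Set.indicator_of_notMem hx]
      calc (ENNReal.ofReal (a/2 * (q:ℝ)^N) / D) * μ (Ak k)
          = ∫⁻ x, (Ak k).indicator (fun _ => ENNReal.ofReal (a/2 * (q:ℝ)^N) / D) x ∂μ := by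
            rw [lintegral_indicator (hAkmeas k), setLIntegral_const]
        _ ≤ ∫⁻ x, μ (Prod.mk x ⁻¹' BVYset u Nbar p lam) ∂μ := lintegral_mono hind
    have hreal : c₅ * lam ^ E ≤ lam ^ p * (a/2 * (q:ℝ)^N) := by
      have hqN : (qbar/2) ^ N ≤ (q:ℝ) ^ N :=
        Real.rpow_le_rpow (by linarith) hq1.le hN0.le
      have e1 : (qbar/2:ℝ)^N = (ℓ/(8*K)) ^ cE * (lam ^ cE)⁻¹ / 2^N := by
        rw [Real.div_rpow hqbar0.le (by norm_num), hqbardef,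
          ← Real.rpow_mul (by positivity), ← hcdef]
        congr 1
        rw [show ℓ/(8*K*lam) = (ℓ/(8*K)) * lam⁻¹ by field_simp,
          Real.mul_rpow h8K0.le (by positivity), Real.inv_rpow hlam0.le]
      have e2 : lam ^ E = lam ^ p * (lam ^ cE)⁻¹ := by
        rw [hEdef, Real.rpow_sub hlam0, div_eq_mul_inv]
      have e3 : c₅ * lam ^ E = lam ^ p * (a/2 * ((qbar/2)^N)) := by
        rw [e1, e2, hc5def]; ring
      rw [e3]
      apply mul_le_mul_of_nonneg_left _ (Real.rpow_nonneg hlam0.le p)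
      exact mul_le_mul_of_nonneg_left hqN (by linarith)
    calc ENNReal.ofReal (c₅ * lam ^ E) / D * m₁
        ≤ ENNReal.ofReal (lam ^ p * (a/2 * (q:ℝ)^N)) / D * m₁ :=
          mul_le_mul_left (ENNReal.div_le_div_right (ENNReal.ofReal_le_ofReal hreal) D) m₁
      _ = ENNReal.ofReal (lam ^ p) * (ENNReal.ofReal (a/2 * (q:ℝ)^N) / D * m₁) := by
          rw [ENNReal.ofReal_mul (Real.rpow_nonneg hlam0.le p)]
          simp only [div_eq_mul_inv]
          ring
      _ ≤ ENNReal.ofReal (lam ^ p) * ((μ.prod μ) (BVYset u Nbar p lam)) := by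
          apply mul_le_mul_right
          calc ENNReal.ofReal (a/2 * (q:ℝ)^N) / D * m₁
              ≤ ENNReal.ofReal (a/2 * (q:ℝ)^N) / D * μ (Ak k) :=
                mul_le_mul_right (min_le_left _ _) _
            _ ≤ _ := hprod
  -- conclusion
  have hG : Tendsto (fun lam : ℝ => ENNReal.ofReal (c₅ * lam ^ E) / D * m₁) atTop (𝓝 ⊤) := by
    have t1 : Tendsto (fun lam : ℝ => c₅ * lam ^ E) atTop atTop :=
      (tendsto_rpow_atTop hE0).const_mul_atTop hc₅
    have t2 : Tendsto (fun lam : ℝ => ENNReal.ofReal (c₅ * lam ^ E)) atTop (𝓝 ⊤) :=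
      ENNReal.tendsto_ofReal_atTop.comp t1
    have t3 : Tendsto (fun lam : ℝ => ENNReal.ofReal (c₅ * lam ^ E) / D) atTop (𝓝 ⊤) := by
      simp only [div_eq_mul_inv]
      have t := ENNReal.Tendsto.mul_const t2 (b := D⁻¹) (Or.inl ENNReal.top_ne_zero)
      rwa [ENNReal.top_mul (ENNReal.inv_ne_zero.2 hDt)] at t
    have t4 := ENNReal.Tendsto.mul_const t3 (b := m₁) (Or.inl ENNReal.top_ne_zero)
    rwa [ENNReal.top_mul hm₁0] at t4
  have hqev : ∀ᶠ lam : ℝ in atTop, (ℓ/(8*K*lam)) ^ (p/Nbar) < δ := by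
    have hδp : 0 < δ ^ (Nbar/p) := Real.rpow_pos_of_pos hδ0 _
    filter_upwards [eventually_gt_atTop (ℓ/(8*K* (δ ^ (Nbar/p)))), eventually_ge_atTop (1:ℝ)]
      with lam h1 h2
    have hlam0 : (0:ℝ) < lam := by linarith
    have hbase : ℓ/(8*K*lam) < δ ^ (Nbar/p) := by
      rw [div_lt_iff₀ (by positivity)]
      rw [div_lt_iff₀ (by positivity)] at h1
      calc ℓ < lam * (8*K*δ^(Nbar/p)) := h1
        _ = δ^(Nbar/p) * (8*K*lam) := by ring
    calc (ℓ/(8*K*lam)) ^ (p/Nbar) < (δ ^ (Nbar/p)) ^ (p/Nbar) :=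
        Real.rpow_lt_rpow (by positivity) hbase (div_pos hp0 hNbar0)
      _ = δ := by
          rw [← Real.rpow_mul hδ0.le, show Nbar/p * (p/Nbar) = 1 by field_simp,
            Real.rpow_one]
  have htend : Tendsto
      (fun lam : ℝ => ENNReal.ofReal (lam ^ p) * (μ.prod μ) (BVYset u Nbar p lam))
      atTop (𝓝 ⊤) := by
    rw [ENNReal.tendsto_nhds_top_iff_nnreal]
    intro x
    have hx := (ENNReal.tendsto_nhds_top_iff_nnreal.1 hG) x
    filter_upwards [hx, hqev, eventually_ge_atTop (1:ℝ)] with lam h1 h2 h3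
    exact lt_of_lt_of_le h1 (hmain lam h3 h2)
  exact htend.liminf_eq
end

section
/- Let p ≥ 1 and let (X, d, m) be a metric measure space whose measure m is β-doubling for some β > 1, with N = log β / log 2. Assume a ≤ θ_N^−(x) ≤ θ_N^+(x) ≤ b for all x ∈ X, for some constants b > a > 0. Then for every Lipschitz function u : X → ℝ with bounded support satisfying m({x : lip u(x) > 0}) > 0, one has 0 < liminf_{λ→+∞} λ^p · (m × m)(E_{λ,u}) and limsup_{λ→+∞} λ^p · (m × m)(E_{λ,u}) < +∞, where E_{λ,u} = {(x,y) ∈ X × X : x ≠ y, |u(x) − u(y)| ≥ λ · d(x,y)^{N/p + 1}}. -/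
open MeasureTheory Filter Metric Set Topology

set_option maxHeartbeats 1600000


lemma two_rpow_eq {β N : ℝ} (hβ : 1 < β) (hN : N = Real.log β / Real.log 2) :
    (2:ℝ) ^ N = β := by
  have h2 : (0:ℝ) < Real.log 2 := Real.log_pos (by norm_num)
  rw [hN, Real.rpow_def_of_pos (by norm_num), div_eq_inv_mul, ← mul_assoc,
    mul_inv_cancel₀ h2.ne', one_mul, Real.exp_log (lt_trans one_pos hβ)]

lemma N_pos {β N : ℝ} (hβ : 1 < β) (hN : N = Real.log β / Real.log 2) : 0 < N := by
  rw [hN]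
  exact div_pos (Real.log_pos hβ) (Real.log_pos (by norm_num))

lemma ball_doubling_iter {X : Type*} [MetricSpace X] [MeasurableSpace X]
    (μ : Measure X) {β : ℝ}
    (hdbl : ∀ (x : X) (r : ℝ), 0 < r → μ (ball x (2*r)) ≤ ENNReal.ofReal β * μ (ball x r))
    (x : X) {r : ℝ} (hr : 0 < r) (n : ℕ) :
    μ (ball x (2^n * r)) ≤ (ENNReal.ofReal β)^n * μ (ball x r) := by
  induction n with
  | zero => simp
  | succ n ih =>
    have h1 : (2:ℝ)^(n+1) * r = 2 * (2^n * r) := by ring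
    have h2 : (0:ℝ) < 2^n * r := by positivity
    calc μ (ball x (2^(n+1) * r)) = μ (ball x (2 * (2^n * r))) := by rw [h1]
      _ ≤ ENNReal.ofReal β * μ (ball x (2^n * r)) := hdbl x _ h2
      _ ≤ ENNReal.ofReal β * ((ENNReal.ofReal β)^n * μ (ball x r)) := by
          exact mul_le_mul_right ih _
      _ = (ENNReal.ofReal β)^(n+1) * μ (ball x r) := by ring



lemma two_pow_n_rpow {β N : ℝ} (h2N : (2:ℝ) ^ N = β) (n : ℕ) :
    ((2:ℝ)^n : ℝ) ^ N = β ^ n := by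
  rw [← Real.rpow_natCast (2:ℝ) n, ← Real.rpow_mul (by norm_num), mul_comm,
    Real.rpow_mul (by norm_num), h2N, Real.rpow_natCast]

lemma ball_upper {X : Type*} [MetricSpace X] [MeasurableSpace X]
    (μ : Measure X) {β N b : ℝ} (hβ : 1 < β) (h2N : (2:ℝ) ^ N = β)
    (hdbl : ∀ (x : X) (r : ℝ), 0 < r → μ (ball x (2*r)) ≤ ENNReal.ofReal β * μ (ball x r))
    (x : X)
    (hb : Filter.limsup (fun r : ℝ => μ (Metric.ball x r) / ENNReal.ofReal (r ^ N)) (𝓝[>] (0:ℝ))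
        ≤ ENNReal.ofReal b)
    {δ : ℝ} (hδ : 0 < δ) :
    μ (ball x δ) ≤ ENNReal.ofReal b * ENNReal.ofReal (δ ^ N) := by
  have hβ0 : (0:ℝ) < β := lt_trans one_pos hβ
  set g : ℝ → ENNReal := fun r => μ (ball x r) / ENNReal.ofReal (r ^ N) with hg
  set c : ENNReal := μ (ball x δ) / ENNReal.ofReal (δ ^ N) with hc
  have key : ∀ n : ℕ, c ≤ g (δ / 2^n) := by
    intro n
    have hr : (0:ℝ) < δ / 2^n := by positivity
    have hiter := ball_doubling_iter μ hdbl x hr n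
    have h2r : (2:ℝ)^n * (δ / 2^n) = δ := by field_simp
    rw [h2r] at hiter
    have hofpow : (ENNReal.ofReal β)^n = ENNReal.ofReal (β^n) :=
      (ENNReal.ofReal_pow hβ0.le n).symm
    have hsplit : ENNReal.ofReal (δ ^ N)
        = ENNReal.ofReal (β^n) * ENNReal.ofReal ((δ / 2^n) ^ N) := by
      rw [← ENNReal.ofReal_mul (by positivity)]
      congr 1
      rw [← two_pow_n_rpow h2N n, ← Real.mul_rpow (by positivity) hr.le, h2r]
    have hβn0 : ENNReal.ofReal (β^n) ≠ 0 := by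
      simp [ENNReal.ofReal_eq_zero, not_le, pow_pos hβ0]
    have hβnt : ENNReal.ofReal (β^n) ≠ ⊤ := ENNReal.ofReal_ne_top
    calc c = μ (ball x δ) / (ENNReal.ofReal (β^n) * ENNReal.ofReal ((δ / 2^n) ^ N)) := by
            rw [hc, hsplit]
      _ ≤ (ENNReal.ofReal (β^n) * μ (ball x (δ / 2^n)))
            / (ENNReal.ofReal (β^n) * ENNReal.ofReal ((δ / 2^n) ^ N)) := by
            rw [hofpow] at hiter
            exact ENNReal.div_le_div_right hiter _
      _ = g (δ / 2^n) := ENNReal.mul_div_mul_left _ _ hβn0 hβnt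
  have htend : Tendsto (fun n : ℕ => δ / 2^n) atTop (𝓝[>] (0:ℝ)) := by
    apply tendsto_nhdsWithin_of_tendsto_nhds_of_eventually_within
    · simpa [div_eq_mul_inv, ← inv_pow] using
        (tendsto_pow_atTop_nhds_zero_of_lt_one (by norm_num : (0:ℝ) ≤ 2⁻¹)
          (by norm_num : (2:ℝ)⁻¹ < 1)).const_mul δ
    · exact Eventually.of_forall fun n => Set.mem_Ioi.mpr (by positivity)
  have hfreq : ∃ᶠ r in 𝓝[>] (0:ℝ), c ≤ g r :=
    htend.frequently (Frequently.of_forall key)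
  have hcb : c ≤ ENNReal.ofReal b := le_trans (le_limsup_of_frequently_le hfreq) hb
  have hd0 : ENNReal.ofReal (δ ^ N) ≠ 0 := by
    simp [ENNReal.ofReal_eq_zero, not_le, Real.rpow_pos_of_pos hδ]
  rw [hc, ENNReal.div_le_iff_le_mul (Or.inl hd0) (Or.inl ENNReal.ofReal_ne_top)] at hcb
  exact hcb



lemma measurable_measure_ball {X : Type*} [MetricSpace X] [MeasurableSpace X]
    [OpensMeasurableSpace X] (μ : Measure X) (q : ℝ) :
    Measurable (fun x : X => μ (ball x q)) := by
  rcases le_or_gt q 0 with hq | hq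
  · have : ∀ x : X, ball x q = ∅ := fun x => ball_eq_empty.mpr hq
    simp only [this]
    exact measurable_const
  · apply LowerSemicontinuous.measurable
    intro x c hc
    have hmono : Monotone (fun m : ℕ => ball x (q - q/(m+2))) := by
      intro m₁ m₂ hm
      apply ball_subset_ball
      have h1 : (0:ℝ) < (m₁:ℝ)+2 := by positivity
      have h2 : ((m₁:ℝ)+2) ≤ ((m₂:ℝ)+2) := by
        have := (Nat.cast_le (α := ℝ)).mpr hm; linarith
      have h3 := div_le_div_of_nonneg_left hq.le h1 h2
      linarith
    have hunion : (⋃ m : ℕ, ball x (q - q/(m+2))) = ball x q := by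
      apply Set.Subset.antisymm
      · refine Set.iUnion_subset fun m => ball_subset_ball ?_
        have : (0:ℝ) < q/(m+2) := by positivity
        linarith
      · intro z hz
        rw [mem_ball] at hz
        obtain ⟨m, hm⟩ := exists_nat_gt (q/(q - dist z x))
        refine Set.mem_iUnion.mpr ⟨m, ?_⟩
        rw [mem_ball]
        have hpos : 0 < q - dist z x := by linarith
        have h1 : q / (q - dist z x) < (m:ℝ) + 2 := by
          have : (0:ℝ) ≤ m := Nat.cast_nonneg m
          linarith
        have h2 : q / ((m:ℝ)+2) < q - dist z x := by
          rw [div_lt_iff₀ (by positivity)]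
          rw [div_lt_iff₀ hpos] at h1
          linarith [mul_comm (q - dist z x) ((m:ℝ)+2)]
        linarith
    have hsup : μ (ball x q) = ⨆ m : ℕ, μ (ball x (q - q/(m+2))) := by
      rw [← hunion, hmono.measure_iUnion]
    change c < μ (ball x q) at hc
    rw [hsup] at hc
    obtain ⟨m, hm⟩ := lt_iSup_iff.mp hc
    have hnhds : ball x (q/(m+2)) ∈ 𝓝 x := ball_mem_nhds x (by positivity)
    filter_upwards [hnhds] with x' hx'
    show c < μ (ball x' q)
    refine lt_of_lt_of_le hm (measure_mono ?_)
    intro z hz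
    rw [mem_ball] at hz hx' ⊢
    calc dist z x' ≤ dist z x + dist x x' := dist_triangle _ _ _
      _ < (q - q/(m+2)) + q/(m+2) := by rw [dist_comm x x']; exact add_lt_add hz hx'
      _ = q := by ring



lemma Oq_open {X : Type*} [MetricSpace X] (u : X → ℝ) {L : NNReal} (hL : LipschitzWith L u)
    (hL1 : 1 ≤ (L:ℝ)) (c' q : ℝ) :
    IsOpen {x : X | ∃ y, dist x y < q ∧ c' < |u y - u x|} := by
  have hL0 : (0:ℝ) < L := lt_of_lt_of_le one_pos hL1
  rw [Metric.isOpen_iff]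
  rintro x ⟨y, hy1, hy2⟩
  have hgap : 0 < |u y - u x| - c' := by linarith
  refine ⟨min ((q - dist x y)/2) ((|u y - u x| - c')/(2*L)),
    lt_min (by linarith) (by positivity), ?_⟩
  intro x' hx'
  rw [mem_ball] at hx'
  have hx'1 : dist x' x < (q - dist x y)/2 := lt_of_lt_of_le hx' (min_le_left _ _)
  have hx'2 : dist x' x < (|u y - u x| - c')/(2*L) := lt_of_lt_of_le hx' (min_le_right _ _)
  refine ⟨y, ?_, ?_⟩
  · calc dist x' y ≤ dist x' x + dist x y := dist_triangle _ _ _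
      _ < (q - dist x y)/2 + dist x y := by linarith
      _ ≤ q := by linarith [dist_nonneg (x := x) (y := y)]
  · have h1 : |u x' - u x| ≤ (L:ℝ) * dist x' x := by
      have := hL.dist_le_mul x' x
      rwa [Real.dist_eq] at this
    have h2 : (L:ℝ) * dist x' x < (|u y - u x| - c')/2 := by
      calc (L:ℝ) * dist x' x < (L:ℝ) * ((|u y - u x| - c')/(2*L)) := by
            exact mul_lt_mul_of_pos_left hx'2 hL0
        _ = (|u y - u x| - c')/2 := by field_simp
    have h3 : |u y - u x| ≤ |u y - u x'| + |u x' - u x| := abs_sub_le _ _ _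
    linarith



lemma limsup_part {X : Type*} [MetricSpace X] [MeasurableSpace X] [BorelSpace X]
    [SecondCountableTopology X]
    (μ : Measure X) [SigmaFinite μ]
    {β N b p : ℝ} (hβ : 1 < β) (hp : 1 ≤ p) (h2N : (2:ℝ) ^ N = β) (hN0 : 0 < N)
    (hdbl : ∀ (x : X) (r : ℝ), 0 < r → μ (ball x (2*r)) ≤ ENNReal.ofReal β * μ (ball x r))
    (hθup : ∀ x : X,
      Filter.limsup (fun r : ℝ => μ (Metric.ball x r) / ENNReal.ofReal (r ^ N)) (𝓝[>] (0 : ℝ))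
        ≤ ENNReal.ofReal b)
    (u : X → ℝ) {L : NNReal} (hL : LipschitzWith L u) (hL1 : 1 ≤ (L:ℝ))
    (hsupp : Bornology.IsBounded (Function.support u)) :
    Filter.limsup
        (fun lam : ℝ => ENNReal.ofReal (lam ^ p) * (μ.prod μ) (BVYset u N p lam))
        Filter.atTop < ⊤ := by
  have hp0 : (0:ℝ) < p := lt_of_lt_of_le one_pos hp
  have hL0 : (0:ℝ) < L := lt_of_lt_of_le one_pos hL1
  have hucont : Continuous u := hL.continuous
  rcases Set.eq_empty_or_nonempty (Function.support u) with hemp | ⟨x₀, hx₀⟩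
  · -- u ≡ 0, the set is eventually empty
    have hbound : ∀ᶠ lam : ℝ in atTop,
        ENNReal.ofReal (lam ^ p) * (μ.prod μ) (BVYset u N p lam) ≤ 0 := by
      filter_upwards [eventually_gt_atTop (0:ℝ)] with lam hlam
      have hE : BVYset u N p lam = ∅ := by
        ext q
        simp only [BVYset, Set.mem_setOf_eq, Set.mem_empty_iff_false, iff_false, not_and]
        intro hne
        have hd : 0 < dist q.1 q.2 := dist_pos.mpr hne
        have h1 : u q.1 = 0 := by
          have := Function.support_eq_empty_iff.mp hemp; simp [this]
        have h2 : u q.2 = 0 := by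
          have := Function.support_eq_empty_iff.mp hemp; simp [this]
        rw [h1, h2]
        simp only [sub_zero, abs_zero, not_le]
        positivity
      simp [hE]
    have := limsup_le_of_le (f := atTop)
        (u := fun lam : ℝ => ENNReal.ofReal (lam ^ p) * (μ.prod μ) (BVYset u N p lam))
        (by isBoundedDefault) hbound
    exact lt_of_le_of_lt this (by simp)
  · obtain ⟨R₀, hR₀⟩ := hsupp.subset_closedBall x₀
    set R : ℝ := max R₀ 0 with hR
    have hsubR : Function.support u ⊆ closedBall x₀ R :=
      hR₀.trans (closedBall_subset_closedBall (le_max_left _ _))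
    set M : ENNReal := μ (ball x₀ (R + 2)) with hM
    have hMlt : M < ⊤ := by
      refine lt_of_le_of_lt (ball_upper μ hβ h2N hdbl x₀ (hθup x₀) (by positivity)) ?_
      exact ENNReal.mul_lt_top ENNReal.ofReal_lt_top ENNReal.ofReal_lt_top
    set C : ENNReal := 2 * (ENNReal.ofReal b * ENNReal.ofReal (2^N * (L:ℝ)^p) * M) with hC
    have hbound : ∀ᶠ lam : ℝ in atTop,
        ENNReal.ofReal (lam ^ p) * (μ.prod μ) (BVYset u N p lam) ≤ C := by
      filter_upwards [eventually_ge_atTop ((L:ℝ))] with lam hlamL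
      have hlam0 : (0:ℝ) < lam := lt_of_lt_of_le hL0 hlamL
      set δ : ℝ := ((L:ℝ)/lam) ^ (p/N) with hδdef
      have hδ0 : 0 < δ := Real.rpow_pos_of_pos (by positivity) _
      have hδ1 : δ ≤ 1 :=
        Real.rpow_le_one (by positivity) (div_le_one_of_le₀ hlamL hlam0.le) (by positivity)
      set U1 : Set (X × X) :=
        ((Function.support u) ×ˢ (Set.univ : Set X)) ∩ {q : X × X | dist q.1 q.2 ≤ δ} with hU1def
      set U2 : Set (X × X) :=
        ((Set.univ : Set X) ×ˢ (Function.support u)) ∩ {q : X × X | dist q.1 q.2 ≤ δ} with hU2def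
      -- inclusion
      have hsub : BVYset u N p lam ⊆ U1 ∪ U2 := by
        rintro ⟨x, y⟩ ⟨hne, hle⟩
        have hd : 0 < dist x y := dist_pos.mpr hne
        have hdist : dist x y ≤ δ := by
          have hlip : |u x - u y| ≤ (L:ℝ) * dist x y := by
            have := hL.dist_le_mul x y
            rwa [Real.dist_eq] at this
          have h1 : lam * (dist x y ^ (N/p) * dist x y) ≤ (L:ℝ) * dist x y := by
            have heq : dist x y ^ (N/p+1) = dist x y ^ (N/p) * dist x y := by
              rw [Real.rpow_add hd, Real.rpow_one]
            rw [← heq]; exact le_trans hle hlip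
          have h2 : lam * dist x y ^ (N/p) ≤ (L:ℝ) := by
            rw [← mul_le_mul_iff_left₀ hd]
            calc lam * dist x y ^ (N/p) * dist x y
                = lam * (dist x y ^ (N/p) * dist x y) := by ring
              _ ≤ (L:ℝ) * dist x y := h1
          have h3 : dist x y ^ (N/p) ≤ (L:ℝ)/lam := by
            rw [le_div_iff₀ hlam0]; linarith [h2]
          have hexp : (N/p) * (p/N) = 1 := by field_simp
          calc dist x y = (dist x y ^ (N/p)) ^ (p/N) := by
                rw [← Real.rpow_mul hd.le, hexp, Real.rpow_one]
            _ ≤ ((L:ℝ)/lam) ^ (p/N) := Real.rpow_le_rpow (by positivity) h3 (by positivity)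
        have habs : 0 < |u x - u y| := lt_of_lt_of_le (by positivity) hle
        have hor : u x ≠ 0 ∨ u y ≠ 0 := by
          by_contra h
          push_neg at h
          rw [h.1, h.2] at habs; simp at habs
        rcases hor with h | h
        · exact Or.inl ⟨⟨h, Set.mem_univ _⟩, hdist⟩
        · exact Or.inr ⟨⟨Set.mem_univ _, h⟩, hdist⟩
      -- measure bound for each piece
      have hsuppopen : IsOpen (Function.support u) := by
        rw [Function.support]
        exact isOpen_ne_fun hucont continuous_const
      have hdistmeas : MeasurableSet {q : X × X | dist q.1 q.2 ≤ δ} :=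
        (isClosed_le (continuous_dist.comp (continuous_fst.prodMk continuous_snd))
          continuous_const).measurableSet
      set K : ENNReal := ENNReal.ofReal b * ENNReal.ofReal ((2*δ)^N) with hK
      have hBB : ∀ x : X, μ (ball x (2*δ)) ≤ K :=
        fun x => ball_upper μ hβ h2N hdbl x (hθup x) (by positivity)
      -- piece 1
      have hU1 : MeasurableSet U1 :=
        (hsuppopen.measurableSet.prod MeasurableSet.univ).inter hdistmeas
      have hm1 : (μ.prod μ) U1 ≤ K * M := by
        rw [Measure.prod_apply hU1]
        have hpt : ∀ x : X, μ (Prod.mk x ⁻¹' U1)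
            ≤ (ball x₀ (R+2)).indicator (fun _ => K) x := by
          intro x
          by_cases hx : x ∈ Function.support u
          · have hxball : x ∈ ball x₀ (R+2) := by
              have := hsubR hx
              rw [mem_closedBall] at this
              rw [mem_ball]; linarith
            rw [Set.indicator_of_mem hxball]
            refine le_trans (measure_mono ?_) (hBB x)
            intro y hy
            rw [mem_ball, dist_comm]
            have : dist x y ≤ δ := hy.2
            linarith [hδ0]
          · have h0 : μ (Prod.mk x ⁻¹' U1) = 0 :=
              measure_mono_null (fun y hy => (hx hy.1.1).elim) (measure_empty (μ := μ))
            exact le_trans (le_of_eq h0) zero_le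
        calc ∫⁻ x, μ (Prod.mk x ⁻¹' U1) ∂μ
            ≤ ∫⁻ x, (ball x₀ (R+2)).indicator (fun _ => K) x ∂μ := lintegral_mono hpt
          _ = K * M := by
              rw [lintegral_indicator isOpen_ball.measurableSet, setLIntegral_const]
      -- piece 2
      have hU2 : MeasurableSet U2 :=
        (MeasurableSet.univ.prod hsuppopen.measurableSet).inter hdistmeas
      have hm2 : (μ.prod μ) U2 ≤ K * M := by
        rw [Measure.prod_apply hU2]
        have hpt : ∀ x : X, μ (Prod.mk x ⁻¹' U2)
            ≤ (ball x₀ (R+2)).indicator (fun _ => K) x := by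
          intro x
          by_cases hx : x ∈ ball x₀ (R+2)
          · rw [Set.indicator_of_mem hx]
            refine le_trans (measure_mono ?_) (hBB x)
            intro y hy
            rw [mem_ball, dist_comm]
            have : dist x y ≤ δ := hy.2
            linarith [hδ0]
          · have h0 : μ (Prod.mk x ⁻¹' U2) = 0 := by
              refine measure_mono_null (fun y hy => ?_) (measure_empty (μ := μ))
              exfalso
              apply hx
              have h1 : dist y x₀ ≤ R := hsubR hy.1.2
              have h2 : dist x y ≤ δ := hy.2
              rw [mem_ball]
              calc dist x x₀ ≤ dist x y + dist y x₀ := dist_triangle _ _ _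
                _ ≤ δ + R := add_le_add h2 h1
                _ < R + 2 := by linarith [hδ1]
            exact le_trans (le_of_eq h0) zero_le
        calc ∫⁻ x, μ (Prod.mk x ⁻¹' U2) ∂μ
            ≤ ∫⁻ x, (ball x₀ (R+2)).indicator (fun _ => K) x ∂μ := lintegral_mono hpt
          _ = K * M := by
              rw [lintegral_indicator isOpen_ball.measurableSet, setLIntegral_const]
      have hEm : (μ.prod μ) (BVYset u N p lam) ≤ 2 * (K * M) := by
        calc (μ.prod μ) (BVYset u N p lam)
            ≤ (μ.prod μ) (U1 ∪ U2) := measure_mono hsub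
          _ ≤ (μ.prod μ) U1 + (μ.prod μ) U2 := measure_union_le _ _
          _ ≤ K * M + K * M := add_le_add hm1 hm2
          _ = 2 * (K * M) := by ring
      have hreal : lam ^ p * (2*δ)^N = 2^N * (L:ℝ)^p := by
        rw [Real.mul_rpow (by norm_num) hδ0.le, hδdef,
          ← Real.rpow_mul (by positivity : (0:ℝ) ≤ (L:ℝ)/lam),
          div_mul_cancel₀ p hN0.ne', Real.div_rpow hL0.le hlam0.le]
        have hlp : lam ^ p ≠ 0 := by positivity
        field_simp
      have hkey : ENNReal.ofReal (lam ^ p) * K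
          = ENNReal.ofReal b * ENNReal.ofReal (2^N * (L:ℝ)^p) := by
        calc ENNReal.ofReal (lam ^ p) * K
            = ENNReal.ofReal b * (ENNReal.ofReal (lam^p) * ENNReal.ofReal ((2*δ)^N)) := by
              rw [hK]; ring
          _ = ENNReal.ofReal b * ENNReal.ofReal (lam^p * (2*δ)^N) := by
              rw [← ENNReal.ofReal_mul (by positivity)]
          _ = ENNReal.ofReal b * ENNReal.ofReal (2^N * (L:ℝ)^p) := by rw [hreal]
      calc ENNReal.ofReal (lam ^ p) * (μ.prod μ) (BVYset u N p lam)
          ≤ ENNReal.ofReal (lam ^ p) * (2 * (K * M)) := mul_le_mul_right hEm _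
        _ = 2 * ((ENNReal.ofReal (lam ^ p) * K) * M) := by ring
        _ = C := by rw [hkey]
    have hfin := limsup_le_of_le (f := atTop)
        (u := fun lam : ℝ => ENNReal.ofReal (lam ^ p) * (μ.prod μ) (BVYset u N p lam))
        (by isBoundedDefault) hbound
    refine lt_of_le_of_lt hfin ?_
    rw [hC]
    exact ENNReal.mul_lt_top (by norm_num)
      (ENNReal.mul_lt_top (ENNReal.mul_lt_top ENNReal.ofReal_lt_top ENNReal.ofReal_lt_top) hMlt)



lemma liminf_part {X : Type*} [MetricSpace X] [MeasurableSpace X] [BorelSpace X]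
    [SecondCountableTopology X]
    (μ : Measure X) [SigmaFinite μ]
    {β N a p : ℝ} (hβ : 1 < β) (hp : 1 ≤ p) (hN0 : 0 < N) (ha : 0 < a)
    (hdbl : ∀ (x : X) (r : ℝ), 0 < r → μ (ball x (2*r)) ≤ ENNReal.ofReal β * μ (ball x r))
    (hθlow : ∀ x : X, ENNReal.ofReal a ≤
        Filter.liminf (fun r : ℝ => μ (Metric.ball x r) / ENNReal.ofReal (r ^ N)) (𝓝[>] (0:ℝ)))
    (u : X → ℝ) {L : NNReal} (hL : LipschitzWith L u) (hL1 : 1 ≤ (L:ℝ))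
    (hpos : 0 < μ {x : X | 0 < lipLower u x}) :
    0 < Filter.liminf
        (fun lam : ℝ => ENNReal.ofReal (lam ^ p) * (μ.prod μ) (BVYset u N p lam))
        Filter.atTop := by
  have hp0 : (0:ℝ) < p := lt_of_lt_of_le one_pos hp
  have hL0 : (0:ℝ) < L := lt_of_lt_of_le one_pos hL1
  have hβ0 : (0:ℝ) < β := lt_trans one_pos hβ
  have hucont : Continuous u := hL.continuous
  -- Step 1 : find a level set of positive measure
  obtain ⟨n₀, hn₀⟩ : ∃ n : ℕ, 0 < μ {x : X | 1/((n:ℝ)+1) ≤ lipLower u x} := by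
    by_contra h
    push_neg at h
    have h0 : ∀ n : ℕ, μ {x : X | 1/((n:ℝ)+1) ≤ lipLower u x} = 0 :=
      fun n => le_antisymm (h n) zero_le
    have hsub : {x : X | 0 < lipLower u x}
        ⊆ ⋃ n : ℕ, {x : X | 1/((n:ℝ)+1) ≤ lipLower u x} := by
      intro x hx
      have hx' : 0 < lipLower u x := hx
      obtain ⟨n, hn⟩ := exists_nat_one_div_lt hx'
      exact Set.mem_iUnion.mpr ⟨n, le_of_lt hn⟩
    have hle := (measure_mono (μ := μ) hsub).trans (measure_iUnion_le _)
    simp only [h0, tsum_zero, nonpos_iff_eq_zero] at hle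
    exact hpos.ne' hle
  set L₀ : ℝ := 1/((n₀:ℝ)+1) with hL₀def
  have hL₀0 : 0 < L₀ := by positivity
  have hL₀1 : L₀ ≤ 1 := by
    rw [hL₀def, div_le_one (by positivity)]
    have : (0:ℝ) ≤ (n₀:ℝ) := Nat.cast_nonneg n₀
    linarith
  set c : ℝ := L₀ / (8 * (L:ℝ)) with hcdef
  have hc0 : 0 < c := by positivity
  have hLc : (L:ℝ) * c = L₀/8 := by rw [hcdef]; field_simp
  have hc1 : c ≤ 1 := by
    rw [hcdef, div_le_one (by positivity)]
    nlinarith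
  set S : Set X := {x : X | L₀ ≤ lipLower u x} with hSdef
  -- the uniform sets T k
  set T : ℕ → Set X := fun k => ⋂ (q : ℚ) (_ : 0 < (q:ℝ)) (_ : (q:ℝ) < 1/((k:ℝ)+1)),
      ({x : X | ∃ y, dist x y < (q:ℝ) ∧ L₀/4*(q:ℝ) < |u y - u x|} ∩
       {x : X | ENNReal.ofReal (a/2*(q:ℝ)^N) ≤ μ (ball x (q:ℝ))}) with hTdef
  have hTmeas : ∀ k, MeasurableSet (T k) := by
    intro k
    refine MeasurableSet.iInter fun q => MeasurableSet.iInter fun _ =>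
      MeasurableSet.iInter fun _ => MeasurableSet.inter ?_ ?_
    · exact (Oq_open u hL hL1 _ _).measurableSet
    · exact measurableSet_le measurable_const (measurable_measure_ball μ _)
  -- Step 3 : S is covered by the T k
  have hST : S ⊆ ⋃ k : ℕ, T k := by
    intro x hx
    haveI : Nonempty X := ⟨x⟩
    have hxS : L₀ ≤ lipLower u x := hx
    have hgbdd : ∀ r : ℝ, 0 < r → ∀ y : X,
        (⨆ (_ : y ∈ ball x r), |u y - u x| / r) ≤ (L:ℝ) := by
      intro r hr y
      refine Real.iSup_le (fun hy => ?_) hL0.le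
      rw [div_le_iff₀ hr]
      have h1 : |u y - u x| ≤ (L:ℝ) * dist y x := by
        have := hL.dist_le_mul y x; rwa [Real.dist_eq] at this
      have h2 : dist y x < r := mem_ball.mp hy
      nlinarith
    have hBdd : ∀ r : ℝ, 0 < r → BddAbove (Set.range fun y : X =>
        ⨆ (_ : y ∈ ball x r), |u y - u x| / r) := by
      intro r hr
      exact ⟨L, fun v hv => by obtain ⟨y, rfl⟩ := hv; exact hgbdd r hr y⟩
    have hg0 : ∀ᶠ r in 𝓝[>] (0:ℝ),
        0 ≤ (fun r : ℝ => ⨆ y ∈ ball x r, |u y - u x| / r) r := by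
      filter_upwards [self_mem_nhdsWithin] with r hr
      have hr0 : (0:ℝ) < r := hr
      have h1 : (0:ℝ) ≤ ⨆ (_ : x ∈ ball x r), |u x - u x| / r := by
        rw [ciSup_pos (mem_ball_self hr0)]
        simp
      exact le_trans h1 (le_ciSup (hBdd r hr0) x)
    have hbdd : IsBoundedUnder (· ≥ ·) (𝓝[>] (0:ℝ))
        (fun r : ℝ => ⨆ y ∈ ball x r, |u y - u x| / r) := ⟨0, by simpa using hg0⟩
    have hev1 : ∀ᶠ r in 𝓝[>] (0:ℝ),
        L₀/2 < (fun r : ℝ => ⨆ y ∈ ball x r, |u y - u x| / r) r :=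
      eventually_lt_of_lt_liminf (lt_of_lt_of_le (by linarith) hxS) hbdd
    have hev2 : ∀ᶠ r in 𝓝[>] (0:ℝ),
        ENNReal.ofReal (a/2) < μ (ball x r) / ENNReal.ofReal (r^N) :=
      eventually_lt_of_lt_liminf
        (lt_of_lt_of_le ((ENNReal.ofReal_lt_ofReal_iff ha).mpr (by linarith)) (hθlow x))
    obtain ⟨ε, hε0, hε⟩ : ∃ ε > 0, ∀ r : ℝ, 0 < r → r < ε →
        (L₀/2 < (⨆ y ∈ ball x r, |u y - u x| / r) ∧
         ENNReal.ofReal (a/2) < μ (ball x r) / ENNReal.ofReal (r^N)) := by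
      have h := hev1.and hev2
      rw [eventually_nhdsWithin_iff, Metric.eventually_nhds_iff] at h
      obtain ⟨ε, hε0, hε⟩ := h
      refine ⟨ε, hε0, fun r hr0 hrε => ?_⟩
      exact hε (by rwa [Real.dist_eq, sub_zero, abs_of_pos hr0]) (Set.mem_Ioi.mpr hr0)
    obtain ⟨k, hk⟩ := exists_nat_one_div_lt hε0
    refine Set.mem_iUnion.mpr ⟨k, ?_⟩
    rw [hTdef]
    refine Set.mem_iInter.mpr fun q => Set.mem_iInter.mpr fun hq0 =>
      Set.mem_iInter.mpr fun hqk => ?_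
    have hqε : (q:ℝ) < ε := lt_trans hqk hk
    obtain ⟨hg, hd⟩ := hε (q:ℝ) hq0 hqε
    constructor
    · -- membership in the sup-set
      have h4 : L₀/4 < ⨆ y ∈ ball x (q:ℝ), |u y - u x| / (q:ℝ) := by linarith
      obtain ⟨y, hy⟩ := exists_lt_of_lt_ciSup h4
      by_cases hy' : y ∈ ball x (q:ℝ)
      · rw [ciSup_pos hy'] at hy
        refine ⟨y, by rw [dist_comm]; exact mem_ball.mp hy', ?_⟩
        rw [lt_div_iff₀ hq0] at hy
        linarith
      · rw [ciSup_neg hy', Real.sSup_empty] at hy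
        linarith
    · -- membership in the density set
      show ENNReal.ofReal (a/2*(q:ℝ)^N) ≤ μ (ball x (q:ℝ))
      have hqN0 : ENNReal.ofReal ((q:ℝ)^N) ≠ 0 := by
        simp [ENNReal.ofReal_eq_zero, not_le, Real.rpow_pos_of_pos hq0]
      rw [ENNReal.lt_div_iff_mul_lt (Or.inl hqN0) (Or.inl ENNReal.ofReal_ne_top)] at hd
      rw [ENNReal.ofReal_mul (by positivity)]
      exact le_of_lt hd
  -- Step 4 : some T k has positive measure
  obtain ⟨k, hk⟩ : ∃ k : ℕ, 0 < μ (T k) := by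
    by_contra h
    push_neg at h
    have h0 : ∀ k : ℕ, μ (T k) = 0 := fun k => le_antisymm (h k) zero_le
    have hSsub : S ⊆ ⋃ k : ℕ, T k := hST
    have hle := (measure_mono (μ := μ) hSsub).trans (measure_iUnion_le _)
    simp only [h0, tsum_zero, nonpos_iff_eq_zero] at hle
    exact hn₀.ne' hle
  -- Step 5 : constants
  obtain ⟨j, hj⟩ : ∃ j : ℕ, 2/c ≤ (2:ℝ)^j :=
    ⟨(pow_unbounded_of_one_lt (2/c) (by norm_num : (1:ℝ) < 2)).choose,
     (pow_unbounded_of_one_lt (2/c) (by norm_num : (1:ℝ) < 2)).choose_spec.le⟩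
  have hjc : 2 ≤ (2:ℝ)^j * c := by
    rw [div_le_iff₀ hc0] at hj; linarith
  set c₁ : ℝ := (L₀/8) / 2^(N/p+1) with hc₁def
  have h2e0 : (0:ℝ) < 2^(N/p+1) := Real.rpow_pos_of_pos two_pos _
  have hc₁0 : 0 < c₁ := div_pos (by linarith) h2e0
  have hc₁e : c₁ * 2^(N/p+1) = L₀/8 := div_mul_cancel₀ _ h2e0.ne'
  set K₀ : ℝ := a/2 * (c₁^p / 2^N) with hK₀def
  have h2N0 : (0:ℝ) < 2^N := Real.rpow_pos_of_pos two_pos _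
  have hc₁p0 : (0:ℝ) < c₁^p := Real.rpow_pos_of_pos hc₁0 _
  have hK₀0 : 0 < K₀ := by positivity
  set cstar : ENNReal := ENNReal.ofReal K₀ / (ENNReal.ofReal β)^j with hcstar
  have hβj0 : (ENNReal.ofReal β)^j ≠ 0 := pow_ne_zero _ (by simp [ENNReal.ofReal_eq_zero, not_le, hβ0])
  have hβjt : (ENNReal.ofReal β)^j ≠ ⊤ := ENNReal.pow_ne_top ENNReal.ofReal_ne_top
  have hcstar0 : cstar ≠ 0 := by
    rw [hcstar]
    exact (ENNReal.div_pos (by simp [ENNReal.ofReal_eq_zero, not_le, hK₀0]) hβjt).ne'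
  have he0 : (0:ℝ) ≤ N/p + 1 := by
    have := div_nonneg hN0.le hp0.le; linarith
  -- measurability of the BVY set
  have hEmeas : ∀ lam : ℝ, MeasurableSet (BVYset u N p lam) := by
    intro lam
    have h1 : IsOpen {q : X × X | q.1 ≠ q.2} := isOpen_ne_fun continuous_fst continuous_snd
    have h2 : IsClosed {q : X × X | lam * dist q.1 q.2 ^ (N/p+1) ≤ |u q.1 - u q.2|} := by
      refine isClosed_le ?_ ?_
      · exact continuous_const.mul (continuous_dist.rpow_const (fun q => Or.inr he0))
      · exact ((hucont.comp continuous_fst).sub (hucont.comp continuous_snd)).abs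
    exact h1.measurableSet.inter h2.measurableSet
  -- Step 6 : the eventual lower bound
  have hev : ∀ᶠ lam : ℝ in atTop,
      cstar * μ (T k) ≤ ENNReal.ofReal (lam ^ p) * (μ.prod μ) (BVYset u N p lam) := by
    filter_upwards [eventually_ge_atTop (max 1 (c₁ * ((k:ℝ)+1)^(N/p)))] with lam hlam
    have hlam1 : (1:ℝ) ≤ lam := le_trans (le_max_left _ _) hlam
    have hlamk : c₁ * ((k:ℝ)+1)^(N/p) ≤ lam := le_trans (le_max_right _ _) hlam
    have hlam0 : (0:ℝ) < lam := lt_of_lt_of_le one_pos hlam1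
    set ρ : ℝ := (c₁/lam)^(p/N) with hρdef
    have hρ0 : 0 < ρ := Real.rpow_pos_of_pos (by positivity) _
    have hρk : ρ ≤ 1/((k:ℝ)+1) := by
      have hkp0 : (0:ℝ) < ((k:ℝ)+1)^(N/p) := Real.rpow_pos_of_pos (by positivity) _
      have h1 : c₁/lam ≤ (1/((k:ℝ)+1))^(N/p) := by
        have h2 : (1/((k:ℝ)+1))^(N/p) = (((k:ℝ)+1)^(N/p))⁻¹ := by
          rw [one_div, Real.inv_rpow (by positivity)]
        rw [div_le_iff₀ hlam0, h2, inv_mul_eq_div, le_div_iff₀ hkp0]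
        exact hlamk
      calc ρ = (c₁/lam)^(p/N) := rfl
        _ ≤ ((1/((k:ℝ)+1))^(N/p))^(p/N) :=
            Real.rpow_le_rpow (by positivity) h1 (by positivity)
        _ = 1/((k:ℝ)+1) := by
            have hexp : (N/p) * (p/N) = 1 := by field_simp
            rw [← Real.rpow_mul (by positivity), hexp, Real.rpow_one]
    obtain ⟨q, hq1, hq2⟩ := exists_rat_btwn (half_lt_self hρ0)
    set r : ℝ := (q:ℝ) with hrdef
    have hr0 : 0 < r := lt_trans (by positivity) hq1
    have hrρ : r < ρ := hq2
    have hrρ2 : ρ/2 < r := hq1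
    have hrk : r < 1/((k:ℝ)+1) := lt_of_lt_of_le hrρ hρk
    -- the exponent identity :  ρ^(N/p) = c₁/lam
    have hρNp : ρ^(N/p) = c₁/lam := by
      have hexp : (p/N) * (N/p) = 1 := by field_simp
      rw [hρdef, ← Real.rpow_mul (by positivity), hexp, Real.rpow_one]
    have hlr : lam * r^(N/p) < c₁ := by
      have h1 : r^(N/p) < ρ^(N/p) :=
        Real.rpow_lt_rpow hr0.le hrρ (by positivity)
      rw [hρNp] at h1
      calc lam * r^(N/p) < lam * (c₁/lam) := by
            exact mul_lt_mul_of_pos_left h1 hlam0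
        _ = c₁ := by field_simp
    -- sections
    have hsec : ∀ x ∈ T k,
        ENNReal.ofReal (a/2*r^N) / (ENNReal.ofReal β)^j
          ≤ μ (Prod.mk x ⁻¹' (BVYset u N p lam)) := by
      intro x hx
      have hxq : x ∈ ({x : X | ∃ y, dist x y < r ∧ L₀/4*r < |u y - u x|} ∩
          {x : X | ENNReal.ofReal (a/2*r^N) ≤ μ (ball x r)}) := by
        rw [hTdef] at hx
        exact Set.mem_iInter.mp (Set.mem_iInter.mp (Set.mem_iInter.mp hx q) hr0) hrk
      obtain ⟨⟨y, hy1, hy2⟩, hdq⟩ := hxq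
      -- the small ball around y sits inside the section
      have hball : ball y (c*r) ⊆ Prod.mk x ⁻¹' (BVYset u N p lam) := by
        intro w hw
        rw [mem_ball] at hw
        have hwy : |u w - u y| ≤ L₀/8 * r := by
          have h1 : |u w - u y| ≤ (L:ℝ) * dist w y := by
            have := hL.dist_le_mul w y; rwa [Real.dist_eq] at this
          calc |u w - u y| ≤ (L:ℝ) * dist w y := h1
            _ ≤ (L:ℝ) * (c*r) := by nlinarith [dist_nonneg (x := w) (y := y)]
            _ = L₀/8 * r := by rw [← mul_assoc, hLc]
        have htri : |u y - u x| ≤ |u y - u w| + |u w - u x| := abs_sub_le _ _ _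
        have hwx : L₀/8 * r < |u w - u x| := by
          rw [abs_sub_comm (u y) (u w)] at htri
          linarith
        have hne : x ≠ w := by
          rintro rfl
          simp at hwx
          nlinarith
        have hdxw : dist x w < 2*r := by
          calc dist x w ≤ dist x y + dist y w := dist_triangle _ _ _
            _ < r + c*r := by rw [dist_comm y w]; exact add_lt_add hy1 hw
            _ ≤ 2*r := by nlinarith
        refine ⟨hne, ?_⟩
        have hrpow : dist x w ^ (N/p+1) ≤ (2*r)^(N/p+1) :=
          Real.rpow_le_rpow dist_nonneg hdxw.le he0
        have h2r : (2*r)^(N/p+1) = 2^(N/p+1) * (r^(N/p) * r) := by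
          rw [Real.mul_rpow (by norm_num) hr0.le, Real.rpow_add hr0, Real.rpow_one]
        have hcalc : lam * (2*r)^(N/p+1) ≤ L₀/8 * r := by
          rw [h2r]
          calc lam * (2^(N/p+1) * (r^(N/p) * r)) = (lam * r^(N/p)) * (2^(N/p+1) * r) := by ring
            _ ≤ c₁ * (2^(N/p+1) * r) := by
                exact mul_le_mul_of_nonneg_right hlr.le (by positivity)
            _ = (c₁ * 2^(N/p+1)) * r := by ring
            _ = L₀/8 * r := by rw [hc₁e]
        have habs : |u x - u w| = |u w - u x| := abs_sub_comm _ _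
        rw [habs]
        calc lam * dist x w ^ (N/p+1) ≤ lam * (2*r)^(N/p+1) := by
              exact mul_le_mul_of_nonneg_left hrpow hlam0.le
          _ ≤ L₀/8 * r := hcalc
          _ ≤ |u w - u x| := hwx.le
      -- the doubling lower bound on the small ball
      have hbig : ball x r ⊆ ball y ((2:ℝ)^j * (c*r)) := by
        intro z hz
        rw [mem_ball] at hz ⊢
        calc dist z y ≤ dist z x + dist x y := dist_triangle _ _ _
          _ < r + r := by rw [dist_comm x y] at hy1; exact add_lt_add hz (by rwa [dist_comm])
          _ = 2*r := by ring
          _ ≤ ((2:ℝ)^j * c) * r := by nlinarith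
          _ = (2:ℝ)^j * (c*r) := by ring
      have hiter := ball_doubling_iter μ hdbl y (by positivity : (0:ℝ) < c*r) j
      have hchain : ENNReal.ofReal (a/2*r^N) ≤ (ENNReal.ofReal β)^j * μ (ball y (c*r)) := by
        calc ENNReal.ofReal (a/2*r^N) ≤ μ (ball x r) := hdq
          _ ≤ μ (ball y ((2:ℝ)^j * (c*r))) := measure_mono hbig
          _ ≤ (ENNReal.ofReal β)^j * μ (ball y (c*r)) := hiter
      have hdiv : ENNReal.ofReal (a/2*r^N) / (ENNReal.ofReal β)^j ≤ μ (ball y (c*r)) := by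
        rw [ENNReal.div_le_iff hβj0 hβjt]
        rwa [mul_comm ((ENNReal.ofReal β)^j) (μ (ball y (c*r)))] at hchain
      exact le_trans hdiv (measure_mono hball)
    -- integrate
    have hprod : (ENNReal.ofReal (a/2*r^N) / (ENNReal.ofReal β)^j) * μ (T k)
        ≤ (μ.prod μ) (BVYset u N p lam) := by
      rw [Measure.prod_apply (hEmeas lam)]
      have hpt : ∀ x : X, (T k).indicator
          (fun _ => ENNReal.ofReal (a/2*r^N) / (ENNReal.ofReal β)^j) x
          ≤ μ (Prod.mk x ⁻¹' BVYset u N p lam) := by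
        intro x
        by_cases hx : x ∈ T k
        · rw [Set.indicator_of_mem hx]; exact hsec x hx
        · rw [Set.indicator_of_notMem hx]; exact zero_le
      calc (ENNReal.ofReal (a/2*r^N) / (ENNReal.ofReal β)^j) * μ (T k)
          = ∫⁻ x, (T k).indicator
              (fun _ => ENNReal.ofReal (a/2*r^N) / (ENNReal.ofReal β)^j) x ∂μ := by
            rw [lintegral_indicator (hTmeas k), setLIntegral_const]
        _ ≤ ∫⁻ x, μ (Prod.mk x ⁻¹' BVYset u N p lam) ∂μ := lintegral_mono hpt
    -- put the factor lam^p back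
    have hKr : K₀ ≤ lam^p * (a/2*r^N) := by
      have h1 : (ρ/2)^N ≤ r^N := Real.rpow_le_rpow (by positivity) hrρ2.le hN0.le
      have h2 : (ρ/2)^N = ρ^N / 2^N := Real.div_rpow hρ0.le (by norm_num) N
      have h3 : ρ^N = c₁^p / lam^p := by
        rw [hρdef, ← Real.rpow_mul (by positivity), div_mul_cancel₀ _ hN0.ne',
          Real.div_rpow hc₁0.le hlam0.le]
      have hlamp : (0:ℝ) < lam^p := Real.rpow_pos_of_pos hlam0 _
      have h4 : K₀ = lam^p * (a/2 * ((ρ/2)^N)) := by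
        rw [h2, h3, hK₀def]
        field_simp
      rw [h4]
      have h5 : a/2 * (ρ/2)^N ≤ a/2 * r^N := by
        exact mul_le_mul_of_nonneg_left h1 (by positivity)
      exact mul_le_mul_of_nonneg_left h5 hlamp.le
    have hfac : cstar ≤ ENNReal.ofReal (lam^p) *
        (ENNReal.ofReal (a/2*r^N) / (ENNReal.ofReal β)^j) := by
      rw [hcstar, ← mul_div_assoc, ← ENNReal.ofReal_mul (by positivity : (0:ℝ) ≤ lam^p)]
      exact ENNReal.div_le_div_right (ENNReal.ofReal_le_ofReal hKr) _
    calc cstar * μ (T k)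
        ≤ (ENNReal.ofReal (lam^p) * (ENNReal.ofReal (a/2*r^N) / (ENNReal.ofReal β)^j))
            * μ (T k) := mul_le_mul_left hfac _
      _ = ENNReal.ofReal (lam^p) *
            ((ENNReal.ofReal (a/2*r^N) / (ENNReal.ofReal β)^j) * μ (T k)) := by
          rw [mul_assoc]
      _ ≤ ENNReal.ofReal (lam^p) * (μ.prod μ) (BVYset u N p lam) :=
          mul_le_mul_right hprod _
  -- conclude
  have hlim := le_liminf_of_le (by isBoundedDefault) hev
  exact lt_of_lt_of_le (ENNReal.mul_pos hcstar0 hk.ne') hlim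

theorem liminf_pos_and_limsup_lt_top
    {X : Type*} [MetricSpace X] [CompleteSpace X] [TopologicalSpace.SeparableSpace X]
    [MeasurableSpace X] [BorelSpace X]
    (μ : Measure X) [SigmaFinite μ] [IsLocallyFiniteMeasure μ] [μ.InnerRegular]
    [μ.IsOpenPosMeasure]
    (p β : ℝ) (hp : 1 ≤ p) (hβ : 1 < β)
    (hdbl : ∀ (x : X) (r : ℝ), 0 < r →
      μ (Metric.ball x (2 * r)) ≤ ENNReal.ofReal β * μ (Metric.ball x r))
    (N : ℝ) (hN : N = Real.log β / Real.log 2)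
    (a b : ℝ) (ha : 0 < a) (hab : a < b)
    (hθlow : ∀ x : X,
      ENNReal.ofReal a ≤
        Filter.liminf (fun r : ℝ => μ (Metric.ball x r) / ENNReal.ofReal (r ^ N)) (𝓝[>] (0 : ℝ)))
    (hθup : ∀ x : X,
      Filter.limsup (fun r : ℝ => μ (Metric.ball x r) / ENNReal.ofReal (r ^ N)) (𝓝[>] (0 : ℝ))
        ≤ ENNReal.ofReal b)
    (u : X → ℝ) (hu : ∃ L : NNReal, LipschitzWith L u)
    (hsupp : Bornology.IsBounded (Function.support u))
    (hpos : 0 < μ {x : X | 0 < lipLower u x}) :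
    0 < Filter.liminf
        (fun lam : ℝ => ENNReal.ofReal (lam ^ p) * (μ.prod μ) (BVYset u N p lam))
        Filter.atTop
    ∧ Filter.limsup
        (fun lam : ℝ => ENNReal.ofReal (lam ^ p) * (μ.prod μ) (BVYset u N p lam))
        Filter.atTop < ⊤ := by
  haveI : SecondCountableTopology X := UniformSpace.secondCountable_of_separable X
  obtain ⟨L', hL'⟩ := hu
  have hL : LipschitzWith (max L' 1) u := hL'.weaken (le_max_left _ _)
  have hL1 : 1 ≤ ((max L' 1 : NNReal) : ℝ) := by
    have := le_max_right L' 1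
    exact_mod_cast this
  have h2N : (2:ℝ) ^ N = β := two_rpow_eq hβ hN
  have hN0 : 0 < N := N_pos hβ hN
  constructor
  · exact liminf_part μ hβ hp hN0 ha hdbl hθlow u hL hL1 hpos
  · exact limsup_part μ hβ hp h2N hN0 hdbl hθup u hL hL1 hsupp
end
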